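/- arXiv:1708.09130 — 11 statements merged into one kernel-verified Lean document; each statement's English description precedes it below -/
import Mathlib

section
/- For the cycle graph C_n with n ≥ 5, the general position number gp(C_n) equals 3. -/
open SimpleGraph

/-- `S` is a general position set of `G`: no three distinct vertices of `S`
lie on a common geodesic. -/
def IsGPSet {V : Type*} (G : SimpleGraph V) (S : Set V) : Prop :=
  ∀ x ∈ S, ∀ y ∈ S, ∀ z ∈ S, x ≠ y → y ≠ z → x ≠ z →
    G.dist x z ≠ G.dist x y + G.dist y z

/-- The general position number of `G`. -/
noncomputable def gpNumber {V : Type*} (G : SimpleGraph V) : ℕ :=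
  sSup {n | ∃ S : Set V, IsGPSet G S ∧ S.Finite ∧ S.ncard = n}

namespace GPAux

lemma fin_sub_val {n : ℕ} (a b : Fin n) :
    (a - b).val = if b.val ≤ a.val then a.val - b.val else a.val + n - b.val := by
  have ha := a.isLt
  have hb := b.isLt
  rw [Fin.sub_def]
  simp only
  split
  · have h : n - b.val + a.val = (a.val - b.val) + n := by omega
    rw [h, Nat.add_mod_right, Nat.mod_eq_of_lt (by omega)]
  · have h : n - b.val + a.val = a.val + n - b.val := by omega
    rw [h, Nat.mod_eq_of_lt (by omega)]

lemma pair_sum {n : ℕ} (x y : Fin n) :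
    (x - y).val + (y - x).val = 0 ∨ (x - y).val + (y - x).val = n := by
  have hx := x.isLt
  have hy := y.isLt
  rw [fin_sub_val, fin_sub_val]
  split_ifs <;> omega

lemma add_val_cases {n : ℕ} (a b : Fin n) :
    (a + b).val = a.val + b.val ∨ (a + b).val + n = a.val + b.val := by
  have ha := a.isLt
  have hb := b.isLt
  have hv : (a + b).val = (a.val + b.val) % n := by rw [Fin.add_def]
  rcases Nat.lt_or_ge (a.val + b.val) n with h | h
  · left; rw [hv]; exact Nat.mod_eq_of_lt h
  · right
    have h2 : a.val + b.val = (a.val + b.val - n) + n := by omega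
    have h3 : (a.val + b.val) % n = a.val + b.val - n := by
      conv_lhs => rw [h2]
      rw [Nat.add_mod_right, Nat.mod_eq_of_lt (by omega)]
    omega

lemma tri {n : ℕ} (x y z : Fin n) :
    min (x - z).val (z - x).val ≤
      min (x - y).val (y - x).val + min (y - z).val (z - y).val := by
  haveI : NeZero n := ⟨x.pos.ne'⟩
  have hxy := pair_sum x y
  have hyz := pair_sum y z
  have hxz := pair_sum x z
  have hsum : (x - y) + (y - z) = x - z := sub_add_sub_cancel x y z
  have hadd := add_val_cases (x - y) (y - z)
  rw [hsum] at hadd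
  have h1 := (x - y).isLt
  have h2 := (y - x).isLt
  have h3 := (y - z).isLt
  have h4 := (z - y).isLt
  have h5 := (x - z).isLt
  have h6 := (z - x).isLt
  omega

lemma adj_min {n : ℕ} {u v : Fin n} (h : (cycleGraph n).Adj u v) :
    min (v - u).val (u - v).val ≤ 1 := by
  rw [cycleGraph_adj'] at h
  omega

lemma le_walk_length {n : ℕ} (u v : Fin n) (p : (cycleGraph n).Walk u v) :
    min (v - u).val (u - v).val ≤ p.length := by
  induction p with
  | nil => simp [fin_sub_val]
  | @cons u b v h q ih =>
    have htri := tri v b u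
    have hadj := adj_min h
    rw [SimpleGraph.Walk.length_cons]
    omega

lemma cg_connected {n : ℕ} (hn : 1 ≤ n) : (cycleGraph n).Connected := by
  cases n with
  | zero => omega
  | succ m => exact cycleGraph_connected

open Fin.NatCast Fin.CommRing in
lemma dist_add_le {n : ℕ} [NeZero n] (hn : 2 ≤ n) (u : Fin n) (k : ℕ) :
    (cycleGraph n).dist u (u + (k : Fin n)) ≤ k := by
  induction k with
  | zero => simp
  | succ k ih =>
    have hadj : (cycleGraph n).Adj (u + (k : Fin n)) (u + ((k + 1 : ℕ) : Fin n)) := by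
      rw [cycleGraph_adj']
      right
      have h1 : (u + ((k + 1 : ℕ) : Fin n)) - (u + (k : Fin n)) = 1 := by
        push_cast
        ring
      rw [h1, Fin.val_one' n, Nat.mod_eq_of_lt (by omega)]
    calc (cycleGraph n).dist u (u + ((k + 1 : ℕ) : Fin n))
        ≤ (cycleGraph n).dist u (u + (k : Fin n)) +
          (cycleGraph n).dist (u + (k : Fin n)) (u + ((k + 1 : ℕ) : Fin n)) :=
          Connected.dist_triangle (cg_connected (by omega))
      _ ≤ k + 1 := by
          have := (dist_eq_one_iff_adj (G := cycleGraph n)).mpr hadj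
          omega

open Fin.NatCast in
lemma dist_eq {n : ℕ} (hn : 2 ≤ n) (u v : Fin n) :
    (cycleGraph n).dist u v = min (v - u).val (u - v).val := by
  haveI : NeZero n := ⟨by omega⟩
  apply le_antisymm
  · apply le_min
    · have h := dist_add_le hn u (v - u).val
      rwa [Fin.cast_val_eq_self, add_sub_cancel] at h
    · have h := dist_add_le hn v (u - v).val
      rw [Fin.cast_val_eq_self, add_sub_cancel] at h
      rwa [SimpleGraph.dist_comm] at h
  · obtain ⟨p, hp⟩ := ((cg_connected (by omega)) u v).exists_walk_length_eq_dist
    rw [← hp]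
    exact le_walk_length u v p

lemma dist_val {n : ℕ} (hn : 2 ≤ n) (u v : Fin n) (huv : u.val ≤ v.val) :
    (cycleGraph n).dist u v = min (v.val - u.val) (n - (v.val - u.val)) := by
  have hu := u.isLt
  have hv := v.isLt
  rw [dist_eq hn, fin_sub_val, fin_sub_val]
  split_ifs <;> omega

lemma isGPSet_triple {V : Type*} (G : SimpleGraph V) (a b c : V)
    (h1 : G.dist a c ≠ G.dist a b + G.dist b c)
    (h2 : G.dist b c ≠ G.dist b a + G.dist a c)
    (h3 : G.dist a b ≠ G.dist a c + G.dist c b) :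
    IsGPSet G {a, b, c} := by
  have e1 : G.dist a b = G.dist b a := SimpleGraph.dist_comm
  have e2 : G.dist a c = G.dist c a := SimpleGraph.dist_comm
  have e3 : G.dist b c = G.dist c b := SimpleGraph.dist_comm
  intro x hx y hy z hz hxy hyz hxz
  simp only [Set.mem_insert_iff, Set.mem_singleton_iff] at hx hy hz
  rcases hx with rfl | rfl | rfl <;> rcases hy with rfl | rfl | rfl <;>
    rcases hz with rfl | rfl | rfl <;>
    first
      | exact absurd rfl hxy
      | exact absurd rfl hyz
      | exact absurd rfl hxz
      | omega

lemma list_four {α : Type*} (l : List α) (h : l.length = 4) :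
    ∃ a b c d, l = [a, b, c, d] := by
  match l, h with
  | [a, b, c, d], _ => exact ⟨a, b, c, d, rfl⟩

lemma not_gp_four {n : ℕ} (hn : 5 ≤ n) {S : Set (Fin n)} (a b c d : Fin n)
    (ha : a ∈ S) (hb : b ∈ S) (hc : c ∈ S) (hd : d ∈ S)
    (hab : a.val < b.val) (hbc : b.val < c.val) (hcd : c.val < d.val) :
    ¬ IsGPSet (cycleGraph n) S := by
  intro hGP
  have hn2 : 2 ≤ n := by omega
  have hdlt := d.isLt
  rcases le_or_gt (2 * (c.val - a.val)) n with h | h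
  · refine hGP a ha b hb c hc ?_ ?_ ?_ ?_
    · exact fun e => absurd (congrArg Fin.val e) (by omega)
    · exact fun e => absurd (congrArg Fin.val e) (by omega)
    · exact fun e => absurd (congrArg Fin.val e) (by omega)
    · rw [dist_val hn2 a c (by omega), dist_val hn2 a b (by omega),
        dist_val hn2 b c (by omega)]
      omega
  · refine hGP c hc d hd a ha ?_ ?_ ?_ ?_
    · exact fun e => absurd (congrArg Fin.val e) (by omega)
    · exact fun e => absurd (congrArg Fin.val e) (by omega)
    · exact fun e => absurd (congrArg Fin.val e) (by omega)
    · rw [SimpleGraph.dist_comm (u := c) (v := a),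
        SimpleGraph.dist_comm (u := d) (v := a),
        dist_val hn2 a c (by omega), dist_val hn2 c d (by omega),
        dist_val hn2 a d (by omega)]
      omega

end GPAux

open GPAux in
theorem gp_cycleGraph (n : ℕ) (hn : 5 ≤ n) : gpNumber (cycleGraph n) = 3 := by
  have hn2 : 2 ≤ n := by omega
  have hk1 : 1 ≤ (n - 1) / 2 := by omega
  have hkn : 2 * ((n - 1) / 2) < n := by omega
  have hklt : (n - 1) / 2 < n := by omega
  have hnklt : n - (n - 1) / 2 < n := by omega
  have h0 : (0 : ℕ) < n := by omega
  set a : Fin n := ⟨0, h0⟩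
  set b : Fin n := ⟨(n - 1) / 2, hklt⟩
  set c : Fin n := ⟨n - (n - 1) / 2, hnklt⟩
  have hbound : ∀ m ∈ {m | ∃ S : Set (Fin n), IsGPSet (cycleGraph n) S ∧ S.Finite ∧
      S.ncard = m}, m ≤ 3 := by
    rintro m ⟨S, hS, hSfin, rfl⟩
    by_contra hm
    push_neg at hm
    obtain ⟨t, htS, ht4⟩ := Set.exists_subset_card_eq (s := S) (n := 4) (by omega)
    have htfin : t.Finite := hSfin.subset htS
    have hcard : htfin.toFinset.card = 4 := by
      rw [← Set.ncard_eq_toFinset_card t htfin]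
      exact ht4
    obtain ⟨w, x, y, z, hl⟩ := list_four (htfin.toFinset.sort (· ≤ ·))
      (by rw [Finset.length_sort, hcard])
    have hsorted := (Finset.sortedLT_sort htfin.toFinset).pairwise
    rw [hl] at hsorted
    simp only [List.pairwise_cons, List.mem_cons, List.mem_singleton,
      List.not_mem_nil, List.Pairwise.nil, and_true] at hsorted
    have hmem : ∀ v : Fin n, v ∈ [w, x, y, z] → v ∈ S := by
      intro v hv
      rw [← hl, Finset.mem_sort] at hv
      exact htS (htfin.mem_toFinset.mp hv)
    refine not_gp_four hn w x y z
      (hmem w (by simp)) (hmem x (by simp)) (hmem y (by simp)) (hmem z (by simp))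
      ?_ ?_ ?_ hS
    · exact hsorted.1 x (by simp)
    · exact hsorted.2.1 y (by simp)
    · exact hsorted.2.2.1 z (by simp)
  have h3 : 3 ∈ {m | ∃ S : Set (Fin n), IsGPSet (cycleGraph n) S ∧ S.Finite ∧
      S.ncard = m} := by
    refine ⟨{a, b, c}, ?_, Set.toFinite _, ?_⟩
    · apply isGPSet_triple
      · rw [dist_val hn2 a c (by simp only [a, b, c, Fin.val_mk]; omega), dist_val hn2 a b (by simp only [a, b, c, Fin.val_mk]; omega),
          dist_val hn2 b c (by simp only [a, b, c, Fin.val_mk]; omega)]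
        simp only [a, b, c, Fin.val_mk]
        omega
      · rw [SimpleGraph.dist_comm (u := b) (v := a),
          dist_val hn2 b c (by simp only [a, b, c, Fin.val_mk]; omega), dist_val hn2 a b (by simp only [a, b, c, Fin.val_mk]; omega),
          dist_val hn2 a c (by simp only [a, b, c, Fin.val_mk]; omega)]
        simp only [a, b, c, Fin.val_mk]
        omega
      · rw [SimpleGraph.dist_comm (u := c) (v := b),
          dist_val hn2 a b (by simp only [a, b, c, Fin.val_mk]; omega), dist_val hn2 a c (by simp only [a, b, c, Fin.val_mk]; omega),
          dist_val hn2 b c (by simp only [a, b, c, Fin.val_mk]; omega)]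
        simp only [a, b, c, Fin.val_mk]
        omega
    · rw [Set.ncard_eq_three]
      refine ⟨a, b, c, ?_, ?_, ?_, rfl⟩
      · exact fun e => absurd (congrArg Fin.val e) (by simp only [a, b, Fin.val_mk]; omega)
      · exact fun e => absurd (congrArg Fin.val e) (by simp only [a, c, Fin.val_mk]; omega)
      · exact fun e => absurd (congrArg Fin.val e) (by simp only [b, c, Fin.val_mk]; omega)
  unfold gpNumber
  exact le_antisymm (csSup_le ⟨3, h3⟩ hbound) (le_csSup ⟨3, hbound⟩ h3)
end

section
/- If k ≥ 2 and ℓ ≥ 3, then the general position number of the theta graph Θ(k,ℓ) equals k + 1. -/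
open SimpleGraph

/-- The theta graph `Θ(k, ℓ)`: two vertices `A = Sum.inl 0` and `B = Sum.inl 1`
joined by `k` internally disjoint paths, each of length `ℓ`.
The internal vertices are `Sum.inr (i, j)`, the `j`-th internal vertex
(out of `ℓ - 1`) on the `i`-th path. -/
def thetaGraph (k ℓ : ℕ) : SimpleGraph (Fin 2 ⊕ (Fin k × Fin (ℓ - 1))) :=
  SimpleGraph.fromRel (fun a b =>
    match a, b with
    | Sum.inl a, Sum.inr (_, j) => a = 0 ∧ (j : ℕ) = 0
    | Sum.inr (i, j), Sum.inr (i', j') => i = i' ∧ (j' : ℕ) = (j : ℕ) + 1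
    | Sum.inr (_, j), Sum.inl b => b = 1 ∧ (j : ℕ) = ℓ - 2
    | _, _ => False)

section Aux


variable {k l : ℕ}

lemma theta_adj_inl_inl {a b : Fin 2} : ¬ (thetaGraph k l).Adj (Sum.inl a) (Sum.inl b) := by
  simp [thetaGraph, fromRel_adj]

lemma theta_adj_inl_inr {a : Fin 2} {i : Fin k} {j : Fin (l-1)} :
    (thetaGraph k l).Adj (Sum.inl a) (Sum.inr (i, j)) ↔
      (a = 0 ∧ (j:ℕ) = 0) ∨ (a = 1 ∧ (j:ℕ) = l - 2) := by
  simp [thetaGraph, fromRel_adj]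

lemma theta_adj_inr_inr {i i' : Fin k} {j j' : Fin (l-1)} :
    (thetaGraph k l).Adj (Sum.inr (i, j)) (Sum.inr (i', j')) ↔
      i = i' ∧ ((j':ℕ) = j + 1 ∨ (j:ℕ) = j' + 1) := by
  constructor
  · intro h
    rw [thetaGraph, fromRel_adj] at h
    obtain ⟨hne, h | h⟩ := h
    · exact ⟨h.1, Or.inl h.2⟩
    · exact ⟨h.1.symm, Or.inr h.2⟩
  · rintro ⟨rfl, h | h⟩
    · rw [thetaGraph, fromRel_adj]
      refine ⟨?_, Or.inl ⟨rfl, h⟩⟩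
      simp only [ne_eq, Sum.inr.injEq, Prod.mk.injEq, true_and]
      intro hj; rw [hj] at h; omega
    · rw [thetaGraph, fromRel_adj]
      refine ⟨?_, Or.inr ⟨rfl, h⟩⟩
      simp only [ne_eq, Sum.inr.injEq, Prod.mk.injEq, true_and]
      intro hj; rw [hj] at h; omega

/-- potential: distance from A -/
def pot (l : ℕ) : (Fin 2 ⊕ (Fin k × Fin (l-1))) → ℕ
  | Sum.inl a => if a = 0 then 0 else l
  | Sum.inr (_, j) => (j : ℕ) + 1

lemma pot_lip (hl : 3 ≤ l) {u v : Fin 2 ⊕ (Fin k × Fin (l-1))}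
    (h : (thetaGraph k l).Adj u v) : pot l u ≤ pot l v + 1 ∧ pot l v ≤ pot l u + 1 := by
  match u, v with
  | Sum.inl a, Sum.inl b => exact absurd h theta_adj_inl_inl
  | Sum.inl a, Sum.inr (i, j) =>
    rw [theta_adj_inl_inr] at h
    have := j.isLt
    rcases h with ⟨rfl, hj⟩ | ⟨rfl, hj⟩ <;> simp [pot, hj] <;> omega
  | Sum.inr (i, j), Sum.inl a =>
    rw [adj_comm, theta_adj_inl_inr] at h
    have := j.isLt
    rcases h with ⟨rfl, hj⟩ | ⟨rfl, hj⟩ <;> simp [pot, hj] <;> omega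
  | Sum.inr (i, j), Sum.inr (i', j') =>
    rw [theta_adj_inr_inr] at h
    obtain ⟨rfl, h | h⟩ := h <;> simp [pot] <;> omega

lemma pot_walk (hl : 3 ≤ l) {u v : Fin 2 ⊕ (Fin k × Fin (l-1))}
    (W : (thetaGraph k l).Walk u v) :
    pot l u ≤ pot l v + W.length ∧ pot l v ≤ pot l u + W.length := by
  induction W with
  | nil => simp
  | cons h W ih =>
    have := pot_lip hl h
    simp only [SimpleGraph.Walk.length_cons]
    omega

lemma exists_walk_seg (hl : 3 ≤ l) (i : Fin k) (d : ℕ) : ∀ (j : ℕ) (h : j + d < l - 1),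
    ∃ W : (thetaGraph k l).Walk (Sum.inr (i, ⟨j, by omega⟩)) (Sum.inr (i, ⟨j + d, h⟩)),
      W.length = d := by
  induction d with
  | zero =>
    intro j h
    exact ⟨Walk.nil.copy rfl (by simp), by simp⟩
  | succ d ih =>
    intro j h
    obtain ⟨W, hW⟩ := ih (j+1) (by omega)
    have hadj : (thetaGraph k l).Adj (Sum.inr (i, ⟨j, by omega⟩)) (Sum.inr (i, ⟨j+1, by omega⟩)) := by
      rw [theta_adj_inr_inr]; exact ⟨rfl, Or.inl rfl⟩
    refine ⟨(Walk.cons hadj W).copy rfl (by simp; omega), by simp [hW]⟩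

lemma exists_walk_A (hl : 3 ≤ l) (i : Fin k) (j : Fin (l-1)) :
    ∃ W : (thetaGraph k l).Walk (Sum.inl 0) (Sum.inr (i, j)), W.length = (j:ℕ) + 1 := by
  have hj := j.isLt
  obtain ⟨W, hW⟩ := exists_walk_seg (k := k) hl i (j:ℕ) 0 (by omega)
  have hadj : (thetaGraph k l).Adj (Sum.inl 0) (Sum.inr (i, (⟨0, by omega⟩ : Fin (l-1)))) := by
    rw [theta_adj_inl_inr]; exact Or.inl ⟨rfl, rfl⟩
  refine ⟨(Walk.cons hadj W).copy rfl (by simp), by simp [hW]⟩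

lemma exists_walk_B (hl : 3 ≤ l) (i : Fin k) (j : Fin (l-1)) :
    ∃ W : (thetaGraph k l).Walk (Sum.inr (i, j)) (Sum.inl 1), W.length + (j:ℕ) + 1 = l := by
  have hj := j.isLt
  obtain ⟨W, hW⟩ := exists_walk_seg (k := k) hl i (l - 2 - (j:ℕ)) (j:ℕ) (by omega)
  have hadj : (thetaGraph k l).Adj (Sum.inr (i, (⟨(j:ℕ) + (l - 2 - (j:ℕ)), by omega⟩ : Fin (l-1))))
      (Sum.inl 1) := by
    rw [adj_comm, theta_adj_inl_inr]; exact Or.inr ⟨rfl, by simp; omega⟩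
  refine ⟨(W.concat hadj).copy (by simp) rfl, by simp [Walk.length_concat, hW]; omega⟩

lemma walk_stays_aux (hl : 3 ≤ l) {u v : Fin 2 ⊕ (Fin k × Fin (l-1))}
    (W : (thetaGraph k l).Walk u v) :
    ∀ (i : Fin k) (j : Fin (l-1)), u = Sum.inr (i, j) →
    Sum.inl 0 ∉ W.support → Sum.inl 1 ∉ W.support →
    ∃ j' : Fin (l-1), v = Sum.inr (i, j') := by
  induction W with
  | nil => exact fun i j h _ _ => ⟨j, h⟩
  | @cons u w v hadj W ih =>
    rintro i j rfl hA hB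
    match w, hadj with
    | Sum.inl a, hadj =>
      exfalso
      have hmem : Sum.inl a ∈ (Walk.cons hadj W).support := by
        simp [Walk.support_cons, W.start_mem_support]
      fin_cases a
      · exact hA hmem
      · exact hB hmem
    | Sum.inr (i2, j2), hadj =>
      obtain ⟨rfl, -⟩ := theta_adj_inr_inr.mp hadj
      simp only [Walk.support_cons, List.mem_cons] at hA hB
      exact ih i j2 rfl (fun h => hA (Or.inr h)) (fun h => hB (Or.inr h))

lemma walk_stays (hl : 3 ≤ l) {i : Fin k} {j : Fin (l-1)} {v : Fin 2 ⊕ (Fin k × Fin (l-1))}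
    (W : (thetaGraph k l).Walk (Sum.inr (i, j)) v)
    (hA : Sum.inl 0 ∉ W.support) (hB : Sum.inl 1 ∉ W.support) :
    ∃ j' : Fin (l-1), v = Sum.inr (i, j') :=
  walk_stays_aux hl W i j rfl hA hB

lemma dist_A (hl : 3 ≤ l) (i : Fin k) (j : Fin (l-1)) :
    (thetaGraph k l).dist (Sum.inl 0) (Sum.inr (i, j)) = (j:ℕ) + 1 := by
  obtain ⟨U, hU⟩ := exists_walk_A (k := k) hl i j
  obtain ⟨W, hW⟩ := U.reachable.exists_walk_length_eq_dist
  have h1 := pot_walk hl W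
  have h2 := dist_le U
  simp only [pot] at h1
  norm_num at h1
  omega

lemma dist_B (hl : 3 ≤ l) (i : Fin k) (j : Fin (l-1)) :
    (thetaGraph k l).dist (Sum.inr (i, j)) (Sum.inl 1) + (j:ℕ) + 1 = l := by
  obtain ⟨U, hU⟩ := exists_walk_B (k := k) hl i j
  obtain ⟨W, hW⟩ := U.reachable.exists_walk_length_eq_dist
  have h1 := pot_walk hl W
  have h2 := dist_le U
  simp only [pot] at h1
  norm_num at h1
  omega

lemma dist_AB (hl : 3 ≤ l) (hk : 2 ≤ k) :
    (thetaGraph k l).dist (Sum.inl 0) (Sum.inl 1) = l := by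
  obtain ⟨U1, hU1⟩ := exists_walk_A (k := k) hl ⟨0, by omega⟩ ⟨0, by omega⟩
  obtain ⟨U2, hU2⟩ := exists_walk_B (k := k) hl ⟨0, by omega⟩ ⟨0, by omega⟩
  have h2 := dist_le (U1.append U2)
  rw [Walk.length_append] at h2
  obtain ⟨W, hW⟩ := (U1.append U2).reachable.exists_walk_length_eq_dist
  have h1 := pot_walk hl W
  simp only [pot] at h1
  norm_num at h1
  simp only [hU1] at h2
  omega

lemma dist_same (hl : 3 ≤ l) (i : Fin k) (j j' : Fin (l-1)) (hjj : (j:ℕ) ≤ (j':ℕ)) :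
    (thetaGraph k l).dist (Sum.inr (i, j)) (Sum.inr (i, j')) + (j:ℕ) = (j':ℕ) := by
  have hj' := j'.isLt
  obtain ⟨U, hU⟩ := exists_walk_seg (k := k) hl i ((j':ℕ) - (j:ℕ)) (j:ℕ) (by omega)
  have e1 : (Sum.inr (i, (⟨(j:ℕ), by omega⟩ : Fin (l-1))) : Fin 2 ⊕ (Fin k × Fin (l-1)))
      = Sum.inr (i, j) := by rw [Fin.eta]
  have e2 : (Sum.inr (i, (⟨(j:ℕ) + ((j':ℕ) - (j:ℕ)), by omega⟩ : Fin (l-1))) :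
      Fin 2 ⊕ (Fin k × Fin (l-1))) = Sum.inr (i, j') := by
    simp only [Sum.inr.injEq, Prod.mk.injEq, true_and, Fin.ext_iff]
    omega
  have h2 := dist_le (U.copy e1 e2)
  rw [Walk.length_copy] at h2
  obtain ⟨W, hW⟩ := (U.copy e1 e2).reachable.exists_walk_length_eq_dist
  have h1 := pot_walk hl W
  simp only [pot] at h1
  omega

lemma dist_cross_lower (hl : 3 ≤ l) {i i' : Fin k} (j j' : Fin (l-1)) (hii : i ≠ i') :
    (j:ℕ) + (j':ℕ) + 2 ≤ (thetaGraph k l).dist (Sum.inr (i, j)) (Sum.inr (i', j')) ∨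
    2*l ≤ (thetaGraph k l).dist (Sum.inr (i, j)) (Sum.inr (i', j')) + (j:ℕ) + (j':ℕ) + 2 := by
  classical
  obtain ⟨U1, hU1⟩ := exists_walk_A (k := k) hl i j
  obtain ⟨U2, hU2⟩ := exists_walk_A (k := k) hl i' j'
  obtain ⟨W, hW⟩ := (U1.reverse.append U2).reachable.exists_walk_length_eq_dist
  rcases Classical.em ((Sum.inl 0 : Fin 2 ⊕ (Fin k × Fin (l-1))) ∈ W.support) with hA | hA
  · left
    have hsplit := congrArg Walk.length (W.take_spec hA)
    rw [Walk.length_append] at hsplit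
    have p1 := pot_walk hl (W.takeUntil _ hA)
    have p2 := pot_walk hl (W.dropUntil _ hA)
    simp only [pot] at p1 p2
    norm_num at p1 p2
    omega
  · rcases Classical.em ((Sum.inl 1 : Fin 2 ⊕ (Fin k × Fin (l-1))) ∈ W.support) with hB | hB
    · right
      have hsplit := congrArg Walk.length (W.take_spec hB)
      rw [Walk.length_append] at hsplit
      have p1 := pot_walk hl (W.takeUntil _ hB)
      have p2 := pot_walk hl (W.dropUntil _ hB)
      simp only [pot] at p1 p2
      norm_num at p1 p2
      omega
    · exfalso
      obtain ⟨j'', hj''⟩ := walk_stays hl W hA hB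
      rw [Sum.inr.injEq, Prod.mk.injEq] at hj''
      exact hii hj''.1.symm

lemma dist_cross_A (hl : 3 ≤ l) {i i' : Fin k} (j j' : Fin (l-1)) (hii : i ≠ i')
    (hle : (j:ℕ) + (j':ℕ) + 2 ≤ l) :
    (thetaGraph k l).dist (Sum.inr (i, j)) (Sum.inr (i', j')) = (j:ℕ) + (j':ℕ) + 2 := by
  obtain ⟨U1, hU1⟩ := exists_walk_A (k := k) hl i j
  obtain ⟨U2, hU2⟩ := exists_walk_A (k := k) hl i' j'
  have h2 := dist_le (U1.reverse.append U2)
  rw [Walk.length_append, Walk.length_reverse, hU1, hU2] at h2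
  have := dist_cross_lower hl j j' hii
  omega

lemma dist_cross_B (hl : 3 ≤ l) {i i' : Fin k} (j j' : Fin (l-1)) (hii : i ≠ i')
    (hge : l ≤ (j:ℕ) + (j':ℕ) + 2) :
    (thetaGraph k l).dist (Sum.inr (i, j)) (Sum.inr (i', j')) + (j:ℕ) + (j':ℕ) + 2 = 2*l := by
  obtain ⟨U1, hU1⟩ := exists_walk_B (k := k) hl i j
  obtain ⟨U2, hU2⟩ := exists_walk_B (k := k) hl i' j'
  have h2 := dist_le (U1.append U2.reverse)
  rw [Walk.length_append, Walk.length_reverse] at h2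
  have := dist_cross_lower hl j j' hii
  omega


variable {S : Set (Fin 2 ⊕ (Fin k × Fin (l-1)))}

lemma contraC1 (hk : 2 ≤ k) (hl : 3 ≤ l) (hS : IsGPSet (thetaGraph k l) S)
    (hA : Sum.inl 0 ∈ S) (hB : Sum.inl 1 ∈ S) {i : Fin k} {j : Fin (l-1)}
    (hj : Sum.inr (i, j) ∈ S) : False := by
  have h1 := dist_AB (k := k) hl hk
  have h2 := dist_A (k := k) hl i j
  have h3 := dist_B (k := k) hl i j
  exact hS _ hA _ hj _ hB (by simp) (by simp) (by simp) (by omega)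

lemma contraC2 (hl : 3 ≤ l) (hS : IsGPSet (thetaGraph k l) S)
    (hA : Sum.inl 0 ∈ S) {i : Fin k} {a b : Fin (l-1)}
    (ha : Sum.inr (i, a) ∈ S) (hb : Sum.inr (i, b) ∈ S) (hab : (a:ℕ) < (b:ℕ)) : False := by
  have h1 := dist_A (k := k) hl i a
  have h2 := dist_A (k := k) hl i b
  have h3 := dist_same (k := k) hl i a b (le_of_lt hab)
  refine hS _ hA _ ha _ hb (by simp) ?_ (by simp) (by omega)
  simp only [ne_eq, Sum.inr.injEq, Prod.mk.injEq, true_and]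
  intro h; rw [h] at hab; omega

lemma contraC3 (hl : 3 ≤ l) (hS : IsGPSet (thetaGraph k l) S)
    (hB : Sum.inl 1 ∈ S) {i : Fin k} {a b : Fin (l-1)}
    (ha : Sum.inr (i, a) ∈ S) (hb : Sum.inr (i, b) ∈ S) (hab : (a:ℕ) < (b:ℕ)) : False := by
  have h1 := dist_B (k := k) hl i a
  have h2 := dist_B (k := k) hl i b
  have h3 := dist_same (k := k) hl i a b (le_of_lt hab)
  have e1 : (thetaGraph k l).dist (Sum.inl 1) (Sum.inr (i, a))
      = (thetaGraph k l).dist (Sum.inr (i, a)) (Sum.inl 1) := dist_comm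
  have e2 : (thetaGraph k l).dist (Sum.inl 1) (Sum.inr (i, b))
      = (thetaGraph k l).dist (Sum.inr (i, b)) (Sum.inl 1) := dist_comm
  have e3 : (thetaGraph k l).dist (Sum.inr (i, b)) (Sum.inr (i, a))
      = (thetaGraph k l).dist (Sum.inr (i, a)) (Sum.inr (i, b)) := dist_comm
  refine hS _ hB _ hb _ ha (by simp) ?_ (by simp) (by rw [e1, e2, e3]; omega)
  simp only [ne_eq, Sum.inr.injEq, Prod.mk.injEq, true_and]
  intro h; rw [h] at hab; omega

lemma contraC4 (hl : 3 ≤ l) (hS : IsGPSet (thetaGraph k l) S)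
    {i : Fin k} {a b c : Fin (l-1)}
    (ha : Sum.inr (i, a) ∈ S) (hb : Sum.inr (i, b) ∈ S) (hc : Sum.inr (i, c) ∈ S)
    (hab : (a:ℕ) < (b:ℕ)) (hbc : (b:ℕ) < (c:ℕ)) : False := by
  have h1 := dist_same (k := k) hl i a b (le_of_lt hab)
  have h2 := dist_same (k := k) hl i b c (le_of_lt hbc)
  have h3 := dist_same (k := k) hl i a c (by omega)
  have hne : ∀ (u v : Fin (l-1)), (u:ℕ) < (v:ℕ) →
      (Sum.inr (i, u) : Fin 2 ⊕ (Fin k × Fin (l-1))) ≠ Sum.inr (i, v) := by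
    intro u v huv
    simp only [ne_eq, Sum.inr.injEq, Prod.mk.injEq, true_and]
    intro h; rw [h] at huv; omega
  exact hS _ ha _ hb _ hc (hne a b hab) (hne b c hbc) (hne a c (by omega)) (by omega)

lemma contraP (hl : 3 ≤ l) (hS : IsGPSet (thetaGraph k l) S)
    {i i' : Fin k} (hii : i ≠ i') {a : Fin (l-1)} {c d : Fin (l-1)}
    (ha : Sum.inr (i, a) ∈ S) (hc : Sum.inr (i', c) ∈ S) (hd : Sum.inr (i', d) ∈ S)
    (hcd : (c:ℕ) < (d:ℕ)) (hyp : (a:ℕ) + (d:ℕ) + 2 ≤ l) : False := by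
  have h1 := dist_cross_A (k := k) hl a d hii hyp
  have h2 := dist_cross_A (k := k) hl a c hii (by omega)
  have h3 := dist_same (k := k) hl i' c d (le_of_lt hcd)
  refine hS _ ha _ hc _ hd (by simp [hii]) ?_ (by simp [hii]) (by omega)
  simp only [ne_eq, Sum.inr.injEq, Prod.mk.injEq, true_and]
  intro h; rw [h] at hcd; omega

lemma contraQ (hl : 3 ≤ l) (hS : IsGPSet (thetaGraph k l) S)
    {i i' : Fin k} (hii : i ≠ i') {a b : Fin (l-1)} {c : Fin (l-1)}
    (ha : Sum.inr (i, a) ∈ S) (hb : Sum.inr (i, b) ∈ S) (hc : Sum.inr (i', c) ∈ S)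
    (hab : (a:ℕ) < (b:ℕ)) (hyp : l ≤ (c:ℕ) + (a:ℕ) + 2) : False := by
  have h1 := dist_cross_B (k := k) hl c a hii.symm hyp
  have h2 := dist_cross_B (k := k) hl c b hii.symm (by omega)
  have h3 := dist_same (k := k) hl i a b (le_of_lt hab)
  have e3 : (thetaGraph k l).dist (Sum.inr (i, b)) (Sum.inr (i, a))
      = (thetaGraph k l).dist (Sum.inr (i, a)) (Sum.inr (i, b)) := dist_comm
  refine hS _ hc _ hb _ ha (by simp [hii.symm]) ?_ (by simp [hii.symm]) (by rw [e3]; omega)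
  simp only [ne_eq, Sum.inr.injEq, Prod.mk.injEq, true_and]
  intro h; rw [h] at hab; omega

lemma pairs_contra (hl : 3 ≤ l) (hS : IsGPSet (thetaGraph k l) S)
    {i i' : Fin k} (hii : i ≠ i') {a b c d : Fin (l-1)}
    (ha : Sum.inr (i, a) ∈ S) (hb : Sum.inr (i, b) ∈ S)
    (hc : Sum.inr (i', c) ∈ S) (hd : Sum.inr (i', d) ∈ S)
    (hab : (a:ℕ) < (b:ℕ)) (hcd : (c:ℕ) < (d:ℕ)) : False := by
  rcases le_or_gt l ((d:ℕ) + (a:ℕ) + 2) with hyp | hyp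
  · exact contraQ hl hS hii ha hb hd hab hyp
  · exact contraP hl hS hii ha hc hd hcd (by omega)

lemma three_distinct (hl : 3 ≤ l) (hS : IsGPSet (thetaGraph k l) S)
    {i : Fin k} {a b c : Fin (l-1)}
    (ha : Sum.inr (i, a) ∈ S) (hb : Sum.inr (i, b) ∈ S) (hc : Sum.inr (i, c) ∈ S)
    (hab : a ≠ b) (hbc : b ≠ c) (hac : a ≠ c) : False := by
  have vab : (a:ℕ) ≠ (b:ℕ) := fun h => hab (Fin.ext h)
  have vbc : (b:ℕ) ≠ (c:ℕ) := fun h => hbc (Fin.ext h)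
  have vac : (a:ℕ) ≠ (c:ℕ) := fun h => hac (Fin.ext h)
  rcases Nat.lt_or_ge (a:ℕ) (b:ℕ) with h1 | h1 <;>
    rcases Nat.lt_or_ge (b:ℕ) (c:ℕ) with h2 | h2 <;>
    rcases Nat.lt_or_ge (a:ℕ) (c:ℕ) with h3 | h3
  · exact contraC4 hl hS ha hb hc h1 h2
  · exact contraC4 hl hS ha hb hc h1 h2
  · exact contraC4 hl hS ha hc hb h3 (by omega)
  · exact contraC4 hl hS hc ha hb (by omega) h1
  · exact contraC4 hl hS hb ha hc (by omega) h3
  · exact contraC4 hl hS hb hc ha h2 (by omega)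
  · exact contraC4 hl hS ha hc hb h3 (by omega)
  · exact contraC4 hl hS hc hb ha (by omega) (by omega)

lemma pairs_contra' (hl : 3 ≤ l) (hS : IsGPSet (thetaGraph k l) S)
    {i i' : Fin k} (hii : i ≠ i') {a b c d : Fin (l-1)}
    (ha : Sum.inr (i, a) ∈ S) (hb : Sum.inr (i, b) ∈ S)
    (hc : Sum.inr (i', c) ∈ S) (hd : Sum.inr (i', d) ∈ S)
    (hab : a ≠ b) (hcd : c ≠ d) : False := by
  have vab : (a:ℕ) ≠ (b:ℕ) := fun h => hab (Fin.ext h)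
  have vcd : (c:ℕ) ≠ (d:ℕ) := fun h => hcd (Fin.ext h)
  rcases Nat.lt_or_ge (a:ℕ) (b:ℕ) with h1 | h1 <;>
    rcases Nat.lt_or_ge (c:ℕ) (d:ℕ) with h2 | h2
  · exact pairs_contra hl hS hii ha hb hc hd h1 h2
  · exact pairs_contra hl hS hii ha hb hd hc h1 (by omega)
  · exact pairs_contra hl hS hii hb ha hc hd (by omega) h2
  · exact pairs_contra hl hS hii hb ha hd hc (by omega) (by omega)

/-- Any vertex different from A and B is internal. -/
lemma vertex_cases (v : Fin 2 ⊕ (Fin k × Fin (l-1)))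
    (hA : v ≠ Sum.inl 0) (hB : v ≠ Sum.inl 1) :
    ∃ (i : Fin k) (j : Fin (l-1)), v = Sum.inr (i, j) := by
  match v with
  | Sum.inl a => exfalso; fin_cases a; exact hA rfl; exact hB rfl
  | Sum.inr (i, j) => exact ⟨i, j, rfl⟩

lemma gp_card_le (hk : 2 ≤ k) (hl : 3 ≤ l) (hS : IsGPSet (thetaGraph k l) S) :
    S.ncard ≤ k + 1 := by
  classical
  by_contra hcon
  push_neg at hcon
  have hfin : S.Finite := Set.toFinite S
  set T := hfin.toFinset with hT
  have hTS : ∀ v, v ∈ T ↔ v ∈ S := fun v => hfin.mem_toFinset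
  have hTcard : k + 2 ≤ T.card := by
    rw [← Set.ncard_eq_toFinset_card S hfin]; omega
  -- the path-projection
  set g : Fin 2 ⊕ (Fin k × Fin (l-1)) → Fin k :=
    (fun v => match v with
      | Sum.inl _ => ⟨0, by omega⟩
      | Sum.inr (i, _) => i) with hg
  by_cases hA : Sum.inl 0 ∈ S <;> by_cases hB : Sum.inl 1 ∈ S
  · -- both A and B in S
    have hsub : ¬ (T ⊆ {Sum.inl 0, Sum.inl 1}) := by
      intro h
      have := Finset.card_le_card h
      have : ({Sum.inl 0, Sum.inl 1} : Finset (Fin 2 ⊕ (Fin k × Fin (l-1)))).card ≤ 2 :=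
        Finset.card_le_two
      omega
    obtain ⟨v, hv, hv2⟩ := Finset.not_subset.mp hsub
    simp only [Finset.mem_insert, Finset.mem_singleton] at hv2
    push_neg at hv2
    obtain ⟨i, j, rfl⟩ := vertex_cases v hv2.1 hv2.2
    exact contraC1 hk hl hS hA hB ((hTS _).mp hv)
  · -- A in S, B not
    have hcard2 : (Finset.univ : Finset (Fin k)).card < (T.erase (Sum.inl 0)).card := by
      rw [Finset.card_erase_of_mem ((hTS _).mpr hA), Finset.card_univ, Fintype.card_fin]
      omega
    obtain ⟨x, hx, y, hy, hxy, hgxy⟩ :=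
      Finset.exists_ne_map_eq_of_card_lt_of_maps_to hcard2 (fun a _ => Finset.mem_univ (g a))
    have hxS := (hTS _).mp (Finset.mem_of_mem_erase hx)
    have hyS := (hTS _).mp (Finset.mem_of_mem_erase hy)
    obtain ⟨i, a, rfl⟩ := vertex_cases x (Finset.ne_of_mem_erase hx) (fun h => hB (h ▸ hxS))
    obtain ⟨i2, b, rfl⟩ := vertex_cases y (Finset.ne_of_mem_erase hy) (fun h => hB (h ▸ hyS))
    have hi : i2 = i := hgxy.symm
    subst hi
    have hab : a ≠ b := by
      intro h; exact hxy (by rw [h])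
    rcases Nat.lt_or_ge (a:ℕ) (b:ℕ) with h1 | h1
    · exact contraC2 hl hS hA hxS hyS h1
    · exact contraC2 hl hS hA hyS hxS
        (lt_of_le_of_ne h1 (fun h => hab (Fin.ext h.symm)))
  · -- B in S, A not
    have hcard2 : (Finset.univ : Finset (Fin k)).card < (T.erase (Sum.inl 1)).card := by
      rw [Finset.card_erase_of_mem ((hTS _).mpr hB), Finset.card_univ, Fintype.card_fin]
      omega
    obtain ⟨x, hx, y, hy, hxy, hgxy⟩ :=
      Finset.exists_ne_map_eq_of_card_lt_of_maps_to hcard2 (fun a _ => Finset.mem_univ (g a))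
    have hxS := (hTS _).mp (Finset.mem_of_mem_erase hx)
    have hyS := (hTS _).mp (Finset.mem_of_mem_erase hy)
    obtain ⟨i, a, rfl⟩ := vertex_cases x (fun h => hA (h ▸ hxS)) (Finset.ne_of_mem_erase hx)
    obtain ⟨i2, b, rfl⟩ := vertex_cases y (fun h => hA (h ▸ hyS)) (Finset.ne_of_mem_erase hy)
    have hi : i2 = i := hgxy.symm
    subst hi
    have hab : a ≠ b := by
      intro h; exact hxy (by rw [h])
    rcases Nat.lt_or_ge (a:ℕ) (b:ℕ) with h1 | h1
    · exact contraC3 hl hS hB hxS hyS h1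
    · exact contraC3 hl hS hB hyS hxS (lt_of_le_of_ne h1 (fun h => hab (Fin.ext h.symm)))
  · -- neither A nor B in S : all vertices internal
    have hint : ∀ v ∈ T, ∃ (i2 : Fin k) (j : Fin (l-1)), v = Sum.inr (i2, j) := by
      intro v hv
      exact vertex_cases v (fun h => hA (h ▸ (hTS _).mp hv)) (fun h => hB (h ▸ (hTS _).mp hv))
    have hcard2 : (Finset.univ : Finset (Fin k)).card < T.card := by
      rw [Finset.card_univ, Fintype.card_fin]; omega
    obtain ⟨x, hx, y, hy, hxy, hgxy⟩ :=
      Finset.exists_ne_map_eq_of_card_lt_of_maps_to hcard2 (fun a _ => Finset.mem_univ (g a))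
    obtain ⟨i, a, rfl⟩ := hint x hx
    obtain ⟨i2, b, rfl⟩ := hint y hy
    have hi : i2 = i := hgxy.symm
    subst hi
    have hab : a ≠ b := fun h => hxy (by rw [h])
    -- fiber of i2
    set Fi := T.filter (fun v => g v = i2) with hFi
    by_cases h3 : 3 ≤ Fi.card
    · -- three vertices on path i2
      have hsub : ¬ (Fi ⊆ {Sum.inr (i2, a), Sum.inr (i2, b)}) := by
        intro h
        have h4 := Finset.card_le_card h
        have h5 : ({Sum.inr (i2, a), Sum.inr (i2, b)} :
            Finset (Fin 2 ⊕ (Fin k × Fin (l-1)))).card ≤ 2 := Finset.card_le_two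
        omega
      obtain ⟨z, hz, hz2⟩ := Finset.not_subset.mp hsub
      simp only [Finset.mem_insert, Finset.mem_singleton] at hz2
      push_neg at hz2
      have hzT := Finset.mem_of_mem_filter z hz
      obtain ⟨i4, c, rfl⟩ := hint z hzT
      have : i4 = i2 := by
        have := (Finset.mem_filter.mp hz).2
        exact this
      subst this
      have hac : a ≠ c := by rintro rfl; exact hz2.1 rfl
      have hbc : b ≠ c := by rintro rfl; exact hz2.2 rfl
      exact three_distinct hl hS ((hTS _).mp hx) ((hTS _).mp hy) ((hTS _).mp hzT) hab hbc hac
    · -- second fiber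
      have hFiT : Fi ⊆ T := Finset.filter_subset _ _
      have hcard3 : ((Finset.univ : Finset (Fin k)).erase i2).card < (T \ Fi).card := by
        rw [Finset.card_erase_of_mem (Finset.mem_univ i2), Finset.card_sdiff_of_subset hFiT,
          Finset.card_univ, Fintype.card_fin]
        omega
      have hmaps : ∀ v ∈ T \ Fi, g v ∈ (Finset.univ : Finset (Fin k)).erase i2 := by
        intro v hv
        rw [Finset.mem_sdiff] at hv
        refine Finset.mem_erase.mpr ⟨?_, Finset.mem_univ _⟩
        intro h
        exact hv.2 (Finset.mem_filter.mpr ⟨hv.1, h⟩)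
      obtain ⟨x2, hx2, y2, hy2, hxy2, hgxy2⟩ :=
        Finset.exists_ne_map_eq_of_card_lt_of_maps_to hcard3 hmaps
      rw [Finset.mem_sdiff] at hx2 hy2
      obtain ⟨i3, c, rfl⟩ := hint x2 hx2.1
      obtain ⟨i4, d, rfl⟩ := hint y2 hy2.1
      obtain rfl : i4 = i3 := hgxy2.symm
      have hcd : c ≠ d := fun h => hxy2 (by rw [h])
      have hii3 : i2 ≠ i4 := by
        intro h
        exact (Finset.mem_erase.mp (hmaps _ (Finset.mem_sdiff.mpr hx2))).1 (by rw [← h])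
      exact pairs_contra' hl hS hii3 ((hTS _).mp hx) ((hTS _).mp hy)
        ((hTS _).mp hx2.1) ((hTS _).mp hy2.1) hab hcd

lemma gp_lower (hk : 2 ≤ k) (hl : 3 ≤ l) :
    ∃ S : Set (Fin 2 ⊕ (Fin k × Fin (l-1))), IsGPSet (thetaGraph k l) S ∧ S.Finite ∧
      S.ncard = k + 1 := by
  set jm : Fin (l-1) := ⟨l-2, by omega⟩ with hjm
  set f : Fin k → Fin 2 ⊕ (Fin k × Fin (l-1)) := fun i => Sum.inr (i, jm) with hf
  have finj : Function.Injective f := by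
    intro i i' h
    simpa [hf] using h
  have hvm : (jm:ℕ) = l - 2 := rfl
  have dAf : ∀ i, (thetaGraph k l).dist (Sum.inl 0) (f i) = l - 1 := by
    intro i
    have h0 := dist_A (k := k) hl i jm
    rw [hvm] at h0
    rw [hf]
    simp only
    omega
  have dff : ∀ i i', i ≠ i' → (thetaGraph k l).dist (f i) (f i') = 2 := by
    intro i i' hii
    have h0 := dist_cross_B (k := k) hl jm jm hii (by rw [hvm]; omega)
    rw [hvm] at h0
    rw [hf]
    simp only
    omega
  refine ⟨insert (Sum.inl 0) (Set.range f), ?_, Set.toFinite _, ?_⟩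
  · intro x hx y hy z hz hxy hyz hxz
    rcases Set.mem_insert_iff.mp hx with rfl | ⟨i, rfl⟩ <;>
      rcases Set.mem_insert_iff.mp hy with h2 | ⟨i2, rfl⟩ <;>
      rcases Set.mem_insert_iff.mp hz with h3 | ⟨i3, rfl⟩
    · exact absurd h2.symm hxy
    · exact absurd h2.symm hxy
    · exact absurd h3.symm hxz
    · -- x = A, y = f i2, z = f i3
      have hi23 : i2 ≠ i3 := fun h => hyz (by rw [h])
      rw [dAf, dAf, dff _ _ hi23]
      omega
    · exact absurd (h2.trans h3.symm) hyz
    · subst h2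
      -- y = A : d(f i, f i3) = 2 vs (l-1)+(l-1)
      have hi13 : i ≠ i3 := fun h => hxz (by rw [h])
      rw [dff _ _ hi13, dist_comm (u := f i), dAf, dAf]
      omega
    · subst h3
      -- z = A
      have hi12 : i ≠ i2 := fun h => hxy (by rw [h])
      rw [dist_comm (u := f i) (v := Sum.inl 0), dAf, dff _ _ hi12,
        dist_comm (u := f i2), dAf]
      omega
    · have hi12 : i ≠ i2 := fun h => hxy (by rw [h])
      have hi23 : i2 ≠ i3 := fun h => hyz (by rw [h])
      have hi13 : i ≠ i3 := fun h => hxz (by rw [h])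
      rw [dff _ _ hi12, dff _ _ hi23, dff _ _ hi13]
      omega
  · have hnm : (Sum.inl 0 : Fin 2 ⊕ (Fin k × Fin (l-1))) ∉ Set.range f := by
      rintro ⟨i, h⟩
      simp [hf] at h
    rw [Set.ncard_insert_of_notMem hnm, ← Set.image_univ,
      Set.ncard_image_of_injective _ finj, Set.ncard_univ, Nat.card_eq_fintype_card,
      Fintype.card_fin]

end Aux

theorem gp_thetaGraph (k ℓ : ℕ) (hk : 2 ≤ k) (hl : 3 ≤ ℓ) :
    gpNumber (thetaGraph k ℓ) = k + 1 := by
  obtain ⟨S0, hS0, hfin0, hcard0⟩ := gp_lower (k := k) (l := ℓ) hk hl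
  have hmem : k + 1 ∈ {n | ∃ S : Set (Fin 2 ⊕ (Fin k × Fin (ℓ - 1))),
      IsGPSet (thetaGraph k ℓ) S ∧ S.Finite ∧ S.ncard = n} :=
    ⟨S0, hS0, hfin0, hcard0⟩
  have hub : ∀ n ∈ {n | ∃ S : Set (Fin 2 ⊕ (Fin k × Fin (ℓ - 1))),
      IsGPSet (thetaGraph k ℓ) S ∧ S.Finite ∧ S.ncard = n}, n ≤ k + 1 := by
    rintro n ⟨S, hS, -, rfl⟩
    exact gp_card_le hk hl hS
  rw [gpNumber]
  exact le_antisymm (csSup_le ⟨k + 1, hmem⟩ hub) (le_csSup ⟨k + 1, hub⟩ hmem)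
end

section
/- (Isometric Cover Lemma) If {H_1, ..., H_k} is an isometric cover of a connected graph G, then gp(G) ≤ gp(H_1) + gp(H_2) + ... + gp(H_k). -/
open SimpleGraph

/-- A subgraph `H` of `G` is isometric if distances in `H` agree with
distances in `G` for all pairs of vertices of `H`. -/
def IsIsometricSubgraph {V : Type*} {G : SimpleGraph V} (H : G.Subgraph) : Prop :=
  ∀ x y : H.verts, H.coe.dist x y = G.dist (x : V) (y : V)

/-- The image of a general position set of an isometric subgraph is a
general position set of `G`. -/
lemma gp_image {V : Type*} {G : SimpleGraph V} {H : G.Subgraph}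
    (hiso : IsIsometricSubgraph H) {T : Set H.verts} (hT : IsGPSet H.coe T) :
    IsGPSet G (Subtype.val '' T) := by
  rintro x ⟨x', hx', rfl⟩ y ⟨y', hy', rfl⟩ z ⟨z', hz', rfl⟩ hxy hyz hxz
  have := hT x' hx' y' hy' z' hz' (fun h => hxy (by rw [h]))
    (fun h => hyz (by rw [h])) (fun h => hxz (by rw [h]))
  rwa [hiso, hiso, hiso] at this

/-- Boundedness of GP set sizes transfers from `G` to isometric subgraphs. -/
lemma bdd_transfer {V : Type*} {G : SimpleGraph V} {H : G.Subgraph}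
    (hiso : IsIsometricSubgraph H)
    (hb : BddAbove {n | ∃ S : Set V, IsGPSet G S ∧ S.Finite ∧ S.ncard = n}) :
    BddAbove {n | ∃ S : Set H.verts, IsGPSet H.coe S ∧ S.Finite ∧ S.ncard = n} := by
  obtain ⟨B, hB⟩ := hb
  refine ⟨B, ?_⟩
  rintro n ⟨T, hT, hTf, rfl⟩
  have : (Subtype.val '' T).ncard = T.ncard :=
    Set.ncard_image_of_injective _ Subtype.coe_injective
  exact this ▸ hB ⟨Subtype.val '' T, gp_image hiso hT, hTf.image _, rfl⟩

lemma ncard_biUnion_le {V ι : Type*} (t : Finset ι) (s : ι → Set V) :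
    (⋃ i ∈ t, s i).ncard ≤ ∑ i ∈ t, (s i).ncard := by
  classical
  induction t using Finset.induction with
  | empty => simp
  | insert a t' hi ih =>
    rw [Finset.set_biUnion_insert, Finset.sum_insert hi]
    exact le_trans (Set.ncard_union_le _ _) (by omega)

/-- Isometric Cover Lemma. -/
theorem gp_isometric_cover {V : Type*} (G : SimpleGraph V) (hG : G.Connected)
    (k : ℕ) (H : Fin k → G.Subgraph)
    (hiso : ∀ i, IsIsometricSubgraph (H i))
    (hcov : (⋃ i, (H i).verts) = Set.univ) :
    gpNumber G ≤ ∑ i, gpNumber (H i).coe := by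
  classical
  by_cases hb : BddAbove {n | ∃ S : Set V, IsGPSet G S ∧ S.Finite ∧ S.ncard = n}
  · apply csSup_le'
    rintro n ⟨S, hS, hSf, rfl⟩
    have hsub : S ⊆ ⋃ i ∈ (Finset.univ : Finset (Fin k)), (S ∩ (H i).verts) := by
      intro v hv
      have : v ∈ ⋃ i, (H i).verts := hcov ▸ Set.mem_univ v
      obtain ⟨i, hi⟩ := Set.mem_iUnion.mp this
      exact Set.mem_biUnion (Finset.mem_univ i) ⟨hv, hi⟩
    have h1 : S.ncard ≤ ∑ i, (S ∩ (H i).verts).ncard := by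
      refine le_trans (Set.ncard_le_ncard hsub ?_) (ncard_biUnion_le _ _)
      exact Set.Finite.biUnion (Finset.finite_toSet _) (fun i _ => hSf.inter_of_left _)
    refine le_trans h1 (Finset.sum_le_sum fun i _ => ?_)
    set T : Set (H i).verts := Subtype.val ⁻¹' S with hTdef
    have himg : Subtype.val '' T = S ∩ (H i).verts := by
      rw [Set.image_preimage_eq_inter_range, Subtype.range_coe]
    have hTcard : T.ncard = (S ∩ (H i).verts).ncard := by
      rw [← himg, Set.ncard_image_of_injective _ Subtype.coe_injective]
    have hTf : T.Finite := by
      have : (Subtype.val '' T).Finite := himg ▸ hSf.inter_of_left _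
      exact (this.preimage Subtype.coe_injective.injOn).subset
        (Set.subset_preimage_image _ _)
    have hTgp : IsGPSet (H i).coe T := by
      intro x hx y hy z hz hxy hyz hxz
      rw [hiso i, hiso i, hiso i]
      exact hS x hx y hy z hz (fun h => hxy (Subtype.coe_injective h))
        (fun h => hyz (Subtype.coe_injective h)) (fun h => hxz (Subtype.coe_injective h))
    rw [← hTcard]
    exact le_csSup (bdd_transfer (hiso i) hb) ⟨T, hTgp, hTf, rfl⟩
  · rw [gpNumber, csSup_of_not_bddAbove hb, csSup_empty]
    exact bot_le
end

section
/- For every connected graph G that admits a cover by isometric cycles, gp(G) ≤ 3·ic(G), where ic(G) is the isometric-cycle number of G. -/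
open SimpleGraph

/-- A subgraph of `G` which is an isometric cycle: it is isomorphic to a cycle
graph (on at least 3 vertices) and isometric in `G`. -/
def IsIsometricCycle {V : Type*} {G : SimpleGraph V} (H : G.Subgraph) : Prop :=
  (∃ n : ℕ, 3 ≤ n ∧ Nonempty (H.coe ≃g cycleGraph n)) ∧ IsIsometricSubgraph H

/-- `n` isometric cycles suffice to cover the vertices of `G`. -/
def HasIsometricCycleCover {V : Type*} (G : SimpleGraph V) (n : ℕ) : Prop :=
  ∃ H : Fin n → G.Subgraph, (∀ i, IsIsometricCycle (H i)) ∧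
    (⋃ i, (H i).verts) = Set.univ

/-- The isometric-cycle number of `G`. -/
noncomputable def icNumber {V : Type*} (G : SimpleGraph V) : ℕ :=
  sInf {n | HasIsometricCycleCover G n}

open scoped Fin.NatCast Fin.IntCast Fin.CommRing

section CycleDist
variable {n : ℕ}

lemma fin_neg_val [NeZero n] {a : Fin n} (ha : a ≠ 0) : (-a).val = n - a.val := by
  rw [Fin.neg_def]
  have hn : 0 < n := Nat.pos_of_ne_zero (NeZero.ne n)
  have h1 : 0 < a.val := by
    rcases Nat.eq_zero_or_pos a.val with h | h
    · exact absurd (Fin.ext (by simpa using h)) ha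
    · exact h
  have : n - a.val < n := by omega
  simpa using Nat.mod_eq_of_lt this

lemma fin_sub_val {a b : Fin n} (h : b.val ≤ a.val) : (a - b).val = a.val - b.val := by
  rw [Fin.sub_def]
  have hb := b.isLt
  have ha := a.isLt
  show (n - b.val + a.val) % n = a.val - b.val
  have : (n - b.val + a.val) % n = (n + (a.val - b.val)) % n := by congr 1; omega
  rw [this, Nat.add_mod_left, Nat.mod_eq_of_lt (by omega)]

lemma cyc_walk_le [NeZero n] (hn : 2 ≤ n) (u : Fin n) (k : ℕ) :
    ∃ w : (cycleGraph n).Walk u (u + (k : Fin n)), w.length = k := by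
  induction k with
  | zero => exact ⟨(Walk.nil).copy rfl (by simp), by simp⟩
  | succ k ih =>
    obtain ⟨w, hw⟩ := ih
    have hadj : (cycleGraph n).Adj (u + (k : Fin n)) (u + ((k+1 : ℕ) : Fin n)) := by
      rw [cycleGraph_adj']
      right
      have h : (u + ((k+1 : ℕ) : Fin n)) - (u + (k : Fin n)) = 1 := by push_cast; ring
      rw [h, Fin.val_one', Nat.mod_eq_of_lt (by omega)]
    exact ⟨w.concat hadj, by simp [hw]⟩

lemma cyc_walk_int [NeZero n] (hn : 2 ≤ n) {u v : Fin n} (w : (cycleGraph n).Walk u v) :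
    ∃ s : ℤ, s.natAbs ≤ w.length ∧ (s : Fin n) = v - u := by
  induction w with
  | nil => exact ⟨0, by simp⟩
  | @cons u u' v h p ih =>
    obtain ⟨s, hs, hsv⟩ := ih
    rw [cycleGraph_adj'] at h
    have h1 : (1 : Fin n).val = 1 := by rw [Fin.val_one', Nat.mod_eq_of_lt (by omega)]
    rcases h with h | h
    · have h2 : u - u' = 1 := Fin.ext (by rw [h1]; exact h)
      have hd : u' - u = -1 := by rw [← h2]; ring
      refine ⟨s + (-1), ?_, ?_⟩
      · calc (s + (-1)).natAbs ≤ s.natAbs + (-1 : ℤ).natAbs := Int.natAbs_add_le _ _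
          _ ≤ p.length + 1 := by simpa using hs
      · push_cast
        rw [hsv, ← hd]; ring
    · have h2 : u' - u = 1 := Fin.ext (by rw [h1]; exact h)
      refine ⟨s + 1, ?_, ?_⟩
      · calc (s + 1).natAbs ≤ s.natAbs + (1 : ℤ).natAbs := Int.natAbs_add_le _ _
          _ ≤ p.length + 1 := by simpa using hs
      · push_cast
        rw [hsv, ← h2]; ring

lemma int_cast_bound [NeZero n] {s : ℤ} {a : Fin n} (h : (s : Fin n) = a) :
    min a.val ((-a).val) ≤ s.natAbs := by
  have hn : 0 < n := Nat.pos_of_ne_zero (NeZero.ne n)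
  have hdvd : (n : ℤ) ∣ (s - a.val) := by
    have h0 : ((s - (a.val : ℤ) : ℤ) : Fin n) = 0 := by
      push_cast
      rw [h]; ring
    exact (CharP.intCast_eq_zero_iff (Fin n) n _).mp h0
  obtain ⟨t, ht⟩ := hdvd
  have hs : s = a.val + n * t := by omega
  have ha := a.isLt
  rcases eq_or_ne a 0 with rfl | ha0
  · simp
  · have hneg : (-a).val = n - a.val := fin_neg_val ha0
    rcases le_or_gt 0 t with htp | htn
    · have : (0:ℤ) ≤ n * t := by positivity
      omega
    · have h2 : (n:ℤ) * t ≤ -n := by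
        have : (n:ℤ) * t ≤ n * (-1) := by
          apply mul_le_mul_of_nonneg_left (by omega) (by positivity)
        omega
      omega

lemma cyc_dist (hn : 2 ≤ n) (u v : Fin n) :
    (cycleGraph n).dist u v = min (v - u).val (u - v).val := by
  haveI : NeZero n := ⟨by omega⟩
  apply le_antisymm
  · apply le_min
    · obtain ⟨w, hw⟩ := cyc_walk_le hn u (v - u).val
      have h : u + (((v - u).val : ℕ) : Fin n) = v := by
        rw [Fin.cast_val_eq_self]; ring
      calc (cycleGraph n).dist u v ≤ (w.copy rfl h).length := SimpleGraph.dist_le _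
        _ = (v - u).val := by rw [Walk.length_copy, hw]
    · rw [SimpleGraph.dist_comm]
      obtain ⟨w, hw⟩ := cyc_walk_le hn v (u - v).val
      have h : v + (((u - v).val : ℕ) : Fin n) = u := by
        rw [Fin.cast_val_eq_self]; ring
      calc (cycleGraph n).dist v u ≤ (w.copy rfl h).length := SimpleGraph.dist_le _
        _ = (u - v).val := by rw [Walk.length_copy, hw]
  · have hconn : (cycleGraph n).Connected := by
      obtain ⟨m, rfl⟩ : ∃ m, n = m + 1 := ⟨n - 1, by omega⟩
      exact cycleGraph_connected
    obtain ⟨w, hw⟩ := (hconn u v).exists_walk_length_eq_dist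
    obtain ⟨s, hs, hsv⟩ := cyc_walk_int hn w
    have hb := int_cast_bound hsv
    have huv : u - v = -(v - u) := by ring
    rw [huv]
    omega

end CycleDist

lemma cyc_key' {n : ℕ} (hn : 3 ≤ n) (a b c d : Fin n)
    (h1 : 0 < (b - a).val) (h2 : (b - a).val < (c - a).val) (h3 : (c - a).val < (d - a).val) :
    ∃ x y z : Fin n, (x = a ∨ x = b ∨ x = c ∨ x = d) ∧ (y = a ∨ y = b ∨ y = c ∨ y = d) ∧
      (z = a ∨ z = b ∨ z = c ∨ z = d) ∧ x ≠ y ∧ y ≠ z ∧ x ≠ z ∧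
      (cycleGraph n).dist x z = (cycleGraph n).dist x y + (cycleGraph n).dist y z := by
  haveI : NeZero n := ⟨by omega⟩
  have hn2 : 2 ≤ n := by omega
  have hab : a ≠ b := by intro h; rw [← h, sub_self] at h1; simp at h1
  have hac : a ≠ c := by intro h; rw [← h, sub_self] at h2; simp at h2
  have had : a ≠ d := by intro h; rw [← h, sub_self] at h3; simp at h3
  have hbc : b ≠ c := by intro h; rw [h] at h2; exact absurd h2 (lt_irrefl _)
  have hcd : c ≠ d := by intro h; rw [h] at h3; exact absurd h3 (lt_irrefl _)
  set bv := (b - a).val with hbv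
  set cv := (c - a).val with hcv
  set dv := (d - a).val with hdv
  have hdn : dv < n := (d - a).isLt
  -- values of negatives
  have hba' : (a - b).val = n - bv := by
    have e : a - b = -(b - a) := by ring
    rw [e, fin_neg_val (fun h0 => by rw [h0] at hbv; simp at hbv; omega)]
  have hca' : (a - c).val = n - cv := by
    have e : a - c = -(c - a) := by ring
    rw [e, fin_neg_val (fun h0 => by rw [h0] at hcv; simp at hcv; omega)]
  have hda' : (a - d).val = n - dv := by
    have e : a - d = -(d - a) := by ring
    rw [e, fin_neg_val (fun h0 => by rw [h0] at hdv; simp at hdv; omega)]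
  have hcb : (c - b).val = cv - bv := by
    have e : c - b = (c - a) - (b - a) := by ring
    rw [e, fin_sub_val (le_of_lt h2)]
  have hbc' : (b - c).val = n - (cv - bv) := by
    have e : b - c = -(c - b) := by ring
    rw [e, fin_neg_val (fun h0 => by rw [h0] at hcb; simp at hcb; omega), hcb]
  have hdc : (d - c).val = dv - cv := by
    have e : d - c = (d - a) - (c - a) := by ring
    rw [e, fin_sub_val (le_of_lt h3)]
  have hcd' : (c - d).val = n - (dv - cv) := by
    have e : c - d = -(d - c) := by ring
    rw [e, fin_neg_val (fun h0 => by rw [h0] at hdc; simp at hdc; omega), hdc]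
  rcases le_or_gt (2 * cv) n with hcase | hcase
  · refine ⟨a, b, c, Or.inl rfl, Or.inr (Or.inl rfl), Or.inr (Or.inr (Or.inl rfl)),
      hab, hbc, hac, ?_⟩
    rw [cyc_dist hn2, cyc_dist hn2, cyc_dist hn2, hca', hba', hcb, hbc']
    omega
  · refine ⟨c, d, a, Or.inr (Or.inr (Or.inl rfl)), Or.inr (Or.inr (Or.inr rfl)), Or.inl rfl,
      hcd, fun h => had h.symm, fun h => hac h.symm, ?_⟩
    rw [cyc_dist hn2, cyc_dist hn2, cyc_dist hn2, hca', hda', hdc, hcd']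
    omega

lemma cyc_key {n : ℕ} (hn : 3 ≤ n) {a b c d : Fin n} (hab : a ≠ b) (hac : a ≠ c) (had : a ≠ d)
    (hbc : b ≠ c) (hbd : b ≠ d) (hcd : c ≠ d) :
    ∃ x y z : Fin n, (x = a ∨ x = b ∨ x = c ∨ x = d) ∧ (y = a ∨ y = b ∨ y = c ∨ y = d) ∧
      (z = a ∨ z = b ∨ z = c ∨ z = d) ∧ x ≠ y ∧ y ≠ z ∧ x ≠ z ∧
      (cycleGraph n).dist x z = (cycleGraph n).dist x y + (cycleGraph n).dist y z := by
  haveI : NeZero n := ⟨by omega⟩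
  have hpos : ∀ {u v : Fin n}, u ≠ v → 0 < (v - u).val := by
    intro u v h
    rcases Nat.eq_zero_or_pos (v - u).val with h0 | h0
    · exact absurd (sub_eq_zero.mp (Fin.ext (by simpa using h0))).symm h
    · exact h0
  have hne : ∀ {u v w : Fin n}, v ≠ w → (v - u).val ≠ (w - u).val := by
    intro u v w h hval
    exact h (sub_left_inj.mp (Fin.ext hval))
  have Hb := hpos hab
  have Hc := hpos hac
  have Hd := hpos had
  have Hbc := hne (u := a) hbc
  have Hbd := hne (u := a) hbd
  have Hcd := hne (u := a) hcd
  rcases lt_trichotomy (b - a).val (c - a).val with h1 | h1 | h1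
  · rcases lt_trichotomy (c - a).val (d - a).val with h2 | h2 | h2
    · obtain ⟨x, y, z, hx, hy, hz, hxy, hyz, hxz, hd⟩ := cyc_key' hn a b c d Hb h1 h2
      exact ⟨x, y, z, by rcases hx with h|h|h|h <;> subst h <;> simp, by rcases hy with h|h|h|h <;> subst h <;> simp, by rcases hz with h|h|h|h <;> subst h <;> simp, hxy, hyz, hxz, hd⟩
    · exact absurd h2 Hcd
    · rcases lt_trichotomy (b - a).val (d - a).val with h3 | h3 | h3
      · obtain ⟨x, y, z, hx, hy, hz, hxy, hyz, hxz, hd⟩ := cyc_key' hn a b d c Hb h3 h2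
        exact ⟨x, y, z, by rcases hx with h|h|h|h <;> subst h <;> simp, by rcases hy with h|h|h|h <;> subst h <;> simp, by rcases hz with h|h|h|h <;> subst h <;> simp, hxy, hyz, hxz, hd⟩
      · exact absurd h3 Hbd
      · obtain ⟨x, y, z, hx, hy, hz, hxy, hyz, hxz, hd⟩ := cyc_key' hn a d b c Hd h3 h1
        exact ⟨x, y, z, by rcases hx with h|h|h|h <;> subst h <;> simp, by rcases hy with h|h|h|h <;> subst h <;> simp, by rcases hz with h|h|h|h <;> subst h <;> simp, hxy, hyz, hxz, hd⟩
  · exact absurd h1 Hbc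
  · rcases lt_trichotomy (b - a).val (d - a).val with h3 | h3 | h3
    · obtain ⟨x, y, z, hx, hy, hz, hxy, hyz, hxz, hd⟩ := cyc_key' hn a c b d Hc h1 h3
      exact ⟨x, y, z, by rcases hx with h|h|h|h <;> subst h <;> simp, by rcases hy with h|h|h|h <;> subst h <;> simp, by rcases hz with h|h|h|h <;> subst h <;> simp, hxy, hyz, hxz, hd⟩
    · exact absurd h3 Hbd
    · rcases lt_trichotomy (c - a).val (d - a).val with h2 | h2 | h2
      · obtain ⟨x, y, z, hx, hy, hz, hxy, hyz, hxz, hd⟩ := cyc_key' hn a c d b Hc h2 h3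
        exact ⟨x, y, z, by rcases hx with h|h|h|h <;> subst h <;> simp, by rcases hy with h|h|h|h <;> subst h <;> simp, by rcases hz with h|h|h|h <;> subst h <;> simp, hxy, hyz, hxz, hd⟩
      · exact absurd h2 Hcd
      · obtain ⟨x, y, z, hx, hy, hz, hxy, hyz, hxz, hd⟩ := cyc_key' hn a d c b Hd h2 h1
        exact ⟨x, y, z, by rcases hx with h|h|h|h <;> subst h <;> simp, by rcases hy with h|h|h|h <;> subst h <;> simp, by rcases hz with h|h|h|h <;> subst h <;> simp, hxy, hyz, hxz, hd⟩

lemma iso_dist_le {V W : Type*} {G : SimpleGraph V} {G' : SimpleGraph W} (f : G ≃g G')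
    (u v : V) : G'.dist (f u) (f v) ≤ G.dist u v := by
  by_cases h : G.Reachable u v
  · obtain ⟨w, hw⟩ := h.exists_walk_length_eq_dist
    calc G'.dist (f u) (f v) ≤ (w.map f.toHom).length := SimpleGraph.dist_le _
      _ = G.dist u v := by rw [Walk.length_map, hw]
  · refine le_of_eq (SimpleGraph.dist_eq_zero_of_not_reachable (fun hr => h ?_)) |>.trans (by omega)
    have := hr.map f.symm.toHom
    simpa using this

lemma iso_dist {V W : Type*} {G : SimpleGraph V} {G' : SimpleGraph W} (f : G ≃g G')
    (u v : V) : G'.dist (f u) (f v) = G.dist u v := by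
  refine le_antisymm (iso_dist_le f u v) ?_
  have := iso_dist_le f.symm (f u) (f v)
  simpa using this

lemma inter_bound {V : Type*} {G : SimpleGraph V} {S : Set V} (hS : IsGPSet G S)
    (hSf : S.Finite) {H : G.Subgraph} (hH : IsIsometricCycle H) :
    (S ∩ H.verts).ncard ≤ 3 := by
  by_contra hlt
  push_neg at hlt
  obtain ⟨⟨n, hn3, ⟨f⟩⟩, hiso⟩ := hH
  obtain ⟨T, hTsub, hT4⟩ := Set.exists_subset_card_eq (show 4 ≤ (S ∩ H.verts).ncard by omega)
  have hTfin : T.Finite := (hSf.inter_of_left _).subset hTsub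
  have hTne : T.Nonempty := Set.nonempty_of_ncard_ne_zero (by omega)
  obtain ⟨p, hp⟩ := hTne
  have h3 : (T \ {p}).ncard = 3 := by
    rw [Set.ncard_diff_singleton_of_mem hp, hT4]
  obtain ⟨q, r, s, hqr, hqs, hrs, hset⟩ := Set.ncard_eq_three.mp h3
  have hq : q ∈ T \ {p} := hset ▸ (by simp)
  have hr : r ∈ T \ {p} := hset ▸ (by simp)
  have hs : s ∈ T \ {p} := hset ▸ (by simp)
  have hpS := hTsub hp
  have hqS := hTsub hq.1
  have hrS := hTsub hr.1
  have hsS := hTsub hs.1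
  set P : H.verts := ⟨p, hpS.2⟩
  set Q : H.verts := ⟨q, hqS.2⟩
  set R : H.verts := ⟨r, hrS.2⟩
  set T' : H.verts := ⟨s, hsS.2⟩
  have hinj := f.toEquiv.injective
  have hne : ∀ (A B : H.verts), (A : V) ≠ (B : V) → f A ≠ f B := by
    intro A B hAB h
    exact hAB (congrArg _ (hinj h))
  have hpq : f P ≠ f Q := hne _ _ (fun h => hq.2 (by simpa using h.symm))
  have hpr : f P ≠ f R := hne _ _ (fun h => hr.2 (by simpa using h.symm))
  have hps : f P ≠ f T' := hne _ _ (fun h => hs.2 (by simpa using h.symm))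
  have hqr' : f Q ≠ f R := hne _ _ hqr
  have hqs' : f Q ≠ f T' := hne _ _ hqs
  have hrs' : f R ≠ f T' := hne _ _ hrs
  obtain ⟨x, y, z, hx, hy, hz, hxy, hyz, hxz, hdist⟩ :=
    cyc_key hn3 hpq hpr hps hqr' hqs' hrs'
  have pull : ∀ w : Fin n, (w = f P ∨ w = f Q ∨ w = f R ∨ w = f T') →
      ∃ W : H.verts, (W : V) ∈ S ∧ f W = w := by
    rintro w (rfl | rfl | rfl | rfl)
    exacts [⟨P, hpS.1, rfl⟩, ⟨Q, hqS.1, rfl⟩, ⟨R, hrS.1, rfl⟩, ⟨T', hsS.1, rfl⟩]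
  obtain ⟨X, hXS, hXx⟩ := pull x hx
  obtain ⟨Y, hYS, hYy⟩ := pull y hy
  obtain ⟨Z, hZS, hZz⟩ := pull z hz
  have hGdist : ∀ A B : H.verts, G.dist (A : V) (B : V) = (cycleGraph n).dist (f A) (f B) := by
    intro A B
    rw [← hiso A B, iso_dist f A B]
  have hXY : (X : V) ≠ (Y : V) := fun h => hxy (by rw [← hXx, ← hYy, Subtype.ext h])
  have hYZ : (Y : V) ≠ (Z : V) := fun h => hyz (by rw [← hYy, ← hZz, Subtype.ext h])
  have hXZ : (X : V) ≠ (Z : V) := fun h => hxz (by rw [← hXx, ← hZz, Subtype.ext h])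
  refine hS _ hXS _ hYS _ hZS hXY hYZ hXZ ?_
  rw [hGdist X Z, hGdist X Y, hGdist Y Z, hXx, hYy, hZz, hdist]

theorem gp_le_three_ic {V : Type*} (G : SimpleGraph V) (hG : G.Connected)
    (hcov : ∃ n, HasIsometricCycleCover G n) :
    gpNumber G ≤ 3 * icNumber G := by
  classical
  have hmem : HasIsometricCycleCover G (icNumber G) := Nat.sInf_mem hcov
  obtain ⟨H, hcyc, hU⟩ := hmem
  apply csSup_le
  · exact ⟨0, ∅, fun x hx => absurd hx (by simp), Set.finite_empty, by simp⟩
  · rintro k ⟨S, hgp, hfin, rfl⟩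
    have key : ∀ i, (S ∩ (H i).verts).ncard ≤ 3 := fun i => inter_bound hgp hfin (hcyc i)
    have hsub : hfin.toFinset ⊆ Finset.univ.biUnion
        (fun i : Fin (icNumber G) => ((hfin.inter_of_left (H i).verts).toFinset)) := by
      intro v hv
      rw [Set.Finite.mem_toFinset] at hv
      have : v ∈ ⋃ i, (H i).verts := by rw [hU]; trivial
      obtain ⟨i, hi⟩ := Set.mem_iUnion.mp this
      exact Finset.mem_biUnion.mpr ⟨i, Finset.mem_univ i, by
        rw [Set.Finite.mem_toFinset]; exact ⟨hv, hi⟩⟩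
    calc S.ncard = hfin.toFinset.card := Set.ncard_eq_toFinset_card _ hfin
      _ ≤ (Finset.univ.biUnion
          (fun i : Fin (icNumber G) => ((hfin.inter_of_left (H i).verts).toFinset))).card :=
        Finset.card_le_card hsub
      _ ≤ ∑ i : Fin (icNumber G), ((hfin.inter_of_left (H i).verts).toFinset).card :=
        Finset.card_biUnion_le
      _ ≤ ∑ _i : Fin (icNumber G), 3 := by
        refine Finset.sum_le_sum (fun i _ => ?_)
        rw [← Set.ncard_eq_toFinset_card _ (hfin.inter_of_left (H i).verts)]
        exact key i
      _ = 3 * icNumber G := by simp [Finset.sum_const, mul_comm]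
end

section
/- The set of simplicial vertices of a connected graph G is a general position set of G. -/
open SimpleGraph

/-- A vertex is simplicial if its neighborhood induces a complete subgraph. -/
def IsSimplicial {V : Type*} (G : SimpleGraph V) (v : V) : Prop :=
  ∀ a b : V, G.Adj v a → G.Adj v b → a ≠ b → G.Adj a b

private lemma exists_penult {V : Type*} {G : SimpleGraph V} (hG : G.Connected)
    {x y : V} (hxy : x ≠ y) : ∃ a, G.Adj y a ∧ G.dist x a + 1 ≤ G.dist x y := by
  obtain ⟨p, hp⟩ := hG.exists_walk_length_eq_dist x y
  have hp' : p.reverse.length = G.dist x y := by simp [hp]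
  cases hq : p.reverse with
  | nil => exact absurd rfl hxy.symm
  | cons h q =>
    refine ⟨_, h, ?_⟩
    have h1 : G.dist x _ ≤ q.reverse.length := G.dist_le q.reverse
    rw [hq] at hp'
    simp only [SimpleGraph.Walk.length_cons] at hp'
    simpa [hp'] using Nat.add_le_add_right h1 1

theorem simplicial_isGPSet {V : Type*} (G : SimpleGraph V) (hG : G.Connected) :
    IsGPSet G {v | IsSimplicial G v} := by
  intro x hx y hy z hz hxy hyz hxz heq
  obtain ⟨a, hya, ha⟩ := exists_penult hG hxy
  obtain ⟨b, hyb, hb⟩ := exists_penult hG (Ne.symm hyz)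
  have hbz : G.dist b z + 1 ≤ G.dist y z := by rwa [dist_comm (u := b) (v := z), dist_comm (u := y) (v := z)]
  by_cases hab : a = b
  · subst hab
    have h1 : G.dist x z ≤ G.dist x a + G.dist a z := hG.dist_triangle
    omega
  · have hadj : G.Adj a b := hy a b hya hyb hab
    have h1 : G.dist x z ≤ G.dist x a + G.dist a z := hG.dist_triangle
    have h2 : G.dist a z ≤ G.dist a b + G.dist b z := hG.dist_triangle
    have h3 : G.dist a b = 1 := dist_eq_one_iff_adj.mpr hadj
    omega
end

section
/- If G is a connected block graph and S is the set of simplicial vertices of G, then gp(G) = |S|. -/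
open SimpleGraph

/-- `B` induces a connected subgraph of `G` with no cut-vertex. -/
def IsBiconnectedSet {V : Type*} (G : SimpleGraph V) (B : Set V) : Prop :=
  (G.induce B).Connected ∧
    ∀ v ∈ B, B = {v} ∨ (G.induce (B \ {v})).Connected

/-- A block of `G`: a maximal set of vertices inducing a connected subgraph
with no cut-vertex. -/
def IsBlock {V : Type*} (G : SimpleGraph V) (B : Set V) : Prop :=
  IsBiconnectedSet G B ∧ ∀ B', IsBiconnectedSet G B' → B ⊆ B' → B' = B

/-- A block graph: every block is a complete (induced) subgraph. -/
def IsBlockGraph {V : Type*} (G : SimpleGraph V) : Prop :=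
  ∀ B : Set V, IsBlock G B → G.IsClique B

namespace GPAux

variable {V : Type*} {G : SimpleGraph V}

/-- There is a walk from `x` to `y` avoiding `s`. -/
def Av (G : SimpleGraph V) (s x y : V) : Prop := ∃ p : G.Walk x y, s ∉ p.support

lemma av_refl {s x : V} (h : x ≠ s) : Av G s x x :=
  ⟨Walk.nil, by simp [h.symm]⟩

lemma av_symm {s x y : V} (h : Av G s x y) : Av G s y x := by
  obtain ⟨p, hp⟩ := h
  exact ⟨p.reverse, by simpa [Walk.support_reverse] using hp⟩

lemma av_trans {s x y z : V} (h1 : Av G s x y) (h2 : Av G s y z) : Av G s x z := by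
  obtain ⟨p, hp⟩ := h1
  obtain ⟨q, hq⟩ := h2
  refine ⟨p.append q, fun hs => ?_⟩
  rcases (Walk.mem_support_append_iff _ _).1 hs with h | h
  exacts [hp h, hq h]

lemma av_end_ne {s x y : V} (h : Av G s x y) : y ≠ s := by
  obtain ⟨p, hp⟩ := h
  intro hys
  exact hp (hys ▸ p.end_mem_support)

lemma dist_split (hG : G.Connected) {s x y : V} (h : ¬ Av G s x y) :
    G.dist x y = G.dist x s + G.dist s y := by
  classical
  obtain ⟨p, hp⟩ := (hG x y).exists_walk_length_eq_dist
  have hs : s ∈ p.support := by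
    by_contra hs; exact h ⟨p, hs⟩
  have h1 : G.dist x s ≤ (p.takeUntil s hs).length := dist_le _
  have h2 : G.dist s y ≤ (p.dropUntil s hs).length := dist_le _
  have h3 : (p.takeUntil s hs).length + (p.dropUntil s hs).length = p.length := by
    rw [← Walk.length_append, p.take_spec hs]
  have h4 : G.dist x y ≤ G.dist x s + G.dist s y := hG.dist_triangle
  omega

lemma end_mem_support_tail {a b : V} (d : G.Walk a b) (hd : d.length ≠ 0) :
    b ∈ d.support.tail := by
  cases d with
  | nil => simp at hd
  | cons h p => simp

lemma mem_support_closed {a v : V} {d : G.Walk a a} (hd : d.length ≠ 0) :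
    v ∈ d.support ↔ v ∈ d.support.tail := by
  constructor
  · intro h
    rw [Walk.support_eq_cons] at h
    rcases List.mem_cons.1 h with rfl | h
    · exact end_mem_support_tail d hd
    · exact h
  · intro h
    rw [Walk.support_eq_cons]
    exact List.mem_cons_of_mem _ h

lemma path_drop_head {a b : V} {p : G.Walk a b} (hp : p.IsPath) (hl : p.length ≠ 0) :
    ∃ (x : V) (r : G.Walk x b),
      {v | v ∈ p.support} \ {a} = {v | v ∈ r.support} := by
  cases p with
  | nil => simp at hl
  | cons h r =>
    have hnd : a ∉ r.support := by
      have := hp.support_nodup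
      simp only [Walk.support_cons, List.nodup_cons] at this
      exact this.1
    refine ⟨_, r, ?_⟩
    ext v
    simp only [Set.mem_diff, Set.mem_setOf_eq, Walk.support_cons, List.mem_cons,
      Set.mem_singleton_iff]
    constructor
    · rintro ⟨rfl | hv, hva⟩
      · exact absurd rfl hva
      · exact hv
    · intro hv
      exact ⟨Or.inr hv, fun hva => hnd (hva ▸ hv)⟩

lemma cycle_del_at {w : V} {c : G.Walk w w} (hc : c.IsCycle) :
    (G.induce ({v | v ∈ c.support} \ {w})).Connected := by
  cases c with
  | nil => exact absurd rfl hc.ne_nil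
  | cons h q =>
    have htail : (Walk.cons h q).support.tail.Nodup := ((Walk.isCycle_def _).1 hc).2.2
    have hq : q.IsPath := (Walk.isPath_def q).2 (by simpa using htail)
    have hlen : 3 ≤ q.length + 1 := by
      simpa using hc.three_le_length
    have hl : q.reverse.length ≠ 0 := by
      rw [Walk.length_reverse]; omega
    obtain ⟨x, r, hset⟩ := path_drop_head hq.reverse hl
    have hmem : {v | v ∈ (Walk.cons h q).support} = {v | v ∈ q.reverse.support} := by
      ext v
      simp only [Set.mem_setOf_eq, Walk.support_cons, List.mem_cons, Walk.support_reverse,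
        List.mem_reverse]
      constructor
      · rintro (rfl | hv)
        · exact q.end_mem_support
        · exact hv
      · exact Or.inr
    rw [hmem, hset]
    exact r.connected_induce_support

lemma cycle_del {u : V} {c : G.Walk u u} (hc : c.IsCycle) {w : V} (hw : w ∈ c.support) :
    (G.induce ({v | v ∈ c.support} \ {w})).Connected := by
  classical
  have hc' := hc.rotate hw
  have hlen : c.length ≠ 0 := by have := hc.three_le_length; omega
  have hlen' : (c.rotate w hw).length ≠ 0 := by have := hc'.three_le_length; omega
  have hset : {v | v ∈ c.support} = {v | v ∈ (c.rotate w hw).support} := by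
    ext v
    simp only [Set.mem_setOf_eq]
    rw [mem_support_closed hlen, mem_support_closed hlen']
    exact ((c.support_rotate w hw).perm.mem_iff).symm
  rw [hset]
  exact cycle_del_at hc'

lemma cycle_biconnected {u : V} {c : G.Walk u u} (hc : c.IsCycle) :
    IsBiconnectedSet G {v | v ∈ c.support} :=
  ⟨c.connected_induce_support, fun _ hw => Or.inr (cycle_del hc hw)⟩

lemma exists_block_superset [Finite V] {B : Set V} (hB : IsBiconnectedSet G B) :
    ∃ M, IsBlock G M ∧ B ⊆ M := by
  obtain ⟨M, hM, hmax⟩ := Set.Finite.exists_maximalFor id {C | IsBiconnectedSet G C ∧ B ⊆ C}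
    (Set.toFinite _) ⟨B, hB, subset_rfl⟩
  exact ⟨M, ⟨hM.1, fun B' hB' hMB' => Set.Subset.antisymm (hmax ⟨hB', hM.2.trans hMB'⟩ hMB') hMB'⟩, hM.2⟩

lemma not_av_of_neighbors [Finite V] (hBG : IsBlockGraph G) {s a b : V}
    (ha : G.Adj s a) (hb : G.Adj s b) (hab : a ≠ b) (hnadj : ¬ G.Adj a b) :
    ¬ Av G s a b := by
  rintro ⟨p0, hp0⟩
  classical
  set q : G.Walk a b := p0.toPath.1 with hqdef
  have hs : s ∉ q.support := fun h => hp0 (p0.support_toPath_subset h)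
  have hq : q.IsPath := p0.toPath.2
  set c : G.Walk s s := Walk.cons ha (q.concat hb.symm) with hcdef
  have hcyc : c.IsCycle := by
    rw [Walk.isCycle_def]
    refine ⟨?_, by simp [hcdef], ?_⟩
    · rw [Walk.isTrail_def]
      have hqe : q.edges.Nodup := hq.isTrail.edges_nodup
      have h1 : s(s, a) ∉ q.edges := fun h => hs (q.fst_mem_support_of_mem_edges h)
      have h2 : s(b, s) ∉ q.edges := fun h => hs (q.snd_mem_support_of_mem_edges h)
      have h3 : ¬ ((s = b ∧ a = s) ∨ (s = s ∧ a = b)) := by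
        rintro (⟨h, -⟩ | ⟨-, h⟩)
        exacts [hb.ne h, hab h]
      simp only [hcdef, Walk.edges_cons, Walk.edges_concat, List.concat_eq_append,
        List.nodup_cons, List.nodup_append, List.mem_append]
      refine ⟨?_, hqe, by simp, ?_⟩
      · rintro (h | h)
        · exact h1 h
        · simp only [List.mem_singleton] at h
          exact h3 (Sym2.eq_iff.1 h)
      · intro e he
        simp only [List.mem_singleton, forall_eq]
        intro hee
        exact h2 (hee ▸ he)

    · simp only [hcdef, Walk.support_cons, List.tail_cons, Walk.support_concat,
        List.concat_eq_append]
      rw [List.nodup_append]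
      refine ⟨hq.support_nodup, by simp, ?_⟩
      intro v hv w hvs hvw
      simp only [List.mem_singleton] at hvs
      exact hs (by rw [← hvs, ← hvw]; exact hv)
  obtain ⟨M, hM, hsub⟩ := exists_block_superset (cycle_biconnected hcyc)
  have haM : a ∈ M := hsub (show a ∈ c.support by
    rw [hcdef, Walk.support_cons]
    right
    rw [Walk.support_concat]
    exact List.mem_append_left _ q.start_mem_support)
  have hbM : b ∈ M := hsub (show b ∈ c.support by
    rw [hcdef, Walk.support_cons]
    right
    rw [Walk.support_concat]
    exact List.mem_append_left _ q.end_mem_support)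
  exact hnadj (hBG M hM haM hbM hab)

lemma exists_cut_pair [Finite V] (hBG : IsBlockGraph G) {s : V} (hs : ¬ IsSimplicial G s) :
    ∃ a b, G.Adj s a ∧ G.Adj s b ∧ a ≠ b ∧ ¬ Av G s a b := by
  unfold IsSimplicial at hs
  push_neg at hs
  obtain ⟨a, b, h1, h2, h3, h4⟩ := hs
  exact ⟨a, b, h1, h2, h3, not_av_of_neighbors hBG h1 h2 h3 h4⟩

lemma exists_simplicial_av [Fintype V] (hG : G.Connected) (hBG : IsBlockGraph G)
    {s c : V} (hc : c ≠ s) :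
    ∃ x, IsSimplicial G x ∧ Av G s c x := by
  obtain ⟨x, hxD, hxmax⟩ := Set.exists_max_image {y | Av G s c y} (G.dist s) (Set.toFinite _)
    ⟨c, av_refl hc⟩
  refine ⟨x, ?_, hxD⟩
  by_contra hxs
  obtain ⟨p, q, hp, hq, hpq, hnav⟩ := exists_cut_pair hBG hxs
  have hxns : x ≠ s := av_end_ne hxD
  have key : ∃ r, G.Adj x r ∧ ¬ Av G x s r := by
    by_contra hcon
    push_neg at hcon
    exact hnav (av_trans (av_symm (hcon p hp)) (hcon q hq))
  obtain ⟨r, hr, hnr⟩ := key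
  have hrs : r ≠ s := by
    intro h
    subst h
    exact hnr (av_refl hxns.symm)
  have hd : G.dist s r = G.dist s x + G.dist x r := dist_split hG hnr
  have hdx : G.dist x r = 1 := dist_eq_one_iff_adj.2 hr
  have hxr : Av G s x r := ⟨Walk.cons hr Walk.nil, by
    simp only [Walk.support_cons, Walk.support_nil, List.mem_cons, List.not_mem_nil,
      or_false]
    rintro (h | h)
    · exact hxns h.symm
    · exact hrs h.symm⟩
  have hrD : Av G s c r := av_trans hxD hxr
  have := hxmax r hrD
  omega

lemma exists_simplicial [Fintype V] (hG : G.Connected) (hBG : IsBlockGraph G) :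
    ∃ x, IsSimplicial G x := by
  obtain ⟨v0⟩ := hG.nonempty
  by_cases h : ∃ c, c ≠ v0
  · obtain ⟨c, hc⟩ := h
    obtain ⟨x, hx, _⟩ := exists_simplicial_av hG hBG hc
    exact ⟨x, hx⟩
  · push_neg at h
    exact ⟨v0, fun a b hA _ _ => absurd (h a) hA.ne'⟩

lemma exists_penult {x v : V} (p : G.Walk x v) (hl : p.length ≠ 0) :
    ∃ (a : V), G.Adj v a ∧ G.dist x a + 1 ≤ p.length := by
  have hlr : p.reverse.length ≠ 0 := by rwa [Walk.length_reverse]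
  have hlen : p.reverse.length = p.length := Walk.length_reverse p
  generalize hpr : p.reverse = pr at hlr hlen
  cases pr with
  | nil => simp at hlr
  | cons h r =>
    refine ⟨_, h, ?_⟩
    have h1 : G.dist x _ ≤ r.reverse.length := dist_le r.reverse
    rw [Walk.length_reverse] at h1
    simp only [Walk.length_cons] at hlen
    omega

lemma simplicial_gpset (hG : G.Connected) : IsGPSet G {v | IsSimplicial G v} := by
  intro x hx v hv z hz hxv hvz hxz heq
  obtain ⟨p, hp⟩ := (hG x v).exists_walk_length_eq_dist
  obtain ⟨q, hq⟩ := (hG v z).exists_walk_length_eq_dist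
  have h1 : G.dist x v ≠ 0 := (hG.pos_dist_of_ne hxv).ne'
  have h2 : G.dist v z ≠ 0 := (hG.pos_dist_of_ne hvz).ne'
  obtain ⟨a, haadj, hale⟩ := exists_penult p (by omega)
  obtain ⟨b, hbadj, hble⟩ := exists_penult q.reverse (by rw [Walk.length_reverse]; omega)
  rw [hp] at hale
  rw [Walk.length_reverse, hq] at hble
  have hza : G.dist z a = G.dist a z := dist_comm ..
  have hzb : G.dist z b = G.dist b z := dist_comm ..
  by_cases hab : a = b
  · subst hab
    have t1 : G.dist x z ≤ G.dist x a + G.dist a z := hG.dist_triangle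
    omega
  · have hadjab : G.Adj a b := hv a b haadj hbadj hab
    have t1 : G.dist x z ≤ G.dist x a + G.dist a z := hG.dist_triangle
    have t2 : G.dist a z ≤ G.dist a b + G.dist b z := hG.dist_triangle
    have t3 : G.dist a b = 1 := dist_eq_one_iff_adj.2 hadjab
    omega

lemma no_double_cut_aux (hG : G.Connected) {v w x : V} (hvw : v ≠ w)
    (hle : G.dist v x ≤ G.dist w x) (h2 : ¬ Av G w v x) : False := by
  classical
  obtain ⟨p, hp⟩ := (hG v x).exists_walk_length_eq_dist
  have hw : w ∈ p.support := by
    by_contra h; exact h2 ⟨p, h⟩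
  have l1 : G.dist v w ≤ (p.takeUntil w hw).length := dist_le _
  have l2 : G.dist w x ≤ (p.dropUntil w hw).length := dist_le _
  have l3 : (p.takeUntil w hw).length + (p.dropUntil w hw).length = p.length := by
    rw [← Walk.length_append, p.take_spec hw]
  have l4 : 1 ≤ G.dist v w := hG.pos_dist_of_ne hvw
  omega

lemma no_double_cut (hG : G.Connected) {v w x : V} (hvw : v ≠ w)
    (h1 : ¬ Av G v w x) (h2 : ¬ Av G w v x) : False := by
  rcases le_total (G.dist v x) (G.dist w x) with hle | hle
  · exact no_double_cut_aux hG hvw hle h2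
  · exact no_double_cut_aux hG hvw.symm hle h1

lemma card_le [Fintype V] (hG : G.Connected) (hBG : IsBlockGraph G) {S : Set V}
    (hS : IsGPSet G S) : S.ncard ≤ {v | IsSimplicial G v}.ncard := by
  classical
  by_cases htriv : ∀ v ∈ S, ∀ w ∈ S, v = w
  · rcases Set.eq_empty_or_nonempty S with rfl | ⟨s, hsS⟩
    · simp
    · have hsingle : S = {s} := Set.eq_singleton_iff_unique_mem.2
        ⟨hsS, fun w hw => htriv w hw s hsS⟩
      rw [hsingle, Set.ncard_singleton]
      obtain ⟨x, hx⟩ := exists_simplicial hG hBG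
      exact (Set.ncard_pos (Set.toFinite _)).2 ⟨x, hx⟩
  · push_neg at htriv
    obtain ⟨t0, ht0S, t1, ht1S, ht01⟩ := htriv
    have hSav : ∀ v ∈ S, ∀ t ∈ S, ∀ t' ∈ S, t ≠ v → t' ≠ v → Av G v t t' := by
      intro v hv t ht t' ht' htv ht'v
      by_cases htt' : t = t'
      · subst htt'; exact av_refl htv
      · by_contra hnav
        exact hS t ht v hv t' ht' htv (Ne.symm ht'v) htt' (dist_split hG hnav)
    have claimA : ∀ v ∈ S, ¬ IsSimplicial G v →
        ∃ x, IsSimplicial G x ∧ x ∉ S ∧ ∀ t ∈ S, t ≠ v → ¬ Av G v t x := by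
      intro v hv hns
      obtain ⟨a, b, hadja, hadjb, hab, hnav⟩ := exists_cut_pair hBG hns
      obtain ⟨t, htS, htv⟩ : ∃ t ∈ S, t ≠ v := by
        by_cases h : t0 = v
        · exact ⟨t1, ht1S, fun h1 => ht01 (h.trans h1.symm)⟩
        · exact ⟨t0, ht0S, h⟩
      have hcex : ∃ cc, G.Adj v cc ∧ ¬ Av G v t cc := by
        by_cases hca : Av G v t a
        · exact ⟨b, hadjb, fun hcb => hnav (av_trans (av_symm hca) hcb)⟩
        · exact ⟨a, hadja, hca⟩
      obtain ⟨cc, hvc, hnc⟩ := hcex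
      obtain ⟨x, hx, hcx⟩ := exists_simplicial_av hG hBG hvc.ne'
      have hxv : x ≠ v := av_end_ne hcx
      have hmain : ∀ t' ∈ S, t' ≠ v → ¬ Av G v t' x := by
        intro t' ht' ht'v hAv
        exact hnc (av_trans (av_trans (hSav v hv t htS t' ht' htv ht'v) hAv) (av_symm hcx))
      have hxS : x ∉ S := fun hxSmem => hmain x hxSmem hxv (av_refl hxv)
      exact ⟨x, hx, hxS, hmain⟩
    choose! xf hf1 hf2 hf3 using claimA
    set f : V → V := fun v => if IsSimplicial G v then v else xf v with hfdef
    have hfs : ∀ v, IsSimplicial G v → f v = v := by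
      intro v h; simp [hfdef, h]
    have hfn : ∀ v, ¬ IsSimplicial G v → f v = xf v := by
      intro v h; simp [hfdef, h]
    have himg : ∀ v ∈ S, IsSimplicial G (f v) := by
      intro v hv
      by_cases h : IsSimplicial G v
      · rwa [hfs v h]
      · rw [hfn v h]; exact hf1 v hv h
    have hinj : Set.InjOn f S := by
      intro v hv w hw hfvw
      by_cases h1 : IsSimplicial G v <;> by_cases h2 : IsSimplicial G w
      · rwa [hfs v h1, hfs w h2] at hfvw
      · rw [hfs v h1, hfn w h2] at hfvw
        exact absurd (hfvw ▸ hv) (hf2 w hw h2)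
      · rw [hfn v h1, hfs w h2] at hfvw
        exact absurd (hfvw ▸ hw) (hf2 v hv h1)
      · by_contra hne
        rw [hfn v h1, hfn w h2] at hfvw
        have hvw : ¬ Av G v w (xf w) := hfvw ▸ hf3 v hv h1 w hw (fun h => hne h.symm)
        have hwv : ¬ Av G w v (xf w) := hf3 w hw h2 v hv hne
        exact no_double_cut hG hne hvw hwv
    calc S.ncard = (f '' S).ncard := (Set.ncard_image_of_injOn hinj).symm
      _ ≤ {v | IsSimplicial G v}.ncard :=
        Set.ncard_le_ncard (by rintro _ ⟨v, hv, rfl⟩; exact himg v hv) (Set.toFinite _)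

end GPAux

theorem gp_blockGraph {V : Type*} [Fintype V] (G : SimpleGraph V)
    (hG : G.Connected) (hB : IsBlockGraph G) :
    gpNumber G = {v | IsSimplicial G v}.ncard := by
  classical
  apply le_antisymm
  · apply csSup_le
    · exact ⟨0, ∅, fun x hx => absurd hx (Set.notMem_empty x), Set.finite_empty, by simp⟩
    · rintro n ⟨S, hS, hfin, rfl⟩
      exact GPAux.card_le hG hB hS
  · apply le_csSup
    · refine ⟨{v | IsSimplicial G v}.ncard, ?_⟩
      rintro n ⟨S, hS, hfin, rfl⟩
      exact GPAux.card_le hG hB hS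
    · exact ⟨{v | IsSimplicial G v}, GPAux.simplicial_gpset hG, Set.toFinite _, rfl⟩
end

section
/- If T is a tree with at least two vertices and L is the set of leaves of T, then gp(T) = |L|. -/
open SimpleGraph

namespace GPTreeAux

variable {V : Type*} {G : SimpleGraph V}

/-- The unique path between two vertices of a tree. -/
noncomputable def pth (hT : G.IsTree) (u v : V) : G.Walk u v :=
  (hT.existsUnique_path u v).choose

lemma pth_isPath (hT : G.IsTree) (u v : V) : (pth hT u v).IsPath :=
  (hT.existsUnique_path u v).choose_spec.1

lemma eq_pth (hT : G.IsTree) {u v : V} (p : G.Walk u v) (hp : p.IsPath) :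
    p = pth hT u v :=
  (hT.existsUnique_path u v).choose_spec.2 p hp

lemma length_eq_dist (hT : G.IsTree) {u v : V} (p : G.Walk u v) (hp : p.IsPath) :
    p.length = G.dist u v := by
  obtain ⟨q, hq, hql⟩ := hT.isConnected.exists_path_of_dist u v
  rw [← hql, eq_pth hT p hp, eq_pth hT q hq]

/-- The neighbour of `u` in the direction of `v`. -/
noncomputable def dir (hT : G.IsTree) (u v : V) : V := (pth hT u v).getVert 1

lemma dir_spec (hT : G.IsTree) {u v : V} (h : u ≠ v) :
    G.Adj u (dir hT u v) ∧ G.dist (dir hT u v) v + 1 = G.dist u v := by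
  obtain ⟨w, hadj, q, hq⟩ := Walk.exists_eq_cons_of_ne h (pth hT u v)
  have hdir : dir hT u v = w := by rw [dir, hq, Walk.getVert_cons_succ, Walk.getVert_zero]
  have hqp : q.IsPath := by
    have := pth_isPath hT u v; rw [hq] at this; exact this.of_cons
  have h1 : q.length = G.dist w v := length_eq_dist hT q hqp
  have h2 : (pth hT u v).length = G.dist u v := length_eq_dist hT _ (pth_isPath hT u v)
  rw [hq, Walk.length_cons, h1] at h2
  rw [hdir]; exact ⟨hadj, h2⟩

lemma dir_adj (hT : G.IsTree) {u v : V} (h : u ≠ v) : G.Adj u (dir hT u v) :=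
  (dir_spec hT h).1

lemma dir_of_adj (hT : G.IsTree) {u b : V} (h : G.Adj u b) : dir hT u b = b := by
  have hl : (pth hT u b).length = 1 := by
    rw [length_eq_dist hT _ (pth_isPath hT u b)]
    exact dist_eq_one_iff_adj.2 h
  rw [dir, ← hl, Walk.getVert_length]

lemma getVert_one_takeUntil [DecidableEq V] {u v t : V} (p : G.Walk u v)
    (ht : t ∈ p.support) (hne : u ≠ t) :
    (p.takeUntil t ht).getVert 1 = p.getVert 1 := by
  have hlen : (p.takeUntil t ht).length ≠ 0 := fun h0 =>
    hne (Walk.eq_of_length_eq_zero h0)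
  conv_rhs => rw [← p.take_spec ht]
  rw [Walk.getVert_append]
  by_cases h1 : 1 < (p.takeUntil t ht).length
  · rw [if_pos h1]
  · have hl1 : (p.takeUntil t ht).length = 1 := by omega
    have h2 : (p.dropUntil t ht).getVert (1 - (p.takeUntil t ht).length) = t := by
      rw [hl1]
      exact Walk.getVert_zero _
    rw [if_neg h1, h2, ← hl1, Walk.getVert_length]

lemma dir_eq_of_mem_support (hT : G.IsTree) {u v t : V}
    (ht : t ∈ (pth hT u v).support) (hne : u ≠ t) :
    dir hT u t = dir hT u v := by
  classical
  have hp := pth_isPath hT u v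
  have htu : ((pth hT u v).takeUntil t ht) = pth hT u t :=
    eq_pth hT _ (hp.takeUntil ht)
  rw [dir, ← htu, getVert_one_takeUntil _ ht hne]
  rfl

/-- If `v` and `w` lie in different directions from `u`, then `u` lies on the
geodesic from `v` to `w`. -/
lemma dist_add_of_dir_ne (hT : G.IsTree) {u v w : V} (huv : u ≠ v) (huw : u ≠ w)
    (hd : dir hT u v ≠ dir hT u w) : G.dist v w = G.dist v u + G.dist u w := by
  set p := (pth hT u v).reverse with hpdef
  set q := pth hT u w with hqdef
  have hp : p.IsPath := (pth_isPath hT u v).reverse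
  have hq : q.IsPath := pth_isPath hT u w
  have hqnd := hq.support_nodup
  rw [q.support_eq_cons] at hqnd
  have hpath : (p.append q).IsPath := by
    rw [Walk.isPath_def, Walk.support_append, List.nodup_append]
    refine ⟨hp.support_nodup, hqnd.of_cons, ?_⟩
    intro t ht1 t' ht2 htt
    subst htt
    have htu : t ≠ u := by
      rintro rfl
      exact (List.nodup_cons.mp hqnd).1 ht2
    have htq : t ∈ q.support := by
      rw [q.support_eq_cons]; exact List.mem_cons_of_mem _ ht2
    have htp : t ∈ (pth hT u v).support := by
      rw [hpdef, Walk.support_reverse, List.mem_reverse] at ht1; exact ht1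
    have e1 := dir_eq_of_mem_support hT htp htu.symm
    have e2 := dir_eq_of_mem_support hT (v := w) htq htu.symm
    exact hd (e1.symm.trans e2)
  have hlen := length_eq_dist hT _ hpath
  rw [Walk.length_append, hpdef, Walk.length_reverse,
    length_eq_dist hT _ (pth_isPath hT u v), length_eq_dist hT _ (pth_isPath hT u w)] at hlen
  rw [← hlen, dist_comm (u := u) (v := v)]

/-- If `v` and `w` lie in the same direction from `u`, then `u` is far from the
geodesic from `v` to `w`. -/
lemma dist_lt_of_dir_eq (hT : G.IsTree) {u v w : V} (huv : u ≠ v) (huw : u ≠ w)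
    (hd : dir hT u v = dir hT u w) : G.dist v w + 2 ≤ G.dist v u + G.dist u w := by
  obtain ⟨hadj1, h1⟩ := dir_spec hT huv
  obtain ⟨hadj2, h2⟩ := dir_spec hT huw
  rw [hd] at h1
  have ht := hT.isConnected.dist_triangle (u := v) (v := dir hT u w) (w := w)
  have hc1 : G.dist v (dir hT u w) = G.dist (dir hT u w) v := dist_comm
  have hc2 : G.dist v u = G.dist u v := dist_comm
  omega

/-- In a finite tree, from any edge `u ~ b` there is a leaf in the direction of
`b` from `u`. -/
lemma exists_leaf_dir [Fintype V] (hT : G.IsTree) {u b : V} (hadj : G.Adj u b) :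
    ∃ ℓ, (G.neighborSet ℓ).ncard = 1 ∧ ℓ ≠ u ∧ dir hT u ℓ = b := by
  classical
  set T : Set V := {x | x ≠ u ∧ dir hT u x = b} with hTdef
  have hbT : b ∈ T := ⟨hadj.ne', dir_of_adj hT hadj⟩
  obtain ⟨ℓ, hℓT, hmax⟩ := Set.exists_max_image T (fun x => G.dist u x)
    (Set.toFinite T) ⟨b, hbT⟩
  obtain ⟨hℓu, hℓdir⟩ := hℓT
  refine ⟨ℓ, ?_, hℓu, hℓdir⟩
  by_contra hnc
  have hmadj : G.Adj ℓ (dir hT ℓ u) := dir_adj hT hℓu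
  have h1 : 1 < (G.neighborSet ℓ).ncard := by
    have h0 : 0 < (G.neighborSet ℓ).ncard :=
      (Set.ncard_pos (Set.toFinite _)).2 ⟨_, hmadj⟩
    omega
  obtain ⟨c, hcN, hcm⟩ := Set.exists_ne_of_one_lt_ncard h1 (dir hT ℓ u)
  have hcadj : G.Adj ℓ c := hcN
  have hdcm : dir hT ℓ c ≠ dir hT ℓ u := by
    rw [dir_of_adj hT hcadj]; exact hcm
  have hD : G.dist c u = G.dist c ℓ + G.dist ℓ u :=
    dist_add_of_dir_ne hT hcadj.ne hℓu hdcm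
  have hdcl : G.dist c ℓ = 1 := by
    rw [dist_comm]; exact dist_eq_one_iff_adj.2 hcadj
  have hℓupos : 0 < G.dist ℓ u := hT.isConnected.pos_dist_of_ne hℓu
  have hcu : c ≠ u := by
    rintro rfl
    rw [dist_self] at hD
    omega
  have hdirc : dir hT u c = b := by
    by_contra hne
    rw [← hℓdir] at hne
    have hD2 : G.dist c ℓ = G.dist c u + G.dist u ℓ :=
      dist_add_of_dir_ne hT (Ne.symm hcu) (Ne.symm hℓu) hne
    have hc3 : G.dist u ℓ = G.dist ℓ u := dist_comm
    omega
  have hcT : c ∈ T := ⟨hcu, hdirc⟩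
  have hle := hmax c hcT
  have hc4 : G.dist u c = G.dist c u := dist_comm
  have hc5 : G.dist u ℓ = G.dist ℓ u := dist_comm
  omega

/-- The set of leaves is a general position set. -/
lemma leaves_gp (hT : G.IsTree) :
    IsGPSet G {v | (G.neighborSet v).ncard = 1} := by
  intro x hx y hy z hz hxy hyz hxz heq
  have hyx : y ≠ x := Ne.symm hxy
  have h1 : dir hT y x ∈ G.neighborSet y := dir_adj hT hyx
  have h2 : dir hT y z ∈ G.neighborSet y := dir_adj hT hyz
  obtain ⟨m, hm⟩ := Set.ncard_eq_one.mp hy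
  rw [hm] at h1 h2
  have hde : dir hT y x = dir hT y z := by
    rw [Set.mem_singleton_iff] at h1 h2; rw [h1, h2]
  have hC := dist_lt_of_dir_eq hT hyx hyz hde
  have hc : G.dist x y = G.dist y x := dist_comm
  omega

/-- Upper bound: every general position set has at most as many elements as
there are leaves. -/
lemma gp_le_leaves [Fintype V] (hT : G.IsTree) (hV : 2 ≤ Fintype.card V)
    (S : Set V) (hS : IsGPSet G S) :
    S.ncard ≤ {v | (G.neighborSet v).ncard = 1}.ncard := by
  classical
  set L := {v | (G.neighborSet v).ncard = 1} with hLdef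
  have hLne : L.Nonempty := by
    obtain ⟨x, y, hxy⟩ := Fintype.exists_pair_of_one_lt_card (by omega : 1 < Fintype.card V)
    obtain ⟨ℓ, hℓ, -, -⟩ := exists_leaf_dir hT (dir_adj hT hxy)
    exact ⟨ℓ, hℓ⟩
  have hL1 : 1 ≤ L.ncard := (Set.ncard_pos (Set.toFinite _)).2 hLne
  by_cases h2 : S.ncard ≤ 1
  · omega
  push_neg at h2
  have key : ∀ u ∈ S, ∃ ℓ, ℓ ∈ L ∧
      (ℓ = u ∨ ∀ t ∈ S, t ≠ u → G.dist t ℓ = G.dist t u + G.dist u ℓ) := by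
    intro u hu
    by_cases hul : u ∈ L
    · exact ⟨u, hul, Or.inl rfl⟩
    · obtain ⟨s, hsS, hsu⟩ := Set.exists_ne_of_one_lt_ncard h2 u
      have ha : G.Adj u (dir hT u s) := dir_adj hT (Ne.symm hsu)
      have h1 : 1 < (G.neighborSet u).ncard := by
        have h0 : 0 < (G.neighborSet u).ncard :=
          (Set.ncard_pos (Set.toFinite _)).2 ⟨_, ha⟩
        have hne1 : (G.neighborSet u).ncard ≠ 1 := hul
        omega
      obtain ⟨b, hbN, hba⟩ := Set.exists_ne_of_one_lt_ncard h1 (dir hT u s)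
      obtain ⟨ℓ, hℓL, hℓu, hℓdir⟩ := exists_leaf_dir hT (hbN : G.Adj u b)
      refine ⟨ℓ, hℓL, Or.inr fun t ht htu => ?_⟩
      have hdt : dir hT u t = dir hT u s := by
        by_contra hne
        rcases eq_or_ne t s with rfl | hts
        · exact hne rfl
        · exact hS t ht u hu s hsS htu (Ne.symm hsu) hts
            (dist_add_of_dir_ne hT (Ne.symm htu) (Ne.symm hsu) hne)
      have hdne : dir hT u t ≠ dir hT u ℓ := by
        rw [hdt, hℓdir]; exact fun h => hba h.symm
      exact dist_add_of_dir_ne hT (Ne.symm htu) (Ne.symm hℓu) hdne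
  choose! f hfL hf using key
  have hinj : Set.InjOn f S := by
    intro u hu v hv hfe
    by_contra hne
    rcases hf u hu with h1 | h1 <;> rcases hf v hv with h2 | h2
    · exact hne (by rw [← h1, hfe, h2])
    · have he := h2 u hu hne
      rw [← hfe, h1, dist_self] at he
      have hpos := hT.isConnected.pos_dist_of_ne hne
      omega
    · have he := h1 v hv (Ne.symm hne)
      rw [hfe, h2, dist_self] at he
      have hpos := hT.isConnected.pos_dist_of_ne (Ne.symm hne)
      omega
    · have e1 := h1 v hv (Ne.symm hne)
      rw [hfe] at e1
      have e2 := h2 u hu hne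
      have hc : G.dist v u = G.dist u v := dist_comm
      have hpos := hT.isConnected.pos_dist_of_ne hne
      omega
  calc S.ncard = (f '' S).ncard := (Set.ncard_image_of_injOn hinj).symm
    _ ≤ L.ncard := Set.ncard_le_ncard
        (by rintro x ⟨w, hw, rfl⟩; exact hfL w hw) (Set.toFinite _)

end GPTreeAux

theorem gp_tree {V : Type*} [Fintype V] (G : SimpleGraph V)
    (hT : G.IsTree) (hV : 2 ≤ Fintype.card V) :
    gpNumber G = {v | (G.neighborSet v).ncard = 1}.ncard := by
  classical
  set L := {v | (G.neighborSet v).ncard = 1} with hLdef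
  have hmem : L.ncard ∈ {n | ∃ S : Set V, IsGPSet G S ∧ S.Finite ∧ S.ncard = n} :=
    ⟨L, GPTreeAux.leaves_gp hT, Set.toFinite _, rfl⟩
  have hub : L.ncard ∈ upperBounds {n | ∃ S : Set V, IsGPSet G S ∧ S.Finite ∧ S.ncard = n} := by
    rintro n ⟨S, hS, hfin, rfl⟩
    exact GPTreeAux.gp_le_leaves hT hV S hS
  exact le_antisymm (csSup_le ⟨L.ncard, hmem⟩ hub) (le_csSup ⟨L.ncard, hub⟩ hmem)
end

section
/- For r ≥ 2, the glued binary tree GT(r) satisfies gp(GT(r)) = 2^r. -/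
open SimpleGraph

/-- The vertices of the glued binary tree `GT(r)`: the internal vertices of the
two copies (copy indexed by `Bool`) of the complete binary tree of depth `r`,
given by binary strings of length `< r`, together with the identified leaves
(quasi-leaves), given by binary strings of length `r`. -/
def GTVert (r : ℕ) : Type :=
  (Bool × {l : List Bool // l.length < r}) ⊕ {l : List Bool // l.length = r}

/-- The glued binary tree `GT(r)`: each internal vertex `l` of a copy is joined
to its two children `l ++ [x]` in the same copy (quasi-leaves being children of
both copies' internal vertices of length `r - 1`). -/
def gluedBinaryTree (r : ℕ) : SimpleGraph (GTVert r) :=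
  SimpleGraph.fromRel (fun a b =>
    match a, b with
    | Sum.inl (c, l), Sum.inl (c', l') => c = c' ∧ ∃ x, (l' : List Bool) = (l : List Bool) ++ [x]
    | Sum.inl (_, l), Sum.inr l' => ∃ x, (l' : List Bool) = (l : List Bool) ++ [x]
    | _, _ => False)

namespace GTProof


/-- length of longest common prefix -/
def lcp : List Bool → List Bool → ℕ
  | a :: as, b :: bs => if a = b then lcp as bs + 1 else 0
  | _, _ => 0

@[simp] lemma lcp_nil_left (b : List Bool) : lcp [] b = 0 := by cases b <;> rfl
@[simp] lemma lcp_nil_right (a : List Bool) : lcp a [] = 0 := by cases a <;> rfl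
@[simp] lemma lcp_cons (x y : Bool) (a b : List Bool) :
    lcp (x :: a) (y :: b) = if x = y then lcp a b + 1 else 0 := rfl

lemma lcp_comm : ∀ a b : List Bool, lcp a b = lcp b a
  | [], b => by simp
  | a, [] => by simp
  | x :: a, y :: b => by
    by_cases h : x = y
    · subst h; simp [lcp_comm a b]
    · simp [h, Ne.symm h]

lemma lcp_le_left : ∀ a b : List Bool, lcp a b ≤ a.length
  | [], _ => by simp
  | _ :: _, [] => by simp
  | x :: a, y :: b => by
    by_cases h : x = y <;> simp [h, Nat.succ_le_succ (lcp_le_left a b)]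

lemma lcp_le_right (a b : List Bool) : lcp a b ≤ b.length := lcp_comm a b ▸ lcp_le_left b a

lemma lcp_of_prefix : ∀ {a b : List Bool}, a <+: b → lcp a b = a.length
  | [], _, _ => by simp
  | x :: a, y :: b, h => by
    obtain ⟨t, ht⟩ := h
    simp only [List.cons_append, List.cons.injEq] at ht
    obtain ⟨rfl, ht⟩ := ht
    simp [lcp_of_prefix ⟨t, ht⟩]
  | x :: a, [], h => by simpa using h.length_le

lemma prefix_of_lcp : ∀ {a b : List Bool}, lcp a b = a.length → a <+: b
  | [], b, _ => List.nil_prefix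
  | x :: a, y :: b, h => by
    by_cases hxy : x = y
    · subst hxy
      simp only [lcp_cons, if_true, eq_self_iff_true, List.length_cons,
        Nat.add_right_cancel_iff] at h
      exact List.cons_prefix_cons.mpr ⟨rfl, prefix_of_lcp h⟩
    · simp [hxy] at h
  | x :: a, [], h => by simp at h

lemma lcp_append : ∀ t p q : List Bool, lcp (t ++ p) (t ++ q) = t.length + lcp p q
  | [], p, q => by simp
  | x :: t, p, q => by
    simp only [List.cons_append, lcp_cons, if_true, eq_self_iff_true, lcp_append t p q,
      List.length_cons]
    omega

lemma lcp_mono_append : ∀ (a b z : List Bool), lcp a b ≤ lcp (a ++ z) b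
  | [], _, _ => by simp
  | _ :: _, [], _ => by simp
  | x :: a, y :: b, z => by
    by_cases h : x = y <;> simp [h, Nat.succ_le_succ (lcp_mono_append a b z)]

lemma lcp_append_singleton_le (a b : List Bool) (x : Bool) :
    lcp (a ++ [x]) b ≤ lcp a b + 1 := by
  induction a generalizing b with
  | nil => cases b with
    | nil => simp
    | cons z b => by_cases h : x = z <;> simp [h]
  | cons y a ih =>
    cases b with
    | nil => simp
    | cons z b =>
      by_cases h : y = z <;> simp [h]
      exact ih b

lemma lcp_append_of_lt : ∀ (a b z : List Bool), lcp a b < a.length → lcp (a ++ z) b = lcp a b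
  | [], _, _, h => by simp at h
  | _ :: _, [], _, _ => by simp
  | x :: a, y :: b, z, h => by
    by_cases hxy : x = y
    · subst hxy
      simp only [lcp_cons, if_true, eq_self_iff_true, List.length_cons] at h
      simp only [List.cons_append, lcp_cons, if_true, eq_self_iff_true,
        lcp_append_of_lt a b z (by omega)]
    · simp [hxy]

lemma lcp_ultra : ∀ a b c : List Bool, min (lcp a b) (lcp b c) ≤ lcp a c
  | [], _, _ => by simp
  | _, [], _ => by simp
  | _, _, [] => by simp
  | x :: a, y :: b, z :: c => by
    by_cases h1 : x = y
    · by_cases h2 : y = z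
      · subst h1; subst h2
        simpa using Nat.succ_le_succ (lcp_ultra a b c)
      · simp [h1, h2]
    · simp [h1]

lemma eq_of_lcp_full {a b : List Bool} (h : lcp a b = a.length) (h2 : a.length = b.length) :
    a = b := (prefix_of_lcp h).eq_of_length h2

lemma lcp_divergent {t p q : List Bool} {x y : Bool} (hx : t ++ [x] <+: p) (hy : t ++ [y] <+: q)
    (hxy : x ≠ y) : lcp p q = t.length := by
  obtain ⟨p2, rfl⟩ := hx
  obtain ⟨q2, rfl⟩ := hy
  simp only [List.append_assoc]
  rw [lcp_append]
  simp [hxy]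

lemma lcp_take_prefix : ∀ a b : List Bool, a.take (lcp a b) <+: b
  | [], _ => by simp
  | _ :: _, [] => by simp
  | x :: a, y :: b => by
    by_cases h : x = y
    · subst h
      simp only [lcp_cons, if_true, eq_self_iff_true, List.take_succ_cons]
      exact List.cons_prefix_cons.mpr ⟨rfl, lcp_take_prefix a b⟩
    · simp [h]


variable {r : ℕ}

/-- underlying string -/
def str : GTVert r → List Bool
  | Sum.inl (_, l) => l
  | Sum.inr l => l

lemma str_len (v : GTVert r) : (str v).length ≤ r := by
  cases v with
  | inl p => exact le_of_lt p.2.2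
  | inr l => exact le_of_eq l.2

instance : DecidableEq (GTVert r) :=
  inferInstanceAs (DecidableEq
    ((Bool × {l : List Bool // l.length < r}) ⊕ {l : List Bool // l.length = r}))

def treeD (a b : List Bool) : ℕ := (a.length - lcp a b) + (b.length - lcp a b)

def crossD (r : ℕ) (a b : List Bool) : ℕ :=
  (r - a.length) + (r - b.length) + 2 * (min a.length b.length - lcp a b)

/-- the distance formula -/
def D : GTVert r → GTVert r → ℕ
  | Sum.inl (c, a), Sum.inl (c', b) =>
      if c = c' then treeD a b else crossD r a b
  | Sum.inl (_, a), Sum.inr b => treeD a b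
  | Sum.inr a, Sum.inl (_, b) => treeD a b
  | Sum.inr a, Sum.inr b => treeD a b

@[simp] lemma treeD_self (a : List Bool) : treeD a a = 0 := by
  simp [treeD, lcp_of_prefix (List.prefix_refl a)]

@[simp] lemma D_self (v : GTVert r) : D v v = 0 := by
  cases v with
  | inl p => simp [D]
  | inr l => simp [D]

lemma treeD_comm (a b : List Bool) : treeD a b = treeD b a := by
  simp [treeD, lcp_comm a b]; omega

lemma crossD_comm (a b : List Bool) : crossD r a b = crossD r b a := by
  simp [crossD, lcp_comm a b]; omega

lemma D_comm (u v : GTVert r) : D u v = D v u := by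
  rcases u with ⟨c, a⟩ | a <;> rcases v with ⟨c', b⟩ | b <;> simp only [D]
  · by_cases h : c = c'
    · simp [h, treeD_comm]
    · simp [h, Ne.symm h, crossD_comm]
  all_goals exact treeD_comm _ _


def mk (c : Bool) (l : List Bool) (h : l.length ≤ r) : GTVert r :=
  if h' : l.length < r then Sum.inl (c, ⟨l, h'⟩) else Sum.inr ⟨l, by omega⟩

@[simp] lemma str_mk (c : Bool) (l : List Bool) (h : l.length ≤ r) :
    str (mk c l h : GTVert r) = l := by
  by_cases h' : l.length < r
  · rw [show (mk c l h : GTVert r) = Sum.inl (c, ⟨l, h'⟩) from dif_pos h']; rfl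
  · rw [show (mk c l h : GTVert r) = Sum.inr ⟨l, by omega⟩ from dif_neg h']; rfl

lemma mk_eq_inl (c : Bool) (l : List Bool) (h' : l.length < r) (h : l.length ≤ r) :
    (mk c l h : GTVert r) = Sum.inl (c, ⟨l, h'⟩) := dif_pos h'

lemma mk_eq_inr (c : Bool) (l : List Bool) (h' : l.length = r) (h : l.length ≤ r) :
    (mk c l h : GTVert r) = Sum.inr ⟨l, h'⟩ := by
  exact dif_neg (by omega)

lemma mk_copy_eq (c c' : Bool) (l : List Bool) (h' : l.length = r) (h : l.length ≤ r) :
    (mk c l h : GTVert r) = mk c' l h := by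
  rw [mk_eq_inr c l h' h, mk_eq_inr c' l h' h]

lemma adj_step (c : Bool) (l : List Bool) (x : Bool) (h : l.length + 1 ≤ r) :
    (gluedBinaryTree r).Adj (mk c l (by omega)) (mk c (l ++ [x]) (by simpa using h)) := by
  rw [gluedBinaryTree, SimpleGraph.fromRel_adj]
  constructor
  · intro heq
    have h2 := congrArg str heq
    simp only [str_mk] at h2
    simpa using congrArg List.length h2
  · left
    have hl : l.length < r := by omega
    rw [mk_eq_inl c l hl]
    by_cases h2 : (l ++ [x]).length < r
    · rw [mk_eq_inl c _ h2]
      exact ⟨rfl, x, rfl⟩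
    · rw [mk_eq_inr c _ (by simp at h2 ⊢; omega)]
      exact ⟨x, rfl⟩

lemma exists_walk_down : ∀ (n : ℕ) (c : Bool) (a b : List Bool) (hb : b.length ≤ r)
    (hab : a <+: b) (_ : b.length ≤ a.length + n),
    ∃ p : (gluedBinaryTree r).Walk (mk c a (hab.length_le.trans hb)) (mk c b hb),
      p.length ≤ n := by
  intro n
  induction n with
  | zero =>
    intro c a b hb hab hn
    have hba : a = b := hab.eq_of_length (le_antisymm hab.length_le (by omega))
    subst hba
    exact ⟨SimpleGraph.Walk.nil, by simp⟩
  | succ n ih =>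
    intro c a b hb hab hn
    by_cases hlen : b.length ≤ a.length
    · have hba : a = b := hab.eq_of_length (le_antisymm hab.length_le hlen)
      subst hba
      exact ⟨SimpleGraph.Walk.nil, by simp⟩
    · have hbl : a.length + 1 ≤ b.length := by omega
      have h1 : (b.take (a.length + 1)).length = a.length + 1 := by
        rw [List.length_take]; omega
      have ha' : a <+: b.take (a.length + 1) :=
        List.prefix_of_prefix_length_le hab (List.take_prefix _ b) (by omega)
      obtain ⟨t, ht⟩ := ha'
      have htl : t.length = 1 := by
        have := congrArg List.length ht
        simp only [List.length_append] at this
        omega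
      obtain ⟨x, rfl⟩ : ∃ x, t = [x] := by
        cases t with
        | nil => simp at htl
        | cons y t' =>
          cases t' with
          | nil => exact ⟨y, rfl⟩
          | cons z t'' => simp at htl
      have hstep : a ++ [x] <+: b := ht ▸ List.take_prefix _ b
      have hax : (a ++ [x]).length ≤ r := hstep.length_le.trans hb
      obtain ⟨p, hp⟩ := ih c (a ++ [x]) b hb hstep (by simp; omega)
      refine ⟨SimpleGraph.Walk.cons (adj_step c a x (by omega)) p, ?_⟩
      simpa using Nat.succ_le_succ hp

lemma exists_walk_tree (c : Bool) (a b : List Bool) (ha : a.length ≤ r) (hb : b.length ≤ r) :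
    ∃ p : (gluedBinaryTree r).Walk (mk c a ha) (mk c b hb), p.length ≤ treeD a b := by
  have hla := lcp_le_left a b
  have hlb := lcp_le_right a b
  have h1 : a.take (lcp a b) <+: a := List.take_prefix _ a
  have h2 : a.take (lcp a b) <+: b := lcp_take_prefix a b
  have hm : (a.take (lcp a b)).length = lcp a b := by rw [List.length_take]; omega
  obtain ⟨p1, hp1⟩ := exists_walk_down (a.length - lcp a b) c (a.take (lcp a b)) a ha h1
    (by omega)
  obtain ⟨p2, hp2⟩ := exists_walk_down (b.length - lcp a b) c (a.take (lcp a b)) b hb h2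
    (by omega)
  refine ⟨p1.reverse.append p2, ?_⟩
  simp only [SimpleGraph.Walk.length_append, SimpleGraph.Walk.length_reverse, treeD]
  omega

lemma exists_walk_cross (c c' : Bool) (a b : List Bool) (ha : a.length < r) (hb : b.length < r)
    (hlen : b.length ≤ a.length) :
    ∃ p : (gluedBinaryTree r).Walk (Sum.inl (c, ⟨a, ha⟩) : GTVert r) (Sum.inl (c', ⟨b, hb⟩)),
      p.length ≤ crossD r a b := by
  have hla := lcp_le_left a b
  have hlb := lcp_le_right a b
  set w := a ++ List.replicate (r - a.length) false with hw_def
  have hw : w.length = r := by simp [hw_def]; omega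
  have hprefix : a <+: w := ⟨_, rfl⟩
  have hwr : w.length ≤ r := le_of_eq hw
  obtain ⟨p1, hp1⟩ := exists_walk_down (r - a.length) c a w hwr hprefix (by omega)
  obtain ⟨p2, hp2⟩ := exists_walk_tree c' w b hwr (le_of_lt hb)
  have hlcp : lcp w b = lcp a b := by
    rcases lt_or_eq_of_le hla with h | h
    · exact lcp_append_of_lt a b _ h
    · have hab : a = b := (prefix_of_lcp h).eq_of_length
        (le_antisymm (prefix_of_lcp h).length_le hlen)
      subst hab
      rw [lcp_comm w a, lcp_of_prefix hprefix, h]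
  refine ⟨((p1.copy (mk_eq_inl c a ha _) (mk_copy_eq c c' w hw hwr)).append
    (p2.copy rfl (mk_eq_inl c' b hb _))).reverse.reverse, ?_⟩
  refine le_trans (le_of_eq ((SimpleGraph.Walk.length_reverse _).trans
    ((SimpleGraph.Walk.length_reverse _).trans ((SimpleGraph.Walk.length_append _ _).trans
    (congrArg₂ (· + ·) (SimpleGraph.Walk.length_copy _ _ _)
    (SimpleGraph.Walk.length_copy _ _ _)))))) ?_
  have : treeD w b = (r - lcp a b) + (b.length - lcp a b) := by
    rw [treeD, hlcp, hw]
  rw [this] at hp2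
  simp only [crossD]
  omega

lemma exists_walk_le_D (u v : GTVert r) :
    ∃ p : (gluedBinaryTree r).Walk u v, p.length ≤ D u v := by
  rcases u with ⟨c, a, ha⟩ | ⟨a, ha⟩ <;> rcases v with ⟨c', b, hb⟩ | ⟨b, hb⟩
  · by_cases h : c = c'
    · subst h
      obtain ⟨p, hp⟩ := exists_walk_tree (r := r) c a b (le_of_lt ha) (le_of_lt hb)
      exact ⟨p.copy (mk_eq_inl c a ha _) (mk_eq_inl c b hb _), (SimpleGraph.Walk.length_copy _ _ _).trans_le (by simpa [D])⟩
    · rcases le_total b.length a.length with hl | hl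
      · obtain ⟨p, hp⟩ := exists_walk_cross c c' a b ha hb hl
        exact ⟨p, by simpa [D, h] using hp⟩
      · obtain ⟨p, hp⟩ := exists_walk_cross c' c b a hb ha hl
        exact ⟨p.reverse, (SimpleGraph.Walk.length_reverse _).trans_le
          (by simpa [D, h, crossD_comm b a] using hp)⟩
  · obtain ⟨p, hp⟩ := exists_walk_tree (r := r) c a b (le_of_lt ha) (le_of_eq hb)
    exact ⟨p.copy (mk_eq_inl c a ha _) (mk_eq_inr c b hb _), (SimpleGraph.Walk.length_copy _ _ _).trans_le (by simpa [D])⟩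
  · obtain ⟨p, hp⟩ := exists_walk_tree (r := r) c' a b (le_of_eq ha) (le_of_lt hb)
    exact ⟨p.copy (mk_eq_inr c' a ha _) (mk_eq_inl c' b hb _), (SimpleGraph.Walk.length_copy _ _ _).trans_le (by simpa [D])⟩
  · obtain ⟨p, hp⟩ := exists_walk_tree (r := r) false a b (le_of_eq ha) (le_of_eq hb)
    exact ⟨p.copy (mk_eq_inr false a ha _) (mk_eq_inr false b hb _), (SimpleGraph.Walk.length_copy _ _ _).trans_le (by simpa [D])⟩

lemma dist_le_D (u v : GTVert r) : (gluedBinaryTree r).dist u v ≤ D u v := by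
  obtain ⟨p, hp⟩ := exists_walk_le_D u v
  exact (SimpleGraph.dist_le p).trans hp

lemma reachable (u v : GTVert r) : (gluedBinaryTree r).Reachable u v :=
  ⟨(exists_walk_le_D u v).choose⟩


lemma lcp_step (l s : List Bool) (x : Bool) :
    lcp (l ++ [x]) s = lcp l s ∨ (lcp l s = l.length ∧ lcp (l ++ [x]) s ≤ lcp l s + 1) := by
  rcases Nat.lt_or_ge (lcp l s) l.length with h | h
  · exact Or.inl (lcp_append_of_lt l s [x] h)
  · exact Or.inr ⟨le_antisymm (lcp_le_left l s) h, lcp_append_singleton_le l s x⟩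

lemma D_step (c : Bool) (l : List Bool) (x : Bool) (h : l.length + 1 ≤ r) (w : GTVert r) :
    (D (Sum.inl (c, ⟨l, by omega⟩) : GTVert r) w ≤
      D (mk c (l ++ [x]) (by simpa using h) : GTVert r) w + 1) ∧
    (D (mk c (l ++ [x]) (by simpa using h) : GTVert r) w ≤
      D (Sum.inl (c, ⟨l, by omega⟩) : GTVert r) w + 1) := by
  have hlx : (l ++ [x]).length = l.length + 1 := by simp
  by_cases hint : (l ++ [x]).length < r
  · rw [mk_eq_inl c (l ++ [x]) hint]
    rcases w with ⟨c2, s, hs⟩ | ⟨s, hs⟩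
    · by_cases hcc : c = c2
      · subst hcc
        simp only [D, eq_self_iff_true, if_true, treeD]
        have h0 := lcp_mono_append l s [x]
        have h1 := lcp_le_left l s
        have h2 := lcp_le_right l s
        have h3 := lcp_le_right (l ++ [x]) s
        rcases lcp_step l s x with h4 | ⟨h4, h5⟩ <;> constructor <;> omega
      · simp only [D, if_neg hcc, crossD]
        have h0 := lcp_mono_append l s [x]
        have h1 := lcp_le_left l s
        have h2 := lcp_le_right l s
        have h3 := lcp_le_right (l ++ [x]) s
        have h6 := lcp_le_left (l ++ [x]) s
        rcases lcp_step l s x with h4 | ⟨h4, h5⟩ <;> constructor <;> omega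
    · simp only [D, treeD]
      have h0 := lcp_mono_append l s [x]
      have h1 := lcp_le_left l s
      have h2 := lcp_le_right l s
      have h3 := lcp_le_right (l ++ [x]) s
      rcases lcp_step l s x with h4 | ⟨h4, h5⟩ <;> constructor <;> omega
  · rw [mk_eq_inr c (l ++ [x]) (by omega)]
    rcases w with ⟨c2, s, hs⟩ | ⟨s, hs⟩
    · by_cases hcc : c = c2
      · subst hcc
        simp only [D, eq_self_iff_true, if_true, treeD]
        have h0 := lcp_mono_append l s [x]
        have h1 := lcp_le_left l s
        have h2 := lcp_le_right l s
        have h3 := lcp_le_right (l ++ [x]) s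
        rcases lcp_step l s x with h4 | ⟨h4, h5⟩ <;> constructor <;> omega
      · simp only [D, if_neg hcc, crossD, treeD]
        have h0 := lcp_mono_append l s [x]
        have h1 := lcp_le_left l s
        have h2 := lcp_le_right l s
        have h3 := lcp_le_right (l ++ [x]) s
        have h6 := lcp_le_left (l ++ [x]) s
        rcases lcp_step l s x with h4 | ⟨h4, h5⟩ <;> constructor <;> omega
    · simp only [D, treeD]
      have h0 := lcp_mono_append l s [x]
      have h1 := lcp_le_left l s
      have h2 := lcp_le_right l s
      have h3 := lcp_le_right (l ++ [x]) s
      rcases lcp_step l s x with h4 | ⟨h4, h5⟩ <;> constructor <;> omega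

lemma D_adj_step {u w : GTVert r} (hadj : (gluedBinaryTree r).Adj u w) (v : GTVert r) :
    D u v ≤ D w v + 1 ∧ D w v ≤ D u v + 1 := by
  rw [gluedBinaryTree, SimpleGraph.fromRel_adj] at hadj
  obtain ⟨hne, hrel⟩ := hadj
  clear hne
  have main : ∀ (u' w' : GTVert r), (match u', w' with
      | Sum.inl (c, l), Sum.inl (c', l') =>
          c = c' ∧ ∃ x, (l' : List Bool) = (l : List Bool) ++ [x]
      | Sum.inl (_, l), Sum.inr l' => ∃ x, (l' : List Bool) = (l : List Bool) ++ [x]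
      | _, _ => False) →
      D u' v ≤ D w' v + 1 ∧ D w' v ≤ D u' v + 1 := by
    rintro (⟨c, l, hl⟩ | ⟨l, hl⟩) (⟨c', l', hl'⟩ | ⟨l', hl'⟩) hrel
    · obtain ⟨rfl, x, hx⟩ := hrel
      have hlen : (l ++ [x]).length < r := hx ▸ hl'
      have h1 : l.length + 1 ≤ r := by simpa using le_of_lt hlen
      have hsub : (⟨l', hl'⟩ : {t : List Bool // t.length < r}) = ⟨l ++ [x], hlen⟩ :=
        Subtype.ext hx
      have hw : (Sum.inl (c, ⟨l', hl'⟩) : GTVert r) = mk c (l ++ [x]) (by simpa using h1) := by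
        rw [mk_eq_inl c (l ++ [x]) hlen, hsub]
      rw [hw]
      exact D_step c l x h1 v
    · obtain ⟨x, hx⟩ := hrel
      have hlen : (l ++ [x]).length = r := hx ▸ hl'
      have h1 : l.length + 1 ≤ r := by simpa using le_of_eq hlen
      have hsub : (⟨l', hl'⟩ : {t : List Bool // t.length = r}) = ⟨l ++ [x], hlen⟩ :=
        Subtype.ext hx
      have hw : (Sum.inr ⟨l', hl'⟩ : GTVert r) = mk c (l ++ [x]) (by simpa using h1) := by
        rw [mk_eq_inr c (l ++ [x]) hlen, hsub]
      rw [hw]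
      exact D_step c l x h1 v
    · exact absurd hrel not_false
    · exact absurd hrel not_false
  rcases hrel with h | h
  · exact main u w h
  · exact (main w u h).symm

lemma D_le_walk {u v : GTVert r} (p : (gluedBinaryTree r).Walk u v) : D u v ≤ p.length := by
  induction p with
  | nil => simp
  | @cons a b cc hadj p ih =>
    have := (D_adj_step hadj cc).1
    simp only [SimpleGraph.Walk.length_cons]
    omega

lemma dist_eq_D (u v : GTVert r) : (gluedBinaryTree r).dist u v = D u v := by
  refine le_antisymm (dist_le_D u v) ?_
  obtain ⟨p, hp⟩ := (reachable u v).exists_walk_length_eq_dist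
  exact hp ▸ D_le_walk p


/-! ### general position machinery -/

lemma ne_of_str {u v : GTVert r} (h : str u ≠ str v) : u ≠ v :=
  fun he => h (congrArg str he)

lemma gp_apply {S : Set (GTVert r)} (hS : IsGPSet (gluedBinaryTree r) S)
    {x y z : GTVert r} (hx : x ∈ S) (hy : y ∈ S) (hz : z ∈ S)
    (hxy : x ≠ y) (hyz : y ≠ z) (hxz : x ≠ z) (heq : D x z = D x y + D y z) : False :=
  hS x hx y hy z hz hxy hyz hxz (by rw [dist_eq_D, dist_eq_D, dist_eq_D]; exact heq)

variable {S : Set (GTVert r)}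
variable {t : List Bool} {c : Bool}

/-- with both tops present, no leaf extends `t` -/
lemma no_leaf_two_tops (hS : IsGPSet (gluedBinaryTree r) S) (ht : t.length < r)
    (h0 : Sum.inl (c, ⟨t, ht⟩) ∈ S) (h1 : Sum.inl (!c, ⟨t, ht⟩) ∈ S)
    {w : List Bool} (hw : w.length = r) (hpre : t <+: w)
    (hwS : Sum.inr ⟨w, hw⟩ ∈ S) : False := by
  have hcne : c ≠ !c := by simp
  have hlw := lcp_of_prefix hpre
  have hltw : t.length < w.length := by omega
  refine gp_apply hS h0 hwS h1 (ne_of_str ?_) (ne_of_str ?_) ?_ ?_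
  · show t ≠ w; intro h; rw [h] at hltw; omega
  · show w ≠ t; intro h; rw [h] at hltw; omega
  · intro h
    exact hcne (by injection h with h2; exact congrArg Prod.fst h2)
  · simp only [D]
    rw [if_neg hcne]
    simp only [treeD, crossD]
    rw [lcp_of_prefix (List.prefix_refl t), lcp_of_prefix hpre, lcp_comm w t,
      lcp_of_prefix hpre]
    omega

section Divergent

variable {b b' : Bool} {u v w w' : List Bool}

/-- a top and two leaves diverging at it -/
lemma div_leaf_leaf (hS : IsGPSet (gluedBinaryTree r) S) (ht : t.length < r) (hx : Sum.inl (c, ⟨t, ht⟩) ∈ S)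
    (hw : w.length = r) (hw' : w'.length = r)
    (hp : t ++ [b] <+: w) (hq : t ++ [b'] <+: w') (hbb : b ≠ b')
    (hwS : Sum.inr ⟨w, hw⟩ ∈ S) (hw'S : Sum.inr ⟨w', hw'⟩ ∈ S) : False := by
  have h1 : lcp w w' = t.length := lcp_divergent hp hq hbb
  have h2 : lcp t w = t.length := lcp_of_prefix ((List.prefix_append t [b]).trans hp)
  have h3 : lcp t w' = t.length := lcp_of_prefix ((List.prefix_append t [b']).trans hq)
  refine gp_apply hS hwS hx hw'S (ne_of_str ?_) (ne_of_str ?_) (ne_of_str ?_) ?_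
  · show w ≠ t; intro h; rw [h] at hw; omega
  · show t ≠ w'; intro h; rw [← h] at hw'; omega
  · show w ≠ w'; intro h; rw [h, lcp_of_prefix (List.prefix_refl w')] at h1; omega
  · simp only [D, treeD]
    rw [lcp_comm w t]
    rw [h1, h2, h3]
    omega

/-- a top, an internal vertex of the same copy, and a leaf, diverging at the top -/
lemma div_int_leaf (hS : IsGPSet (gluedBinaryTree r) S) (ht : t.length < r) (hx : Sum.inl (c, ⟨t, ht⟩) ∈ S)
    (hu : u.length < r) (hw : w.length = r)
    (hp : t ++ [b] <+: u) (hq : t ++ [b'] <+: w) (hbb : b ≠ b')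
    (huS : Sum.inl (c, ⟨u, hu⟩) ∈ S) (hwS : Sum.inr ⟨w, hw⟩ ∈ S) : False := by
  have h1 : lcp u w = t.length := lcp_divergent hp hq hbb
  have h2 : lcp t u = t.length := lcp_of_prefix ((List.prefix_append t [b]).trans hp)
  have h3 : lcp t w = t.length := lcp_of_prefix ((List.prefix_append t [b']).trans hq)
  have hlu : t.length + 1 ≤ u.length := by
    have := hp.length_le; simpa using this
  refine gp_apply hS huS hx hwS (ne_of_str ?_) (ne_of_str ?_) (ne_of_str ?_) ?_
  · show u ≠ t; intro h; rw [h] at hlu; omega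
  · show t ≠ w; intro h; rw [← h] at hw; omega
  · show u ≠ w; intro h; rw [h, lcp_of_prefix (List.prefix_refl w)] at h1; omega
  · simp only [D, eq_self_iff_true, if_true, treeD]
    rw [lcp_comm u t]
    rw [h1, h2, h3]
    omega

/-- a top and two internal vertices of the same copy diverging at it -/
lemma div_int_int (hS : IsGPSet (gluedBinaryTree r) S) (ht : t.length < r) (hx : Sum.inl (c, ⟨t, ht⟩) ∈ S)
    (hu : u.length < r) (hv : v.length < r)
    (hp : t ++ [b] <+: u) (hq : t ++ [b'] <+: v) (hbb : b ≠ b')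
    (huS : Sum.inl (c, ⟨u, hu⟩) ∈ S) (hvS : Sum.inl (c, ⟨v, hv⟩) ∈ S) : False := by
  have h1 : lcp u v = t.length := lcp_divergent hp hq hbb
  have h2 : lcp t u = t.length := lcp_of_prefix ((List.prefix_append t [b]).trans hp)
  have h3 : lcp t v = t.length := lcp_of_prefix ((List.prefix_append t [b']).trans hq)
  have hlu : t.length + 1 ≤ u.length := by have := hp.length_le; simpa using this
  have hlv : t.length + 1 ≤ v.length := by have := hq.length_le; simpa using this
  refine gp_apply hS huS hx hvS (ne_of_str ?_) (ne_of_str ?_) (ne_of_str ?_) ?_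
  · show u ≠ t; intro h; rw [h] at hlu; omega
  · show t ≠ v; intro h; rw [← h] at hlv; omega
  · show u ≠ v; intro h; rw [h, lcp_of_prefix (List.prefix_refl v)] at h1; omega
  · simp only [D, eq_self_iff_true, if_true, treeD]
    rw [lcp_comm u t]
    rw [h1, h2, h3]
    omega

/-- a top, an internal vertex of the same copy, and a *not longer* internal vertex of the
other copy, diverging at the top -/
lemma div_int_cross (hS : IsGPSet (gluedBinaryTree r) S) (ht : t.length < r) (hx : Sum.inl (c, ⟨t, ht⟩) ∈ S)
    (hu : u.length < r) (hv : v.length < r) (hlen : u.length ≤ v.length)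
    (hp : t ++ [b] <+: u) (hq : t ++ [b'] <+: v) (hbb : b ≠ b')
    (huS : Sum.inl (c, ⟨u, hu⟩) ∈ S) (hvS : Sum.inl (!c, ⟨v, hv⟩) ∈ S) : False := by
  have hcne : c ≠ !c := by simp
  have h1 : lcp u v = t.length := lcp_divergent hp hq hbb
  have h2 : lcp t u = t.length := lcp_of_prefix ((List.prefix_append t [b]).trans hp)
  have h3 : lcp t v = t.length := lcp_of_prefix ((List.prefix_append t [b']).trans hq)
  have hlu : t.length + 1 ≤ u.length := by have := hp.length_le; simpa using this
  have hlv : t.length + 1 ≤ v.length := by have := hq.length_le; simpa using this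
  refine gp_apply hS huS hx hvS (ne_of_str ?_) ?_ ?_ ?_
  · show u ≠ t; intro h; rw [h] at hlu; omega
  · intro h; injection h with h2'; exact hcne (congrArg Prod.fst h2')
  · intro h
    injection h with h2'
    have : u = v := congrArg (fun p => (Prod.snd p : {l : List Bool // l.length < r}).val) h2'
    rw [this, lcp_of_prefix (List.prefix_refl v)] at h1; omega
  · simp only [D, eq_self_iff_true, if_true]
    rw [if_neg hcne, if_neg hcne]
    simp only [treeD, crossD]
    rw [lcp_comm u t]
    rw [h1, h2, h3]
    omega

end Divergent


/-! ### gp bound in complete binary trees (as prefix-free-ish string families) -/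

lemma treeD_cons (x : Bool) (p q : List Bool) : treeD (x :: p) (x :: q) = treeD p q := by
  simp [treeD]

lemma treeGP : ∀ (d : ℕ) (W : Finset (List Bool)), (∀ w ∈ W, w.length ≤ d) →
    (∀ a ∈ W, ∀ b ∈ W, ∀ e ∈ W, a ≠ b → b ≠ e → a ≠ e →
      treeD a e ≠ treeD a b + treeD b e) → W.card ≤ 2 ^ d := by
  intro d
  induction d with
  | zero =>
    intro W hlen _
    have hsub : W ⊆ {[]} := by
      intro w hw
      simp [List.length_eq_zero_iff.mp (Nat.le_zero.mp (hlen w hw))]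
    exact (Finset.card_le_card hsub).trans (by simp)
  | succ d ih =>
    intro W hlen hbet
    classical
    set We : Finset (List Bool) := W.filter (fun w => w = []) with hWe
    set W0 : Finset (List Bool) := W.filter (fun w => [false] <+: w) with hW0
    set W1 : Finset (List Bool) := W.filter (fun w => [true] <+: w) with hW1
    have hcover : W ⊆ We ∪ (W0 ∪ W1) := by
      intro w hw
      rcases w with _ | ⟨x, tl⟩
      · simp [hWe, Finset.mem_union, Finset.mem_filter, hw]
      · rcases x with _ | _
        · simp [hW0, Finset.mem_union, Finset.mem_filter, hw, List.cons_prefix_cons]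
        · simp [hW1, Finset.mem_union, Finset.mem_filter, hw, List.cons_prefix_cons]
    have hWecard : We.card ≤ 1 := by
      apply Finset.card_le_one.mpr
      intro a ha b hb
      rw [hWe, Finset.mem_filter] at ha hb
      rw [ha.2, hb.2]
    have hside : ∀ (x : Bool) (Wx : Finset (List Bool)),
        Wx = W.filter (fun w => [x] <+: w) → Wx.card ≤ 2 ^ d := by
      intro x Wx hWx
      have htail : ∀ w ∈ Wx, w = x :: w.tail := by
        intro w hw
        rw [hWx, Finset.mem_filter] at hw
        obtain ⟨tl, htl⟩ := hw.2
        rw [← htl]; rfl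
      have hinj : Set.InjOn List.tail (Wx : Set (List Bool)) := by
        intro a ha b hb hab
        rw [htail a ha, htail b hb, hab]
      have := ih (Wx.image List.tail) ?_ ?_
      · rwa [Finset.card_image_of_injOn hinj] at this
      · intro w hw
        rw [Finset.mem_image] at hw
        obtain ⟨a, ha, rfl⟩ := hw
        have h2 := hlen a (Finset.mem_filter.mp (hWx ▸ ha)).1
        have h3 := htail a ha
        have h4 : a.length = a.tail.length + 1 := by
          conv_lhs => rw [h3]
          rfl
        omega
      · intro p hp q hq m hm hpq hqm hpm
        rw [Finset.mem_image] at hp hq hm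
        obtain ⟨a, ha, rfl⟩ := hp
        obtain ⟨b, hb, rfl⟩ := hq
        obtain ⟨e, he, rfl⟩ := hm
        have haW := (Finset.mem_filter.mp (hWx ▸ ha)).1
        have hbW := (Finset.mem_filter.mp (hWx ▸ hb)).1
        have heW := (Finset.mem_filter.mp (hWx ▸ he)).1
        have h1 := hbet a haW b hbW e heW
          (fun hh => hpq (by rw [hh])) (fun hh => hqm (by rw [hh])) (fun hh => hpm (by rw [hh]))
        rw [htail a ha, htail b hb, htail e he, treeD_cons, treeD_cons, treeD_cons] at h1
        exact h1
    have h0card := hside false W0 hW0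
    have h1card := hside true W1 hW1
    by_cases hroot : [] ∈ W
    · -- one of the sides is empty
      have hempty : W0 = ∅ ∨ W1 = ∅ := by
        by_contra hcon
        push_neg at hcon
        obtain ⟨a, ha⟩ := hcon.1
        obtain ⟨b, hb⟩ := hcon.2
        rw [hW0, Finset.mem_filter] at ha
        rw [hW1, Finset.mem_filter] at hb
        have hlab : lcp a b = 0 := by
          have := lcp_divergent (t := []) (by simpa using ha.2) (by simpa using hb.2)
            (by simp)
          simpa using this
        have hla : 1 ≤ a.length := by simpa using ha.2.length_le
        have hlb : 1 ≤ b.length := by simpa using hb.2.length_le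
        refine hbet a ha.1 [] hroot b hb.1 ?_ ?_ ?_ ?_
        · intro h; rw [h] at hla; simp at hla
        · intro h; rw [← h] at hlb; simp at hlb
        · intro h; rw [h, lcp_of_prefix (List.prefix_refl b)] at hlab; omega
        · simp only [treeD, hlab]
          simp
      have hcard := Finset.card_le_card hcover
      have hu1 := Finset.card_union_le We (W0 ∪ W1)
      have hu2 := Finset.card_union_le W0 W1
      have hpow : 2 ^ (d + 1) = 2 ^ d + 2 ^ d := by ring
      have hp1 : 1 ≤ 2 ^ d := Nat.one_le_two_pow
      have hempty' : W0.card = 0 ∨ W1.card = 0 := by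
        rcases hempty with he | he
        · exact Or.inl (by simp [he])
        · exact Or.inr (by simp [he])
      rcases hempty' with he | he <;> omega
    · have hWe0 : We = ∅ := by
        rw [hWe, Finset.filter_eq_empty_iff]
        intro w hw hcon
        exact hroot (hcon ▸ hw)
      have hcard := Finset.card_le_card hcover
      have hu1 := Finset.card_union_le We (W0 ∪ W1)
      have hu2 := Finset.card_union_le W0 W1
      have hWec : We.card = 0 := by simp [hWe0]
      have hpow : 2 ^ (d + 1) = 2 ^ d + 2 ^ d := by ring
      omega


lemma treeD_append (t p q : List Bool) : treeD (t ++ p) (t ++ q) = treeD p q := by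
  simp only [treeD, lcp_append, List.length_append]
  omega

lemma prefix_drop_append {u0 l : List Bool} (h : u0 <+: l) :
    u0 ++ l.drop u0.length = l := by
  obtain ⟨tl, rfl⟩ := h
  simp

/-- if all vertices extending `u0` in the gp set `F` are internal vertices of copy `c'`,
then there are at most `2 ^ (d - 1)` of them, where `u0.length + d = r`. -/
lemma side_bound {F : Finset (GTVert r)} (hgp : IsGPSet (gluedBinaryTree r) ↑F)
    (c' : Bool) (u0 : List Bool) (d : ℕ) (hd : u0.length + d = r)
    (hall : ∀ s ∈ F, u0 <+: str s → ∃ a : {l : List Bool // l.length < r}, s = Sum.inl (c', a)) :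
    (F.filter (fun s => u0 <+: str s)).card ≤ 2 ^ (d - 1) := by
  classical
  set G0 := F.filter (fun s => u0 <+: str s) with hG0
  have hmem : ∀ s ∈ G0, s ∈ F ∧ u0 <+: str s := fun s hs => Finset.mem_filter.mp hs
  have hstr : ∀ s ∈ G0, u0 ++ (str s).drop u0.length = str s := by
    intro s hs
    exact prefix_drop_append (hmem s hs).2
  have hint : ∀ s ∈ G0, (str s).length < r := by
    intro s hs
    obtain ⟨a, rfl⟩ := hall s (hmem s hs).1 (hmem s hs).2
    exact a.2
  have hinj : Set.InjOn (fun s => (str s).drop u0.length) (G0 : Set (GTVert r)) := by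
    intro a ha b hb hab
    simp only at hab
    have h1 : str a = str b := by
      rw [← hstr a ha, ← hstr b hb, hab]
    obtain ⟨a1, rfl⟩ := hall a (hmem a ha).1 (hmem a ha).2
    obtain ⟨b1, rfl⟩ := hall b (hmem b hb).1 (hmem b hb).2
    have : a1 = b1 := Subtype.ext h1
    rw [this]
  have hcard : G0.card = (G0.image (fun s => (str s).drop u0.length)).card :=
    (Finset.card_image_of_injOn hinj).symm
  rw [hcard]
  apply treeGP (d - 1)
  · intro w hw
    rw [Finset.mem_image] at hw
    obtain ⟨s, hs, rfl⟩ := hw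
    have h1 := hint s hs
    have h2 := (hmem s hs).2.length_le
    simp only [List.length_drop]
    omega
  · intro p hp q hq e he hpq hqe hpe
    rw [Finset.mem_image] at hp hq he
    obtain ⟨s1, hs1, rfl⟩ := hp
    obtain ⟨s2, hs2, rfl⟩ := hq
    obtain ⟨s3, hs3, rfl⟩ := he
    intro heq
    have hne12 : s1 ≠ s2 := fun hh => hpq (by rw [hh])
    have hne23 : s2 ≠ s3 := fun hh => hqe (by rw [hh])
    have hne13 : s1 ≠ s3 := fun hh => hpe (by rw [hh])
    refine gp_apply hgp (Finset.mem_coe.mpr (hmem s1 hs1).1)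
      (Finset.mem_coe.mpr (hmem s2 hs2).1) (Finset.mem_coe.mpr (hmem s3 hs3).1)
      hne12 hne23 hne13 ?_
    obtain ⟨a1, rfl⟩ := hall s1 (hmem s1 hs1).1 (hmem s1 hs1).2
    obtain ⟨a2, rfl⟩ := hall s2 (hmem s2 hs2).1 (hmem s2 hs2).2
    obtain ⟨a3, rfl⟩ := hall s3 (hmem s3 hs3).1 (hmem s3 hs3).2
    simp only [D, eq_self_iff_true, if_true]
    have e1 : (a1 : List Bool) = u0 ++ (str (Sum.inl (c', a1) : GTVert r)).drop u0.length :=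
      (hstr _ hs1).symm
    have e2 : (a2 : List Bool) = u0 ++ (str (Sum.inl (c', a2) : GTVert r)).drop u0.length :=
      (hstr _ hs2).symm
    have e3 : (a3 : List Bool) = u0 ++ (str (Sum.inl (c', a3) : GTVert r)).drop u0.length :=
      (hstr _ hs3).symm
    conv_lhs => rw [show (a1 : List Bool) = _ from e1, show (a3 : List Bool) = _ from e3]
    conv_rhs => rw [show (a1 : List Bool) = _ from e1, show (a2 : List Bool) = _ from e2,
      show (a3 : List Bool) = _ from e3]
    rw [treeD_append, treeD_append, treeD_append]
    exact heq


/-- classification of elements extending `t ++ [b]`: leaf, copy of the top, or other copy -/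
lemma classify (c : Bool) (s : GTVert r) :
    (∃ w : {l : List Bool // l.length = r}, s = Sum.inr w) ∨
    (∃ a : {l : List Bool // l.length < r}, s = Sum.inl (c, a)) ∨
    (∃ a : {l : List Bool // l.length < r}, s = Sum.inl (!c, a)) := by
  rcases s with ⟨c1, a⟩ | w
  · rcases Bool.eq_or_eq_not c1 c with rfl | rfl
    · exact Or.inr (Or.inl ⟨a, rfl⟩)
    · exact Or.inr (Or.inr ⟨a, rfl⟩)
  · exact Or.inl ⟨w, rfl⟩

lemma one_top_bound {F : Finset (GTVert r)} (hgp : IsGPSet (gluedBinaryTree r) ↑F)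
    (h : ℕ) (t : List Bool) (ht : t.length + (h + 1) = r) (c : Bool)
    (htlt : t.length < r)
    (htop : Sum.inl (c, ⟨t, htlt⟩) ∈ F)
    (ih : ∀ t' : List Bool, t'.length + h = r →
      (F.filter (fun s => t' <+: str s)).card ≤ 2 ^ h) :
    (F.filter (fun s => t ++ [false] <+: str s)).card +
      (F.filter (fun s => t ++ [true] <+: str s)).card ≤ 2 ^ (h + 1) - 1 := by
  classical
  have hSgp := hgp
  set A : Bool → Finset (GTVert r) := fun b => F.filter (fun s => t ++ [b] <+: str s) with hA
  have hmemA : ∀ b s, s ∈ A b → s ∈ F ∧ t ++ [b] <+: str s := by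
    intro b s hs
    exact Finset.mem_filter.mp hs
  have hihA : ∀ b, (A b).card ≤ 2 ^ h := by
    intro b
    exact ih (t ++ [b]) (by simp; omega)
  have hpow1 : 1 ≤ 2 ^ h := Nat.one_le_two_pow
  have hp2 : 2 ^ (h + 1) = 2 ^ h + 2 ^ h := by ring
  show (A false).card + (A true).card ≤ 2 ^ (h + 1) - 1
  rcases Nat.eq_zero_or_pos h with rfl | hpos
  · -- h = 0 : all elements of the sides are leaves; sides cannot both be nonempty
    have hleafonly : ∀ b s, s ∈ A b → ∃ w : {l : List Bool // l.length = r}, s = Sum.inr w := by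
      intro b s hs
      obtain ⟨hsF, hpre⟩ := hmemA b s hs
      rcases s with ⟨c1, a⟩ | w
      · exfalso
        have := hpre.length_le
        have h2 := a.2
        simp only [List.length_append, List.length_singleton] at this
        have : t.length + 1 ≤ (str (Sum.inl (c1, a) : GTVert r)).length := by simpa using this
        simp only [str] at this
        omega
      · exact ⟨w, rfl⟩
    have hside : A false = ∅ ∨ A true = ∅ := by
      by_contra hcon
      push_neg at hcon
      obtain ⟨p, hp⟩ := hcon.1
      obtain ⟨q, hq⟩ := hcon.2
      obtain ⟨w1, rfl⟩ := hleafonly false p hp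
      obtain ⟨w2, rfl⟩ := hleafonly true q hq
      exact div_leaf_leaf hSgp htlt (Finset.mem_coe.mpr htop) w1.2 w2.2
        (hmemA false _ hp).2 (hmemA true _ hq).2 (by simp)
        (Finset.mem_coe.mpr (hmemA false _ hp).1) (Finset.mem_coe.mpr (hmemA true _ hq).1)
    have h1 := hihA false
    have h2 := hihA true
    norm_num at h1 h2
    rcases hside with he | he <;> rw [he] <;> simp only [Finset.card_empty] <;> norm_num <;> omega
  · -- h ≥ 1
    by_cases hgood : ∃ b : Bool, ∀ s ∈ A b,
        ∃ a : {l : List Bool // l.length < r}, s = Sum.inl (!c, a)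
    · obtain ⟨b, hball⟩ := hgood
      have hsb : (A b).card ≤ 2 ^ (h - 1) := by
        have := side_bound hgp (!c) (t ++ [b]) h (by simp; omega) ?_
        · exact this
        · intro s hsF hpre
          exact hball s (Finset.mem_filter.mpr ⟨hsF, hpre⟩)
      have hso : (A (!b)).card ≤ 2 ^ h := hihA (!b)
      have hsplit : ∀ (x y : ℕ), x = (A false).card → y = (A true).card →
          x + y ≤ 2 ^ (h+1) - 1 := by
        intro x y hx hy
        rcases b with _ | _
        · -- b = false
          have hb1 : (A false).card ≤ 2 ^ (h-1) := hsb
          have hb2 : (A true).card ≤ 2 ^ h := by simpa using hso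
          have : 2 ^ h = 2 ^ (h-1) + 2 ^ (h-1) := by
            rcases Nat.exists_eq_add_of_le hpos with ⟨m, rfl⟩
            simp [pow_succ]; ring
          have hpm : 1 ≤ 2 ^ (h-1) := Nat.one_le_two_pow
          omega
        · have hb1 : (A true).card ≤ 2 ^ (h-1) := hsb
          have hb2 : (A false).card ≤ 2 ^ h := by simpa using hso
          have : 2 ^ h = 2 ^ (h-1) + 2 ^ (h-1) := by
            rcases Nat.exists_eq_add_of_le hpos with ⟨m, rfl⟩
            simp [pow_succ]; ring
          have hpm : 1 ≤ 2 ^ (h-1) := Nat.one_le_two_pow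
          omega
      exact hsplit _ _ rfl rfl
    · exfalso
      -- each side has a "bad" element: a leaf or an internal vertex of copy c
      have hbad : ∀ b : Bool, ∃ s ∈ A b,
          (∃ w : {l : List Bool // l.length = r}, s = Sum.inr w) ∨
          (∃ a : {l : List Bool // l.length < r}, s = Sum.inl (c, a)) := by
        intro b
        have hgood' : ¬ ∀ s ∈ A b, ∃ a : {l : List Bool // l.length < r}, s = Sum.inl (!c, a) :=
          fun hb => hgood ⟨b, hb⟩
        obtain ⟨s, hs⟩ := not_forall.mp hgood'
        obtain ⟨hsA, hsnot⟩ := Classical.not_imp.mp hs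
        refine ⟨s, hsA, ?_⟩
        rcases classify c s with hcl | hcl | hcl
        · exact Or.inl hcl
        · exact Or.inr hcl
        · exact absurd hcl hsnot
      clear hgood
      obtain ⟨s1, hs1, hc1⟩ := hbad false
      obtain ⟨s2, hs2, hc2⟩ := hbad true
      have hpre1 := (hmemA false s1 hs1).2
      have hpre2 := (hmemA true s2 hs2).2
      have hF1 := Finset.mem_coe.mpr (hmemA false s1 hs1).1
      have hF2 := Finset.mem_coe.mpr (hmemA true s2 hs2).1
      have htopc := Finset.mem_coe.mpr htop
      rcases hc1 with ⟨w1, rfl⟩ | ⟨a1, rfl⟩ <;> rcases hc2 with ⟨w2, rfl⟩ | ⟨a2, rfl⟩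
      · exact div_leaf_leaf hSgp htlt htopc w1.2 w2.2 hpre1 hpre2 (by simp) hF1 hF2
      · exact div_int_leaf hSgp htlt htopc a2.2 w1.2 hpre2 hpre1 (by simp) hF2 hF1
      · exact div_int_leaf hSgp htlt htopc a1.2 w2.2 hpre1 hpre2 (by simp) hF1 hF2
      · exact div_int_int hSgp htlt htopc a1.2 a2.2 hpre1 hpre2 (by simp) hF1 hF2


lemma top_filter_card {F : Finset (GTVert r)} {t : List Bool} (htlt : t.length < r) :
    (F.filter (fun s => str s = t)) ⊆
      {Sum.inl (false, ⟨t, htlt⟩), Sum.inl (true, ⟨t, htlt⟩)} := by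
  intro s hs
  obtain ⟨hsF, hst⟩ := Finset.mem_filter.mp hs
  rcases s with ⟨c1, a⟩ | w
  · have : a = ⟨t, htlt⟩ := Subtype.ext hst
    subst this
    rcases c1 with _ | _
    · exact Finset.mem_insert_self _ _
    · exact Finset.mem_insert_of_mem (Finset.mem_singleton_self _)
  · exfalso
    have : (w : List Bool).length = r := w.2
    rw [show (w : List Bool) = t from hst] at this
    omega

lemma cover_filter {F : Finset (GTVert r)} {t : List Bool} :
    F.filter (fun s => t <+: str s) ⊆
      (F.filter (fun s => str s = t)) ∪
      (F.filter (fun s => t ++ [false] <+: str s) ∪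
        F.filter (fun s => t ++ [true] <+: str s)) := by
  classical
  intro s hs
  obtain ⟨hsF, hpre⟩ := Finset.mem_filter.mp hs
  by_cases hst : str s = t
  · simp [Finset.mem_union, Finset.mem_filter, hsF, hst]
  · obtain ⟨dd, hdd⟩ := hpre
    rcases dd with _ | ⟨x, tl⟩
    · exact absurd (by simpa using hdd.symm) hst
    · have hx : t ++ [x] <+: str s := ⟨tl, by rw [← hdd]; simp⟩
      rcases x with _ | _
      · simp [Finset.mem_union, Finset.mem_filter, hsF, hx]
      · simp [Finset.mem_union, Finset.mem_filter, hsF, hx]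

lemma main_count {F : Finset (GTVert r)} (hgp : IsGPSet (gluedBinaryTree r) ↑F) :
    ∀ (h : ℕ) (t : List Bool), t.length + h = r →
      (F.filter (fun s => t <+: str s)).card ≤ 2 ^ h := by
  intro h
  induction h with
  | zero =>
    intro t ht
    rw [pow_zero]
    apply Finset.card_le_one.mpr
    have key : ∀ s ∈ F.filter (fun s => t <+: str s), s = Sum.inr ⟨t, by omega⟩ := by
      intro s hs
      obtain ⟨hsF, hpre⟩ := Finset.mem_filter.mp hs
      have h1 := str_len s
      have h2 := hpre.length_le
      have hst : str s = t := (hpre.eq_of_length (by omega)).symm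
      rcases s with ⟨c1, a⟩ | w
      · exfalso
        have := a.2
        simp only [str] at hst
        rw [hst] at this
        omega
      · have : (w : List Bool) = t := hst
        congr 1
        exact Subtype.ext this
    intro a ha b hb
    rw [key a ha, key b hb]
  | succ h ih =>
    intro t ht
    have htlt : t.length < r := by omega
    have hcov := Finset.card_le_card (cover_filter (F := F) (t := t))
    have hu1 := Finset.card_union_le (F.filter (fun s => str s = t))
      (F.filter (fun s => t ++ [false] <+: str s) ∪ F.filter (fun s => t ++ [true] <+: str s))
    have hu2 := Finset.card_union_le (F.filter (fun s => t ++ [false] <+: str s))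
      (F.filter (fun s => t ++ [true] <+: str s))
    have htc : (F.filter (fun s => str s = t)).card ≤ 2 := by
      refine (Finset.card_le_card (top_filter_card htlt)).trans ?_
      exact (Finset.card_insert_le _ _).trans (Nat.add_le_add_right (Finset.card_singleton _).le 1)
    have hih0 := ih (t ++ [false]) (by simp; omega)
    have hih1 := ih (t ++ [true]) (by simp; omega)
    have hpow1 : 1 ≤ 2 ^ h := Nat.one_le_two_pow
    have hpow : 2 ^ (h + 1) = 2 ^ h + 2 ^ h := by ring
    by_cases h0 : Sum.inl (false, ⟨t, htlt⟩) ∈ F <;>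
      by_cases h1 : Sum.inl (true, ⟨t, htlt⟩) ∈ F
    · -- both tops
      have htopall : ∀ c : Bool, Sum.inl (c, ⟨t, htlt⟩) ∈ F := by
        intro c; rcases c with _ | _ <;> assumption
      have hnotop : ∀ c : Bool, Sum.inl (!c, ⟨t, htlt⟩) ∈ F := by
        intro c; exact htopall (!c)
      -- no leaves below t at all
      have hnoleaf : ∀ s ∈ F, t <+: str s →
          ∀ w : {l : List Bool // l.length = r}, s ≠ Sum.inr w := by
        rintro s hsF hpre w rfl
        exact no_leaf_two_tops hgp htlt (Finset.mem_coe.mpr (htopall false))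
          (Finset.mem_coe.mpr (htopall (!false))) w.2 hpre
          (Finset.mem_coe.mpr hsF)
      -- one side empty
      have hside : F.filter (fun s => t ++ [false] <+: str s) = ∅ ∨
          F.filter (fun s => t ++ [true] <+: str s) = ∅ := by
        by_contra hcon
        push_neg at hcon
        obtain ⟨p, hp⟩ := hcon.1
        obtain ⟨q, hq⟩ := hcon.2
        obtain ⟨hpF, hppre⟩ := Finset.mem_filter.mp hp
        obtain ⟨hqF, hqpre⟩ := Finset.mem_filter.mp hq
        have hppre' : t <+: str p := (List.prefix_append t [false]).trans hppre
        have hqpre' : t <+: str q := (List.prefix_append t [true]).trans hqpre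
        rcases p with ⟨cp, ap⟩ | wp
        · rcases q with ⟨cq, aq⟩ | wq
          · rcases Bool.eq_or_eq_not cq cp with rfl | rfl
            · exact div_int_int hgp htlt (Finset.mem_coe.mpr (htopall cq)) ap.2 aq.2
                hppre hqpre (by simp) (Finset.mem_coe.mpr hpF) (Finset.mem_coe.mpr hqF)
            · rcases le_total ap.val.length aq.val.length with hle | hle
              · exact div_int_cross hgp htlt (Finset.mem_coe.mpr (htopall cp)) ap.2 aq.2
                  hle hppre hqpre (by simp) (Finset.mem_coe.mpr hpF) (Finset.mem_coe.mpr hqF)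
              · exact div_int_cross hgp htlt (Finset.mem_coe.mpr (htopall (!cp))) aq.2 ap.2
                  hle hqpre hppre (by simp) (Finset.mem_coe.mpr hqF)
                  (by cases cp <;> exact Finset.mem_coe.mpr hpF)
          · exact hnoleaf _ hqF hqpre' wq rfl
        · exact hnoleaf _ hpF hppre' wp rfl
      rcases Nat.eq_zero_or_pos h with rfl | hpos
      · -- h = 0 : both sides empty (all their elements would be leaves)
        have hzz : ∀ b : Bool, F.filter (fun s => t ++ [b] <+: str s) = ∅ := by
          intro b
          rw [Finset.eq_empty_iff_forall_notMem]
          intro s hs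
          obtain ⟨hsF, hpre⟩ := Finset.mem_filter.mp hs
          have hpre' : t <+: str s := (List.prefix_append t [b]).trans hpre
          rcases s with ⟨c1, a⟩ | w
          · have h2 := a.2
            have h3 : t.length + 1 ≤ (str (Sum.inl (c1, a) : GTVert r)).length := by
              simpa using hpre.length_le
            simp only [str] at h3
            omega
          · exact hnoleaf _ hsF hpre' w rfl
        have hz0 : (F.filter (fun s => t ++ [false] <+: str s)).card = 0 := by
          rw [hzz false]; rfl
        have hz1 : (F.filter (fun s => t ++ [true] <+: str s)).card = 0 := by
          rw [hzz true]; rfl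
        omega
      · have h2le : 2 ≤ 2 ^ h := by
          calc (2 : ℕ) = 2 ^ 1 := by norm_num
          _ ≤ 2 ^ h := Nat.pow_le_pow_right (by norm_num) hpos
        rcases hside with he | he
        · have hz : (F.filter (fun s => t ++ [false] <+: str s)).card = 0 := by
            rw [he]; rfl
          omega
        · have hz : (F.filter (fun s => t ++ [true] <+: str s)).card = 0 := by
            rw [he]; rfl
          omega
    · -- only top false
      have hob := one_top_bound hgp h t ht false htlt h0 ih
      have htc1 : (F.filter (fun s => str s = t)).card ≤ 1 := by
        apply Finset.card_le_one.mpr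
        intro a ha b hb
        have hA := top_filter_card htlt ha
        have hB := top_filter_card htlt hb
        replace hA := (Finset.mem_insert.mp hA).imp_right Finset.mem_singleton.mp
        replace hB := (Finset.mem_insert.mp hB).imp_right Finset.mem_singleton.mp
        rcases hA with rfl | rfl
        · rcases hB with rfl | rfl
          · rfl
          · exact absurd (Finset.mem_filter.mp hb).1 h1
        · exact absurd (Finset.mem_filter.mp ha).1 h1
      omega
    · -- only top true
      have hob := one_top_bound hgp h t ht true htlt h1 ih
      have htc1 : (F.filter (fun s => str s = t)).card ≤ 1 := by
        apply Finset.card_le_one.mpr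
        intro a ha b hb
        have hA := top_filter_card htlt ha
        have hB := top_filter_card htlt hb
        replace hA := (Finset.mem_insert.mp hA).imp_right Finset.mem_singleton.mp
        replace hB := (Finset.mem_insert.mp hB).imp_right Finset.mem_singleton.mp
        rcases hA with rfl | rfl
        · exact absurd (Finset.mem_filter.mp ha).1 h0
        · rcases hB with rfl | rfl
          · exact absurd (Finset.mem_filter.mp hb).1 h0
          · rfl
      omega
    · -- no tops
      have hT : F.filter (fun s => str s = t) = ∅ := by
        rw [Finset.eq_empty_iff_forall_notMem]
        intro s hs
        have := top_filter_card htlt hs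
        replace this := (Finset.mem_insert.mp this).imp_right Finset.mem_singleton.mp
        rcases this with rfl | rfl
        · exact h0 (Finset.mem_filter.mp hs).1
        · exact h1 (Finset.mem_filter.mp hs).1
      have hTc : (F.filter (fun s => str s = t)).card = 0 := by rw [hT]; rfl
      omega


/-! ### the set of quasi-leaves is in general position -/

lemma leaves_gp : IsGPSet (gluedBinaryTree r) (Set.range (Sum.inr : _ → GTVert r)) := by
  rintro x ⟨w1, rfl⟩ y ⟨w2, rfl⟩ z ⟨w3, rfl⟩ hxy hyz hxz
  have k1 := dist_eq_D (r := r) (Sum.inr w1) (Sum.inr w3)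
  have k2 := dist_eq_D (r := r) (Sum.inr w1) (Sum.inr w2)
  have k3 := dist_eq_D (r := r) (Sum.inr w2) (Sum.inr w3)
  simp only [D, treeD] at k1 k2 k3
  have e1 := w1.2
  have e2 := w2.2
  have e3 := w3.2
  have hne : ∀ (a b : {l : List Bool // l.length = r}),
      (Sum.inr a : GTVert r) ≠ Sum.inr b → lcp a.val b.val < r := by
    intro a b hab
    rcases lt_or_eq_of_le ((lcp_le_left a.val b.val).trans_eq a.2) with hlt | hEq
    · exact hlt
    · exfalso
      apply hab
      have : (a : List Bool) = b :=
        eq_of_lcp_full (by rw [hEq, a.2]) (a.2.trans b.2.symm)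
      exact congrArg Sum.inr (Subtype.ext this)
  have h12 := hne w1 w2 hxy
  have h23 := hne w2 w3 hyz
  have h13 := hne w1 w3 hxz
  have hu := lcp_ultra w1.val w2.val w3.val
  omega

lemma leaves_ncard : (Set.range (Sum.inr : _ → GTVert r)).ncard = 2 ^ r := by
  have hinj : Function.Injective (Sum.inr : {l : List Bool // l.length = r} → GTVert r) :=
    fun a b h => by injection h
  have hfin : Fintype {l : List Bool // l.length = r} :=
    inferInstanceAs (Fintype (List.Vector Bool r))
  rw [← Nat.card_coe_set_eq, ← Nat.card_congr (Equiv.ofInjective _ hinj)]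
  rw [Nat.card_eq_fintype_card]
  have : Fintype.card {l : List Bool // l.length = r} = 2 ^ r := by
    rw [show Fintype.card {l : List Bool // l.length = r} =
        Fintype.card (List.Vector Bool r) from by congr!]
    rw [card_vector, Fintype.card_bool]
  exact this

lemma leaves_finite : (Set.range (Sum.inr : _ → GTVert r)).Finite := by
  have : Finite {l : List Bool // l.length = r} :=
    @Finite.of_fintype _ (inferInstanceAs (Fintype (List.Vector Bool r)))
  exact Set.finite_range _

lemma upper (S : Set (GTVert r)) (hgp : IsGPSet (gluedBinaryTree r) S) (hfin : S.Finite) :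
    S.ncard ≤ 2 ^ r := by
  have hcoe : (↑hfin.toFinset : Set (GTVert r)) = S := hfin.coe_toFinset
  have hgpF : IsGPSet (gluedBinaryTree r) ↑hfin.toFinset := by rw [hcoe]; exact hgp
  have hmc := main_count hgpF r [] (by simp)
  have hfilter : hfin.toFinset.filter (fun s => [] <+: str s) = hfin.toFinset := by
    apply Finset.filter_true_of_mem
    intro s _
    exact List.nil_prefix
  rw [hfilter] at hmc
  rw [Set.ncard_eq_toFinset_card S hfin]
  exact hmc

end GTProof

open GTProof in
theorem gp_gluedBinaryTree (r : ℕ) (hr : 2 ≤ r) :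
    gpNumber (gluedBinaryTree r) = 2 ^ r := by
  apply IsGreatest.csSup_eq
  constructor
  · exact ⟨Set.range Sum.inr, leaves_gp, leaves_finite, leaves_ncard⟩
  · rintro n ⟨S, hgp, hfin, rfl⟩
    exact upper S hgp hfin
end

section
/- If G is a connected graph with diam(G) ≤ 2k + 1 for some k ≥ 1, then gp(G) ≥ α_k(G), where α_k(G) is the k-packing number of G. -/
open SimpleGraph

/-- A `k`-packing of `G`: a set of vertices pairwise at distance more than `k`. -/
def IsKPacking {V : Type*} (G : SimpleGraph V) (k : ℕ) (S : Set V) : Prop :=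
  S.Pairwise (fun u v => k < G.dist u v)

/-- The `k`-packing number of `G`. -/
noncomputable def kPackingNumber {V : Type*} (G : SimpleGraph V) (k : ℕ) : ℕ :=
  sSup {n | ∃ S : Set V, IsKPacking G k S ∧ S.Finite ∧ S.ncard = n}

theorem gp_ge_kPacking {V : Type*} [Fintype V] (G : SimpleGraph V)
    (hG : G.Connected) (k : ℕ) (hk : 1 ≤ k) (hd : G.diam ≤ 2 * k + 1) :
    kPackingNumber G k ≤ gpNumber G := by
  have hne : Nonempty V := hG.nonempty
  have hediam : G.ediam ≠ ⊤ := by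
    obtain ⟨u, v, huv⟩ := G.exists_edist_eq_ediam_of_finite
    rw [← huv, edist_ne_top_iff_reachable]
    exact hG.preconnected u v
  -- every k-packing is a general position set
  have key : ∀ S : Set V, IsKPacking G k S → IsGPSet G S := by
    intro S hS x hx y hy z hz hxy hyz hxz heq
    have h1 : k < G.dist x y := hS hx hy hxy
    have h2 : k < G.dist y z := hS hy hz hyz
    have h3 : G.dist x z ≤ G.diam := G.dist_le_diam hediam
    omega
  apply csSup_le_csSup
  · refine ⟨Fintype.card V, ?_⟩
    rintro n ⟨S, _, hfin, rfl⟩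
    exact le_trans (Set.ncard_le_ncard (Set.subset_univ S) Set.finite_univ)
      (by simp [Set.ncard_univ])
  · exact ⟨0, ∅, by simp [IsKPacking], Set.finite_empty, by simp⟩
  · rintro n ⟨S, hS, hfin, rfl⟩
    exact ⟨S, key S hS, hfin, rfl⟩
end

section
/- Let G be a connected graph with diam(G) = k ≥ 2, and let F be a set of edges of G such that d(e,f) = k for every two distinct edges e, f ∈ F (where edge distance is the minimum distance between endpoints). Then gp(G) ≥ 2|F|. -/
open SimpleGraph

/-- The distance between two edges: the minimum distance between an endpoint
of one and an endpoint of the other. -/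
noncomputable def edgeDist {V : Type*} (G : SimpleGraph V) (e f : Sym2 V) : ℕ :=
  sInf {n | ∃ u ∈ e, ∃ v ∈ f, G.dist u v = n}

theorem gp_ge_two_edge_family {V : Type*} [Fintype V] (G : SimpleGraph V)
    (hG : G.Connected) (k : ℕ) (hk : 2 ≤ k) (hd : G.diam = k)
    (F : Finset (Sym2 V)) (hF : ↑F ⊆ G.edgeSet)
    (hFd : ∀ e ∈ F, ∀ f ∈ F, e ≠ f → edgeDist G e f = k) :
    2 * F.card ≤ gpNumber G := by
  classical
  have hdne : G.diam ≠ 0 := by omega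
  have hediam : G.ediam ≠ ⊤ := SimpleGraph.ediam_ne_top_of_diam_ne_zero hdne
  -- distances are bounded by k
  have hbound : ∀ u v : V, G.dist u v ≤ k := by
    intro u v
    have := SimpleGraph.dist_le_diam hediam (u := u) (v := v)
    omega
  -- key: distance between endpoints of distinct edges is exactly k
  have hcross : ∀ e ∈ F, ∀ f ∈ F, e ≠ f → ∀ u ∈ e, ∀ v ∈ f, G.dist u v = k := by
    intro e he f hf hef u hu v hv
    have hmem : G.dist u v ∈ {n | ∃ u ∈ e, ∃ v ∈ f, G.dist u v = n} :=
      ⟨u, hu, v, hv, rfl⟩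
    have hle : edgeDist G e f ≤ G.dist u v := Nat.sInf_le hmem
    rw [hFd e he f hf hef] at hle
    have := hbound u v
    omega
  -- adjacency of the two endpoints of an edge in F
  have hadj : ∀ e ∈ F, ∀ u ∈ e, ∀ v ∈ e, u ≠ v → G.Adj u v := by
    intro e he u hu v hv huv
    obtain ⟨⟨a, b⟩, rfl⟩ := e.exists_rep
    have hab : G.Adj a b := hF he
    rw [Sym2.mem_iff] at hu hv
    rcases hu with rfl | rfl <;> rcases hv with rfl | rfl <;>
      first | exact absurd rfl huv | exact hab | exact hab.symm
  -- the finset of all endpoints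
  set S : Finset V := F.biUnion (fun e => Finset.univ.filter (· ∈ e)) with hS
  have hmemS : ∀ x, x ∈ S ↔ ∃ e ∈ F, x ∈ e := by
    intro x
    simp [hS]
  -- each edge contributes exactly 2 vertices
  have hcard2 : ∀ e ∈ F, (Finset.univ.filter (· ∈ e)).card = 2 := by
    intro e he
    obtain ⟨⟨a, b⟩, rfl⟩ := e.exists_rep
    have hab : a ≠ b := (hF he).ne
    have : Finset.univ.filter (· ∈ s(a, b)) = {a, b} := by
      ext x
      simp [Sym2.mem_iff]
    rw [this, Finset.card_insert_of_notMem (by simp [hab]), Finset.card_singleton]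
  -- distinct edges are disjoint
  have hdisj : ∀ e ∈ F, ∀ f ∈ F, e ≠ f →
      Disjoint (Finset.univ.filter (· ∈ e)) (Finset.univ.filter (· ∈ f)) := by
    intro e he f hf hef
    rw [Finset.disjoint_left]
    intro x hx hx'
    simp only [Finset.mem_filter] at hx hx'
    have := hcross e he f hf hef x hx.2 x hx'.2
    simp [SimpleGraph.dist_self] at this
    omega
  have hScard : S.card = 2 * F.card := by
    rw [hS, Finset.card_biUnion hdisj]
    rw [Finset.sum_congr rfl hcard2]
    simp [Nat.mul_comm]
  -- S is a general position set
  have hgp : IsGPSet G (↑S : Set V) := by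
    intro x hx y hy z hz hxy hyz hxz
    simp only [Finset.coe_sort_coe, Finset.mem_coe] at hx hy hz
    obtain ⟨ex, hex, hxe⟩ := (hmemS x).1 hx
    obtain ⟨ey, hey, hye⟩ := (hmemS y).1 hy
    obtain ⟨ez, hez, hze⟩ := (hmemS z).1 hz
    have hd1 : ∀ (e : Sym2 V), e ∈ F → ∀ u ∈ e, ∀ v ∈ e, u ≠ v → G.dist u v = 1 := by
      intro e he u hu v hv huv
      exact SimpleGraph.dist_eq_one_iff_adj.2 (hadj e he u hu v hv huv)
    by_cases h1 : ex = ey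
    · by_cases h2 : ey = ez
      · -- all three in same edge: impossible
        subst h1; subst h2
        obtain ⟨⟨a, b⟩, rfl⟩ := ex.exists_rep
        rw [Sym2.mem_iff] at hxe hye hze
        rcases hxe with rfl | rfl <;> rcases hye with rfl | rfl <;>
          rcases hze with rfl | rfl <;> simp_all
      · subst h1
        have dxy : G.dist x y = 1 := hd1 ex hex x hxe y hye hxy
        have dyz : G.dist y z = k := hcross ex hex ez hez h2 y hye z hze
        have dxz : G.dist x z = k := hcross ex hex ez hez h2 x hxe z hze
        omega
    · by_cases h2 : ey = ez
      · subst h2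
        have dyz : G.dist y z = 1 := hd1 ey hey y hye z hze hyz
        have dxy : G.dist x y = k := hcross ex hex ey hey h1 x hxe y hye
        have dxz : G.dist x z = k := hcross ex hex ey hey h1 x hxe z hze
        omega
      · by_cases h3 : ex = ez
        · subst h3
          have dxz : G.dist x z = 1 := hd1 ex hex x hxe z hze hxz
          have dxy : G.dist x y = k := hcross ex hex ey hey h1 x hxe y hye
          have dyz : G.dist y z = k := by
            have := hcross ey hey ex hex (fun h => h2 h) y hye z hze
            exact this
          omega
        · have dxy : G.dist x y = k := hcross ex hex ey hey h1 x hxe y hye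
          have dyz : G.dist y z = k := hcross ey hey ez hez h2 y hye z hze
          have dxz : G.dist x z = k := hcross ex hex ez hez h3 x hxe z hze
          omega
  -- conclude
  have hmem : 2 * F.card ∈ {n | ∃ S : Set V, IsGPSet G S ∧ S.Finite ∧ S.ncard = n} := by
    refine ⟨(↑S : Set V), hgp, S.finite_toSet, ?_⟩
    rw [Set.ncard_coe_finset, hScard]
  have hbdd : BddAbove {n | ∃ S : Set V, IsGPSet G S ∧ S.Finite ∧ S.ncard = n} := by
    refine ⟨Fintype.card V, ?_⟩
    rintro n ⟨T, _, hTfin, rfl⟩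
    calc T.ncard ≤ (Set.univ : Set V).ncard :=
          Set.ncard_le_ncard (Set.subset_univ T) Set.finite_univ
      _ = Fintype.card V := by rw [Set.ncard_univ, Nat.card_eq_fintype_card]
  exact le_csSup hbdd hmem
end

section
/- The general position number of the Petersen graph equals 6. -/
open SimpleGraph

/-- The Petersen graph as the Kneser graph `K(5,2)`: vertices are the
2-element subsets of a 5-element set, adjacent when disjoint. -/
def petersenGraph : SimpleGraph {s : Finset (Fin 5) // s.card = 2} :=
  SimpleGraph.fromRel (fun s t => Disjoint (s : Finset (Fin 5)) (t : Finset (Fin 5)))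

abbrev PV := {s : Finset (Fin 5) // s.card = 2}

instance : DecidableRel petersenGraph.Adj := fun x y =>
  decidable_of_iff _
    (SimpleGraph.fromRel_adj (fun s t : PV =>
      Disjoint (s : Finset (Fin 5)) (t : Finset (Fin 5))) x y).symm

lemma pet_common : ∀ x y : PV, x ≠ y → ¬ petersenGraph.Adj x y →
    ∃ z, petersenGraph.Adj x z ∧ petersenGraph.Adj z y := by decide

lemma pet_tri_free : ∀ x y z : PV, petersenGraph.Adj x y → petersenGraph.Adj y z →
    ¬ petersenGraph.Adj x z := by decide

lemma pet_deg3 : ∀ y : PV,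
    (Finset.univ.filter (fun x => petersenGraph.Adj x y)).card = 3 := by decide

lemma pet_card : (Finset.univ : Finset PV).card = 10 := by decide

lemma pet_dist_adj {x y : PV} (h : petersenGraph.Adj x y) : petersenGraph.dist x y = 1 :=
  (SimpleGraph.dist_eq_one_iff_adj).mpr h

lemma pet_dist_two {x y : PV} (hne : x ≠ y) (h : ¬ petersenGraph.Adj x y) :
    petersenGraph.dist x y = 2 := by
  obtain ⟨z, hxz, hzy⟩ := pet_common x y hne h
  have hle : petersenGraph.dist x y ≤ 2 := by
    have := SimpleGraph.dist_le
      (SimpleGraph.Walk.cons hxz (SimpleGraph.Walk.cons hzy SimpleGraph.Walk.nil))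
    simpa using this
  have h0 : petersenGraph.dist x y ≠ 0 := by
    have hr : petersenGraph.Reachable x y :=
      ⟨SimpleGraph.Walk.cons hxz (SimpleGraph.Walk.cons hzy SimpleGraph.Walk.nil)⟩
    rw [ne_eq, hr.dist_eq_zero_iff]
    exact hne
  have h1 : petersenGraph.dist x y ≠ 1 := fun h1 =>
    h ((SimpleGraph.dist_eq_one_iff_adj).mp h1)
  omega

lemma pet_gp_iff (S : Set PV) : IsGPSet petersenGraph S ↔
    ∀ y ∈ S, ∀ x ∈ S, ∀ z ∈ S, petersenGraph.Adj x y → petersenGraph.Adj z y → x = z := by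
  constructor
  · intro hgp y hy x hx z hz hxy hzy
    by_contra hne
    have hxny : x ≠ y := hxy.ne
    have hyny : y ≠ z := fun e => (e ▸ hzy).ne' rfl
    have hnxz : ¬ petersenGraph.Adj x z := pet_tri_free x y z hxy hzy.symm
    have := hgp x hx y hy z hz hxny hyny hne
    rw [pet_dist_two hne hnxz, pet_dist_adj hxy, pet_dist_adj hzy.symm] at this
    exact this rfl
  · intro h x hx y hy z hz hxy hyz hxz heq
    have d1 : petersenGraph.dist x y = 1 ∨ petersenGraph.dist x y = 2 := by
      by_cases ha : petersenGraph.Adj x y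
      · exact Or.inl (pet_dist_adj ha)
      · exact Or.inr (pet_dist_two hxy ha)
    have d2 : petersenGraph.dist y z = 1 ∨ petersenGraph.dist y z = 2 := by
      by_cases ha : petersenGraph.Adj y z
      · exact Or.inl (pet_dist_adj ha)
      · exact Or.inr (pet_dist_two hyz ha)
    have d3 : petersenGraph.dist x z ≤ 2 := by
      by_cases ha : petersenGraph.Adj x z
      · rw [pet_dist_adj ha]; omega
      · rw [pet_dist_two hxz ha]
    have hxy1 : petersenGraph.dist x y = 1 := by omega
    have hyz1 : petersenGraph.dist y z = 1 := by omega
    have haxy := (SimpleGraph.dist_eq_one_iff_adj).mp hxy1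
    have hayz := (SimpleGraph.dist_eq_one_iff_adj).mp hyz1
    exact hxz (h y hy x hx z hz haxy hayz.symm)

lemma pet_card_le (T : Finset PV)
    (hdeg : ∀ y ∈ T, (T.filter (fun x => petersenGraph.Adj x y)).card ≤ 1) :
    T.card ≤ 6 := by
  classical
  set G := petersenGraph
  -- split degree
  have hsplit : ∀ y : PV,
      (T.filter (fun x => G.Adj x y)).card + (Tᶜ.filter (fun x => G.Adj x y)).card = 3 := by
    intro y
    rw [← Finset.card_union_of_disjoint]
    · rw [← Finset.filter_union, Finset.union_compl]
      exact pet_deg3 y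
    · exact Finset.disjoint_filter_filter disjoint_compl_right
  have hsum1 : ∑ y ∈ T, (T.filter (fun x => G.Adj x y)).card ≤ T.card := by
    calc ∑ y ∈ T, (T.filter (fun x => G.Adj x y)).card ≤ ∑ y ∈ T, 1 :=
          Finset.sum_le_sum hdeg
      _ = T.card := by simp
  have hswap : ∑ y ∈ T, (Tᶜ.filter (fun x => G.Adj x y)).card
      = ∑ x ∈ Tᶜ, (T.filter (fun y => G.Adj x y)).card := by
    simp only [Finset.card_filter]
    exact Finset.sum_comm
  have hsum2 : ∑ x ∈ Tᶜ, (T.filter (fun y => G.Adj x y)).card ≤ 3 * Tᶜ.card := by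
    calc ∑ x ∈ Tᶜ, (T.filter (fun y => G.Adj x y)).card
        ≤ ∑ x ∈ Tᶜ, 3 := by
          apply Finset.sum_le_sum
          intro x _
          calc (T.filter (fun y => G.Adj x y)).card
              ≤ (Finset.univ.filter (fun y => G.Adj x y)).card :=
                Finset.card_le_card (Finset.filter_subset_filter _ (Finset.subset_univ T))
            _ = (Finset.univ.filter (fun y => G.Adj y x)).card := by
                congr 1
                apply Finset.filter_congr
                intro y _
                simp [G.adj_comm]
            _ = 3 := pet_deg3 x
      _ = 3 * Tᶜ.card := by rw [Finset.sum_const]; ring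
  have htotal : ∑ y ∈ T, ((T.filter (fun x => G.Adj x y)).card
      + (Tᶜ.filter (fun x => G.Adj x y)).card) = 3 * T.card := by
    rw [Finset.sum_congr rfl (fun y _ => hsplit y), Finset.sum_const]; ring
  rw [Finset.sum_add_distrib] at htotal
  have hcompl : Tᶜ.card = 10 - T.card := by
    rw [Finset.card_compl, ← Finset.card_univ, pet_card]
  have hT10 : T.card ≤ 10 := by
    calc T.card ≤ (Finset.univ : Finset PV).card := Finset.card_le_univ T
      _ = 10 := pet_card
  rw [hswap] at htotal
  omega

lemma pet_gp_card_le (S : Set PV) (hgp : IsGPSet petersenGraph S) (hfin : S.Finite) :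
    S.ncard ≤ 6 := by
  classical
  have h := (pet_gp_iff S).mp hgp
  set T := hfin.toFinset with hT
  rw [Set.ncard_eq_toFinset_card S hfin]
  apply pet_card_le
  intro y hy
  rw [Finset.card_le_one]
  intro a ha b hb
  simp only [Finset.mem_filter, Set.Finite.mem_toFinset] at ha hb hy
  exact h y hy a ha.1 b hb.1 ha.2 hb.2

def s6 : Finset PV :=
  {⟨{0,1}, by decide⟩, ⟨{0,2}, by decide⟩, ⟨{0,3}, by decide⟩,
   ⟨{1,2}, by decide⟩, ⟨{1,3}, by decide⟩, ⟨{2,3}, by decide⟩}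

lemma s6_card : s6.card = 6 := by decide

lemma s6_gp : IsGPSet petersenGraph (↑s6 : Set PV) := by
  rw [pet_gp_iff]
  have : ∀ y ∈ s6, ∀ x ∈ s6, ∀ z ∈ s6, petersenGraph.Adj x y → petersenGraph.Adj z y →
      x = z := by decide
  intro y hy x hx z hz
  exact this y (by simpa using hy) x (by simpa using hx) z (by simpa using hz)

theorem gp_petersen : gpNumber petersenGraph = 6 := by
  classical
  have hset : {n | ∃ S : Set PV, IsGPSet petersenGraph S ∧ S.Finite ∧ S.ncard = n}
      = Set.Iic 6 := by
    ext n
    simp only [Set.mem_setOf_eq, Set.mem_Iic]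
    constructor
    · rintro ⟨S, hgp, hfin, rfl⟩
      exact pet_gp_card_le S hgp hfin
    · intro hn
      obtain ⟨t, hts, htc⟩ := Finset.exists_subset_card_eq (s := s6) (n := n) (by rw [s6_card]; exact hn)
      refine ⟨↑t, ?_, t.finite_toSet, by simp [htc]⟩
      intro x hx y hy z hz
      exact s6_gp x (hts hx) y (hts hy) z (hts hz)
  rw [gpNumber, hset, csSup_Iic]
end
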